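/- arXiv:2509.03317 — 7 statements merged into one kernel-verified Lean document; each statement's English description precedes it below -/
import Mathlib

section
/- Let μ_1, …, μ_p be Borel probability measures on ℝ and let μ^ind = μ_1 ⊗ ⋯ ⊗ μ_p be their product on ℝ^p. Then every bounded measurable function f : ℝ^p → ℝ can be decomposed as f(x) = Σ_{S ⊆ {1,…,p}} f_S(x_S) for μ^ind-almost every x, where each f_S is a bounded measurable function depending only on the coordinates x_S = (x_j, j ∈ S) and satisfying the identifiability condition: for every j ∈ S, ∫_ℝ f_S(x_S) μ_j(dx_j) = 0 for (⊗_{k ∈ S∖{j}} μ_k)-almost every x_{S∖{j}}. Moreover the decomposition is unique: if (f_S)_{S ⊆ {1,…,p}} and (g_S)_{S ⊆ {1,…,p}} are two such families, then for every S, f_S = g_S almost everywhere with respect to ⊗_{k ∈ S} μ_k. -/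
open MeasureTheory

noncomputable section

/-- `F` is a functional-ANOVA family for `f` with respect to the product of the measures
`μ j`: each component `F S` is bounded, measurable, depends only on the coordinates in `S`,
satisfies the identifiability condition (its integral over each coordinate `j ∈ S` with
respect to `μ j` vanishes for almost every value of the remaining coordinates), and the
components sum to `f` almost everywhere. -/
def IsANOVADecomposition {p : ℕ} (μ : Fin p → Measure ℝ) (f : (Fin p → ℝ) → ℝ)
    (F : Finset (Fin p) → (Fin p → ℝ) → ℝ) : Prop :=
  (∀ S, Measurable (F S)) ∧
  (∀ S, ∃ C : ℝ, ∀ x, |F S x| ≤ C) ∧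
  (∀ S : Finset (Fin p), ∀ x y : Fin p → ℝ, (∀ j ∈ S, x j = y j) → F S x = F S y) ∧
  (∀ S : Finset (Fin p), ∀ j ∈ S, ∀ᵐ x ∂(Measure.pi μ),
      ∫ t, F S (Function.update x j t) ∂(μ j) = 0) ∧
  (∀ᵐ x ∂(Measure.pi μ), f x = ∑ S : Finset (Fin p), F S x)

namespace ANOVAAux

variable {p : ℕ}

def combine (T : Finset (Fin p)) (x y : Fin p → ℝ) : Fin p → ℝ :=
  fun k => if k ∈ T then x k else y k

lemma measurable_combine (T : Finset (Fin p)) :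
    Measurable (fun q : (Fin p → ℝ) × (Fin p → ℝ) => combine T q.1 q.2) := by
  apply measurable_pi_lambda
  intro k
  by_cases h : k ∈ T <;> simp only [combine, h, if_true, if_false]
  · exact (measurable_pi_apply k).comp measurable_fst
  · exact (measurable_pi_apply k).comp measurable_snd

variable (μ : Fin p → Measure ℝ) [∀ j, IsProbabilityMeasure (μ j)]

lemma pi_finset_pi (T : Finset (Fin p)) (s : Fin p → Set ℝ)
    (hs : ∀ i, MeasurableSet (s i)) :
    Measure.pi μ {x | ∀ k ∈ T, x k ∈ s k} = ∏ k ∈ T, μ k (s k) := by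
  have h1 : {x : Fin p → ℝ | ∀ k ∈ T, x k ∈ s k}
      = Set.pi Set.univ (fun k => if k ∈ T then s k else Set.univ) := by
    ext x
    simp only [Set.mem_setOf_eq, Set.mem_pi, Set.mem_univ, true_implies]
    constructor
    · intro h k; by_cases hk : k ∈ T <;> simp [hk, h]
    · intro h k hk; have := h k; simpa [hk] using this
  rw [h1, Measure.pi_pi]
  have h2 : ∀ i : Fin p, μ i (if i ∈ T then s i else Set.univ) = if i ∈ T then μ i (s i) else 1 := by
    intro i; by_cases hi : i ∈ T <;> simp [hi]
  simp only [h2]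
  simp

lemma mp_combine (T : Finset (Fin p)) :
    MeasurePreserving (fun q : (Fin p → ℝ) × (Fin p → ℝ) => combine T q.1 q.2)
      ((Measure.pi μ).prod (Measure.pi μ)) (Measure.pi μ) := by
  refine ⟨measurable_combine T, ?_⟩
  refine (Measure.pi_eq fun s hs => ?_).symm
  rw [Measure.map_apply (measurable_combine T) (MeasurableSet.univ_pi hs)]
  have hpre : (fun q : (Fin p → ℝ) × (Fin p → ℝ) => combine T q.1 q.2) ⁻¹' (Set.pi Set.univ s)
      = {x : Fin p → ℝ | ∀ k ∈ T, x k ∈ s k} ×ˢ {y : Fin p → ℝ | ∀ k ∈ Tᶜ, y k ∈ s k} := by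
    ext q
    simp only [Set.mem_preimage, Set.mem_pi, Set.mem_univ, true_implies, Set.mem_prod,
      Set.mem_setOf_eq, Finset.mem_compl, combine]
    constructor
    · exact fun h => ⟨fun k hk => by simpa [hk] using h k, fun k hk => by simpa [hk] using h k⟩
    · intro h k
      by_cases hk : k ∈ T
      · simpa [hk] using h.1 k hk
      · simpa [hk] using h.2 k hk
  rw [hpre, Measure.prod_prod, pi_finset_pi μ T s hs, pi_finset_pi μ Tᶜ s hs,
    Finset.prod_mul_prod_compl]

lemma mp_update (j : Fin p) :
    MeasurePreserving (fun q : (Fin p → ℝ) × ℝ => Function.update q.1 j q.2)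
      ((Measure.pi μ).prod (μ j)) (Measure.pi μ) := by
  refine ⟨measurable_update', ?_⟩
  refine (Measure.pi_eq fun s hs => ?_).symm
  rw [Measure.map_apply measurable_update' (MeasurableSet.univ_pi hs)]
  have hpre : (fun q : (Fin p → ℝ) × ℝ => Function.update q.1 j q.2) ⁻¹' (Set.pi Set.univ s)
      = {x : Fin p → ℝ | ∀ k ∈ ({j} : Finset (Fin p))ᶜ, x k ∈ s k} ×ˢ s j := by
    ext q
    simp only [Set.mem_preimage, Set.mem_pi, Set.mem_univ, true_implies, Set.mem_prod,
      Set.mem_setOf_eq, Finset.mem_compl, Finset.mem_singleton]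
    constructor
    · intro h
      refine ⟨fun k hk => ?_, ?_⟩
      · have := h k; rwa [Function.update_of_ne hk] at this
      · have := h j; rwa [Function.update_self] at this
    · intro h k
      by_cases hk : k = j
      · subst hk; rw [Function.update_self]; exact h.2
      · rw [Function.update_of_ne hk]; exact h.1 k hk
  rw [hpre, Measure.prod_prod, pi_finset_pi μ ({j} : Finset (Fin p))ᶜ s hs]
  rw [mul_comm, ← Finset.prod_singleton (f := fun k => μ k (s k)) (a := j),
    Finset.prod_mul_prod_compl]

lemma map_eval (j : Fin p) : (Measure.pi μ).map (fun x => x j) = μ j := by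
  ext s hs
  rw [Measure.map_apply (measurable_pi_apply j) hs]
  have h1 : (fun x : Fin p → ℝ => x j) ⁻¹' s
      = {x : Fin p → ℝ | ∀ k ∈ ({j} : Finset (Fin p)), x k ∈ (fun k => if k = j then s else Set.univ) k} := by
    ext x
    simp [Set.mem_preimage]
  have hms : ∀ i, MeasurableSet ((fun k => if k = j then s else Set.univ) i) := by
    intro i; by_cases hi : i = j <;> simp [hi, hs]
  rw [h1, pi_finset_pi μ _ _ hms, Finset.prod_singleton, if_pos rfl]

lemma integrable_of_bdd {α : Type*} [MeasurableSpace α] {ν : Measure α} [IsFiniteMeasure ν]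
    {g : α → ℝ} (hg : Measurable g) {C : ℝ} (h : ∀ a, |g a| ≤ C) : Integrable g ν :=
  Integrable.mono' (integrable_const C) hg.aestronglyMeasurable
    (Filter.Eventually.of_forall fun a => by simpa [Real.norm_eq_abs] using h a)

def avg (T : Finset (Fin p)) (g : (Fin p → ℝ) → ℝ) (x : Fin p → ℝ) : ℝ :=
  ∫ y, g (combine T x y) ∂(Measure.pi μ)

lemma measurable_avg (T : Finset (Fin p)) {g : (Fin p → ℝ) → ℝ} (hg : Measurable g) :
    Measurable (avg μ T g) := by
  have h : StronglyMeasurable fun q : (Fin p → ℝ) × (Fin p → ℝ) => g (combine T q.1 q.2) :=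
    (hg.comp (measurable_combine T)).stronglyMeasurable
  exact h.integral_prod_right'.measurable

lemma abs_avg_le (T : Finset (Fin p)) {g : (Fin p → ℝ) → ℝ} {C : ℝ}
    (h : ∀ y, |g y| ≤ C) (x : Fin p → ℝ) : |avg μ T g x| ≤ C := by
  have h2 := norm_integral_le_of_norm_le_const (μ := Measure.pi μ)
    (f := fun y => g (combine T x y)) (C := C)
    (Filter.Eventually.of_forall fun y => by simpa [Real.norm_eq_abs] using h _)
  simpa [avg, Real.norm_eq_abs, measure_univ] using h2

lemma avg_congr (T : Finset (Fin p)) (g : (Fin p → ℝ) → ℝ) {x x' : Fin p → ℝ}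
    (h : ∀ k ∈ T, x k = x' k) : avg μ T g x = avg μ T g x' := by
  unfold avg
  congr 1
  funext y
  congr 1
  funext k
  simp only [combine]
  by_cases hk : k ∈ T <;> simp [hk, h k]

lemma avg_eq_self (T : Finset (Fin p)) {g : (Fin p → ℝ) → ℝ} {S : Finset (Fin p)}
    (hST : S ⊆ T) (hdep : ∀ x y, (∀ j ∈ S, x j = y j) → g x = g y) (x : Fin p → ℝ) :
    avg μ T g x = g x := by
  unfold avg
  have h : ∀ y, g (combine T x y) = g x := fun y =>
    hdep _ _ fun j hj => by simp [combine, hST hj]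
  simp only [h]
  simp

lemma avg_update_notMem (T : Finset (Fin p)) (j : Fin p) (hj : j ∉ T)
    (g : (Fin p → ℝ) → ℝ) (x : Fin p → ℝ) (t : ℝ) :
    avg μ T g (Function.update x j t) = avg μ T g x :=
  avg_congr μ T g fun k hk => Function.update_of_ne (by rintro rfl; exact hj hk) _ _

lemma integral_avg_update_mem (T : Finset (Fin p)) (j : Fin p) (hj : j ∈ T)
    {g : (Fin p → ℝ) → ℝ} (hg : Measurable g) {C : ℝ} (hb : ∀ y, |g y| ≤ C)
    (x : Fin p → ℝ) :
    ∫ t, avg μ T g (Function.update x j t) ∂(μ j) = avg μ (T.erase j) g x := by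
  have hav : Measurable (avg μ T g) := measurable_avg μ T hg
  have hsm : AEStronglyMeasurable (fun t : ℝ => avg μ T g (Function.update x j t))
      (Measure.map (fun z : Fin p → ℝ => z j) (Measure.pi μ)) :=
    Measurable.aestronglyMeasurable (by exact hav.comp (measurable_update x))
  rw [← map_eval μ j, integral_map (measurable_pi_apply j).aemeasurable hsm]
  -- goal: ∫ z, avg μ T g (update x j (z j)) ∂π = avg μ (T.erase j) g x
  have hcomb : ∀ z y : Fin p → ℝ,
      combine T (Function.update x j (z j)) y
        = combine (T.erase j) x (combine ({j} : Finset (Fin p)) z y) := by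
    intro z y
    funext k
    simp only [combine, Finset.mem_erase, Finset.mem_singleton, Function.update_apply]
    by_cases hk : k = j
    · subst hk; simp [hj]
    · by_cases hkT : k ∈ T <;> simp [hk, hkT]
  have hH : Measurable fun w => g (combine (T.erase j) x w) :=
    hg.comp ((measurable_combine (T.erase j)).comp measurable_prodMk_left)
  calc ∫ z, avg μ T g (Function.update x j (z j)) ∂(Measure.pi μ)
      = ∫ z, ∫ y, g (combine (T.erase j) x (combine ({j} : Finset (Fin p)) z y))
          ∂(Measure.pi μ) ∂(Measure.pi μ) := by
        simp only [avg, hcomb]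
    _ = ∫ q : (Fin p → ℝ) × (Fin p → ℝ),
          g (combine (T.erase j) x (combine ({j} : Finset (Fin p)) q.1 q.2))
          ∂((Measure.pi μ).prod (Measure.pi μ)) := by
        refine (integral_prod (fun q : (Fin p → ℝ) × (Fin p → ℝ) =>
          g (combine (T.erase j) x (combine ({j} : Finset (Fin p)) q.1 q.2))) ?_).symm
        exact integrable_of_bdd (hH.comp (measurable_combine _)) fun a => hb _
    _ = ∫ w, g (combine (T.erase j) x w) ∂(Measure.pi μ) := by
        conv_rhs => rw [← (mp_combine μ ({j} : Finset (Fin p))).map_eq]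
        rw [integral_map (measurable_combine _).aemeasurable hH.aestronglyMeasurable]
    _ = avg μ (T.erase j) g x := rfl

lemma avg_ae_zero (T : Finset (Fin p)) {g : (Fin p → ℝ) → ℝ} (hg : Measurable g)
    (h0 : g =ᵐ[Measure.pi μ] 0) : avg μ T g =ᵐ[Measure.pi μ] 0 := by
  have hN : MeasurableSet {z : Fin p → ℝ | g z ≠ 0} :=
    (hg (measurableSet_singleton 0)).compl
  have hN0 : Measure.pi μ {z | g z ≠ 0} = 0 := by
    have := h0
    rw [Filter.EventuallyEq, ae_iff] at this
    simpa using this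
  have hprod : ∀ᵐ q : (Fin p → ℝ) × (Fin p → ℝ) ∂((Measure.pi μ).prod (Measure.pi μ)),
      g (combine T q.1 q.2) = 0 := by
    rw [ae_iff]
    have : {q : (Fin p → ℝ) × (Fin p → ℝ) | ¬g (combine T q.1 q.2) = 0}
        = (fun q : (Fin p → ℝ) × (Fin p → ℝ) => combine T q.1 q.2) ⁻¹' {z | g z ≠ 0} := rfl
    rw [this, (mp_combine μ T).measure_preimage hN.nullMeasurableSet, hN0]
  have hae := Measure.ae_ae_of_ae_prod hprod
  filter_upwards [hae] with x hx
  simp only [avg, Pi.zero_apply]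
  rw [integral_congr_ae hx]
  simp

lemma measurable_condInt (j : Fin p) {g : (Fin p → ℝ) → ℝ} (hg : Measurable g) :
    Measurable fun z => ∫ t, g (Function.update z j t) ∂(μ j) := by
  have h : StronglyMeasurable fun q : (Fin p → ℝ) × ℝ => g (Function.update q.1 j q.2) :=
    (hg.comp measurable_update').stronglyMeasurable
  exact h.integral_prod_right'.measurable

lemma avg_refresh (T : Finset (Fin p)) (j : Fin p) (hj : j ∉ T)
    {g : (Fin p → ℝ) → ℝ} (hg : Measurable g) {C : ℝ} (hb : ∀ y, |g y| ≤ C)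
    (x : Fin p → ℝ) :
    avg μ T g x = avg μ T (fun z => ∫ t, g (Function.update z j t) ∂(μ j)) x := by
  have hcomb : ∀ (y : Fin p → ℝ) (t : ℝ),
      Function.update (combine T x y) j t = combine T x (Function.update y j t) := by
    intro y t
    funext k
    simp only [combine, Function.update_apply]
    by_cases hk : k = j
    · subst hk; simp [hj]
    · by_cases hkT : k ∈ T <;> simp [hk, hkT]
  have hH : Measurable fun w => g (combine T x w) :=
    hg.comp ((measurable_combine T).comp measurable_prodMk_left)
  calc avg μ T g x = ∫ w, g (combine T x w) ∂(Measure.pi μ) := rfl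
    _ = ∫ q : (Fin p → ℝ) × ℝ, g (combine T x (Function.update q.1 j q.2))
          ∂((Measure.pi μ).prod (μ j)) := by
        conv_lhs => rw [← (mp_update μ j).map_eq]
        rw [integral_map (mp_update μ j).measurable.aemeasurable hH.aestronglyMeasurable]
    _ = ∫ y, ∫ t, g (combine T x (Function.update y j t)) ∂(μ j) ∂(Measure.pi μ) := by
        refine integral_prod (fun q : (Fin p → ℝ) × ℝ =>
          g (combine T x (Function.update q.1 j q.2))) ?_
        exact integrable_of_bdd (hH.comp measurable_update') fun a => hb _
    _ = avg μ T (fun z => ∫ t, g (Function.update z j t) ∂(μ j)) x := by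
        simp only [avg, hcomb]

lemma powerset_eq_filter (S : Finset (Fin p)) :
    S.powerset = Finset.univ.filter (· ⊆ S) := by
  ext T; simp

lemma sum_sign (T : Finset (Fin p)) :
    (∑ S : Finset (Fin p), if T ⊆ S then (-1:ℝ)^((S \ T).card) else 0)
      = if T = Finset.univ then 1 else 0 := by
  rw [← Finset.sum_filter]
  have h1 : ∑ S ∈ Finset.univ.filter (fun S => T ⊆ S), (-1:ℝ)^((S \ T).card)
      = ∑ U ∈ Tᶜ.powerset, (-1:ℝ)^U.card := by
    refine Finset.sum_nbij' (fun S => S \ T) (fun U => T ∪ U) ?_ ?_ ?_ ?_ ?_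
    · intro S _
      exact Finset.mem_powerset.2 fun k hk =>
        Finset.mem_compl.2 (Finset.mem_sdiff.1 hk).2
    · intro U _
      simp [Finset.subset_union_left]
    · intro S hS
      simp only [Finset.mem_filter] at hS
      exact Finset.union_sdiff_of_subset hS.2
    · intro U hU
      refine Finset.union_sdiff_cancel_left ?_
      rw [Finset.disjoint_left]
      intro a haT haU
      exact absurd haT (Finset.mem_compl.1 ((Finset.mem_powerset.1 hU) haU))
    · intro S _; rfl
  rw [h1]
  have h2 := Finset.sum_powerset_neg_one_pow_card (x := Tᶜ)
  have h3 : ∑ U ∈ Tᶜ.powerset, (-1:ℝ)^U.card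
      = ((∑ U ∈ Tᶜ.powerset, (-1:ℤ)^U.card : ℤ) : ℝ) := by push_cast; rfl
  rw [h3, h2]
  by_cases hT : T = Finset.univ
  · simp [hT]
  · have hne : Tᶜ ≠ ∅ := by simpa [Finset.compl_eq_empty_iff] using hT
    simp [hne, hT]

def Fdec (f : (Fin p → ℝ) → ℝ) (S : Finset (Fin p)) (x : Fin p → ℝ) : ℝ :=
  ∑ T ∈ S.powerset, (-1 : ℝ) ^ ((S \ T).card) * avg μ T f x

lemma isDec (f : (Fin p → ℝ) → ℝ) (hmeas : Measurable f) (C : ℝ)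
    (hbdd : ∀ x, |f x| ≤ C) : IsANOVADecomposition μ f (Fdec μ f) := by
  refine ⟨?_, ?_, ?_, ?_, ?_⟩
  · intro S
    exact Finset.measurable_sum _ fun T _ => ((measurable_avg μ T hmeas).const_mul _)
  · intro S
    refine ⟨∑ _T ∈ S.powerset, C, fun x => ?_⟩
    refine (Finset.abs_sum_le_sum_abs _ _).trans (Finset.sum_le_sum fun T _ => ?_)
    rw [abs_mul, abs_pow, abs_neg, abs_one, one_pow, one_mul]
    exact abs_avg_le μ T hbdd x
  · intro S x y hxy
    unfold Fdec
    refine Finset.sum_congr rfl fun T hT => ?_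
    rw [avg_congr μ T f fun k hk => hxy k ((Finset.mem_powerset.1 hT) hk)]
  · intro S j hj
    refine Filter.Eventually.of_forall fun x => ?_
    have hint : ∀ T ∈ S.powerset, Integrable
        (fun t => (-1:ℝ)^((S \ T).card) * avg μ T f (Function.update x j t)) (μ j) := by
      intro T _
      refine (integrable_of_bdd (C := C) ?_ ?_).const_mul _
      · exact (measurable_avg μ T hmeas).comp (measurable_update x)
      · intro t; exact abs_avg_le μ T hbdd _
    unfold Fdec
    rw [integral_finset_sum _ hint]
    have hval : ∀ T ∈ S.powerset,
        ∫ t, (-1:ℝ)^((S \ T).card) * avg μ T f (Function.update x j t) ∂(μ j)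
          = (-1:ℝ)^((S \ T).card)
              * (if j ∈ T then avg μ (T.erase j) f x else avg μ T f x) := by
      intro T _
      rw [integral_const_mul]
      congr 1
      by_cases hjT : j ∈ T
      · simp only [hjT, if_true]
        exact integral_avg_update_mem μ T j hjT hmeas hbdd x
      · simp only [hjT, if_false]
        have hconst : ∀ t, avg μ T f (Function.update x j t) = avg μ T f x :=
          avg_update_notMem μ T j hjT f x
        simp only [hconst]
        simp
    rw [Finset.sum_congr rfl hval]
    obtain ⟨s, hjs, rfl⟩ : ∃ s, j ∉ s ∧ insert j s = S :=
      ⟨S.erase j, Finset.notMem_erase j S, Finset.insert_erase hj⟩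
    rw [Finset.sum_powerset_insert hjs, ← Finset.sum_add_distrib]
    refine Finset.sum_eq_zero fun T hT => ?_
    have hTs : T ⊆ s := Finset.mem_powerset.1 hT
    have hjT : j ∉ T := fun h => hjs (hTs h)
    have hjmem : j ∈ insert j T := Finset.mem_insert_self _ _
    have hE : (insert j T).erase j = T := Finset.erase_insert hjT
    have hc1 : insert j s \ T = insert j (s \ T) := by
      ext k
      by_cases hk : k = j <;>
        simp [Finset.mem_sdiff, Finset.mem_insert, hk, hjT]
    have hc2 : insert j s \ insert j T = s \ T := by
      ext k
      by_cases hk : k = j <;>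
        simp [Finset.mem_sdiff, Finset.mem_insert, hk, hjs]
    have hcard : (insert j s \ T).card = (s \ T).card + 1 := by
      rw [hc1]
      exact Finset.card_insert_of_notMem fun h => hjs (Finset.mem_sdiff.1 h).1
    simp only [hjT, if_false, hjmem, if_true, hE, hc2, hcard]
    rw [pow_succ]
    ring
  · refine Filter.Eventually.of_forall fun x => ?_
    unfold Fdec
    have hps : ∀ S : Finset (Fin p),
        ∑ T ∈ S.powerset, (-1:ℝ)^((S \ T).card) * avg μ T f x
          = ∑ T : Finset (Fin p),
              if T ⊆ S then (-1:ℝ)^((S \ T).card) * avg μ T f x else 0 := by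
      intro S
      rw [← Finset.sum_filter, ← powerset_eq_filter]
    rw [Finset.sum_congr rfl fun S _ => hps S, Finset.sum_comm]
    have h2 : ∀ T : Finset (Fin p),
        (∑ S : Finset (Fin p),
          if T ⊆ S then (-1:ℝ)^((S \ T).card) * avg μ T f x else 0)
          = (if T = Finset.univ then 1 else 0) * avg μ T f x := by
      intro T
      rw [← sum_sign T, Finset.sum_mul]
      refine Finset.sum_congr rfl fun S _ => ?_
      rw [ite_mul, zero_mul]
    rw [Finset.sum_congr rfl fun T _ => h2 T]
    simp only [ite_mul, zero_mul, one_mul]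
    rw [Finset.sum_ite_eq' Finset.univ Finset.univ (fun T => avg μ T f x)]
    simp only [Finset.mem_univ, if_true]
    have hcy : ∀ y, combine Finset.univ x y = x := fun y => funext fun k => by simp [combine]
    simp [avg, hcy]

lemma uniqueDec (f : (Fin p → ℝ) → ℝ)
    (F G : Finset (Fin p) → (Fin p → ℝ) → ℝ)
    (hF : IsANOVADecomposition μ f F) (hG : IsANOVADecomposition μ f G)
    (S₀ : Finset (Fin p)) : F S₀ =ᵐ[Measure.pi μ] G S₀ := by
  obtain ⟨hFm, hFb, hFdep, hFid, hFsum⟩ := hF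
  obtain ⟨hGm, hGb, hGdep, hGid, hGsum⟩ := hG
  choose CF hCF using hFb
  choose CG hCG using hGb
  set D : Finset (Fin p) → (Fin p → ℝ) → ℝ := fun S x => F S x - G S x with hDdef
  have hDm : ∀ S, Measurable (D S) := fun S => (hFm S).sub (hGm S)
  have hDb : ∀ S x, |D S x| ≤ CF S + CG S := by
    intro S x
    calc |F S x - G S x| = |F S x + -(G S x)| := by rw [sub_eq_add_neg]
      _ ≤ |F S x| + |-(G S x)| := abs_add_le _ _
      _ = |F S x| + |G S x| := by rw [abs_neg]
      _ ≤ CF S + CG S := add_le_add (hCF S x) (hCG S x)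
  have hDdep : ∀ S : Finset (Fin p), ∀ x y, (∀ j ∈ S, x j = y j) → D S x = D S y := by
    intro S x y h
    simp only [hDdef]
    rw [hFdep S x y h, hGdep S x y h]
  have hDid : ∀ S : Finset (Fin p), ∀ j ∈ S,
      (fun x => ∫ t, D S (Function.update x j t) ∂(μ j)) =ᵐ[Measure.pi μ] 0 := by
    intro S j hj
    filter_upwards [hFid S j hj, hGid S j hj] with x h1 h2
    have hiF : Integrable (fun t => F S (Function.update x j t)) (μ j) :=
      integrable_of_bdd ((hFm S).comp (measurable_update x)) fun t => hCF S _
    have hiG : Integrable (fun t => G S (Function.update x j t)) (μ j) :=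
      integrable_of_bdd ((hGm S).comp (measurable_update x)) fun t => hCG S _
    simp only [hDdef, Pi.zero_apply]
    rw [integral_sub hiF hiG, h1, h2, sub_zero]
  have hDsum : (fun x => ∑ S : Finset (Fin p), D S x) =ᵐ[Measure.pi μ] 0 := by
    filter_upwards [hFsum, hGsum] with x h1 h2
    simp only [hDdef, Pi.zero_apply, Finset.sum_sub_distrib]
    rw [← h1, ← h2, sub_self]
  have stepA : ∀ T : Finset (Fin p),
      (fun x => ∑ S ∈ T.powerset, D S x) =ᵐ[Measure.pi μ] 0 := by
    intro T
    have hsm : Measurable fun x => ∑ S : Finset (Fin p), D S x :=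
      Finset.measurable_sum _ fun S _ => hDm S
    have hz := avg_ae_zero μ T hsm hDsum
    have hlin : ∀ x, avg μ T (fun x => ∑ S : Finset (Fin p), D S x) x
        = ∑ S : Finset (Fin p), avg μ T (D S) x := by
      intro x
      unfold avg
      rw [integral_finset_sum]
      intro S _
      exact integrable_of_bdd
        ((hDm S).comp ((measurable_combine T).comp measurable_prodMk_left))
        fun a => hDb S _
    have hbadall : ∀ᵐ x ∂(Measure.pi μ),
        ∀ S ∈ Finset.univ.filter (fun S : Finset (Fin p) => ¬ S ⊆ T),
          avg μ T (D S) x = 0 := by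
      rw [Filter.eventually_all_finset]
      intro S hS
      have hST : ¬ S ⊆ T := by simpa using (Finset.mem_filter.1 hS).2
      obtain ⟨j, hjS, hjT⟩ := Finset.not_subset.1 hST
      have h1 : ∀ x, avg μ T (D S) x
          = avg μ T (fun z => ∫ t, D S (Function.update z j t) ∂(μ j)) x :=
        avg_refresh μ T j hjT (hDm S) (hDb S)
      have h2 := avg_ae_zero μ T (measurable_condInt μ j (hDm S)) (hDid S j hjS)
      filter_upwards [h2] with x hx
      rw [h1 x]
      exact hx
    filter_upwards [hz, hbadall] with x hx hbx
    have hsplit : ∑ S : Finset (Fin p), avg μ T (D S) x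
        = ∑ S ∈ Finset.univ.filter (fun S : Finset (Fin p) => S ⊆ T), avg μ T (D S) x
          + ∑ S ∈ Finset.univ.filter (fun S : Finset (Fin p) => ¬ S ⊆ T),
              avg μ T (D S) x :=
      (Finset.sum_filter_add_sum_filter_not _ _ _).symm
    have hgood : ∑ S ∈ Finset.univ.filter (fun S : Finset (Fin p) => S ⊆ T),
        avg μ T (D S) x = ∑ S ∈ T.powerset, D S x := by
      rw [powerset_eq_filter]
      refine Finset.sum_congr rfl fun S hS => ?_
      exact avg_eq_self μ T (by simpa using (Finset.mem_filter.1 hS).2) (hDdep S) x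
    have hbad0 : ∑ S ∈ Finset.univ.filter (fun S : Finset (Fin p) => ¬ S ⊆ T),
        avg μ T (D S) x = 0 := Finset.sum_eq_zero hbx
    simp only [Pi.zero_apply] at hx ⊢
    have hfin := hlin x
    rw [hsplit, hgood, hbad0, add_zero] at hfin
    rw [← hfin]
    exact hx
  have keyT : ∀ T : Finset (Fin p),
      (∀ S : Finset (Fin p), S ⊂ T → D S =ᵐ[Measure.pi μ] 0) →
        D T =ᵐ[Measure.pi μ] 0 := by
    intro T hlt
    have h2 : ∀ᵐ x ∂(Measure.pi μ), ∀ S ∈ T.powerset.erase T, D S x = 0 := by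
      rw [Filter.eventually_all_finset]
      intro S hS
      obtain ⟨hne, hsub⟩ := Finset.mem_erase.1 hS
      have := hlt S (lt_of_le_of_ne (Finset.mem_powerset.1 hsub) hne)
      filter_upwards [this] with x hx using hx
    filter_upwards [stepA T, h2] with x h1 h2x
    simp only [Pi.zero_apply] at h1 ⊢
    have hz2 : ∑ S ∈ T.powerset.erase T, D S x = 0 := Finset.sum_eq_zero h2x
    have h3 := Finset.add_sum_erase T.powerset (fun S => D S x)
      (Finset.mem_powerset_self T)
    rw [hz2, add_zero, h1] at h3
    exact h3
  have main : ∀ n, ∀ T : Finset (Fin p), T.card ≤ n → D T =ᵐ[Measure.pi μ] 0 := by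
    intro n
    induction n with
    | zero =>
      intro T hT
      exact keyT T fun S hS => absurd (Finset.card_lt_card hS) (by omega)
    | succ n ih =>
      intro T hT
      refine keyT T fun S hS => ih S ?_
      have := Finset.card_lt_card hS
      omega
  have := main S₀.card S₀ le_rfl
  filter_upwards [this] with x hx
  have hx' : F S₀ x - G S₀ x = 0 := hx
  linarith

end ANOVAAux

/-- every bounded measurable function on `ℝ^p` admits a functional ANOVA
decomposition `f = ∑_{S ⊆ [p]} f_S` (almost everywhere with respect to
`μ^ind = μ_1 ⊗ ⋯ ⊗ μ_p`) whose components satisfy the identifiability condition, and this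
decomposition is unique up to null sets. -/
theorem stmt0 (p : ℕ) (μ : Fin p → Measure ℝ) [∀ j, IsProbabilityMeasure (μ j)]
    (f : (Fin p → ℝ) → ℝ) (hmeas : Measurable f) (C : ℝ) (hbdd : ∀ x, |f x| ≤ C) :
    (∃ F : Finset (Fin p) → (Fin p → ℝ) → ℝ, IsANOVADecomposition μ f F) ∧
    (∀ F G : Finset (Fin p) → (Fin p → ℝ) → ℝ,
      IsANOVADecomposition μ f F → IsANOVADecomposition μ f G →
      ∀ S : Finset (Fin p), F S =ᵐ[Measure.pi μ] G S) := by
  exact ⟨⟨ANOVAAux.Fdec μ f, ANOVAAux.isDec μ f hmeas C hbdd⟩,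
    fun F G hF hG S => ANOVAAux.uniqueDec μ f F G hF hG S⟩
end
end

section
/- Let S = {ℓ_1,…,ℓ_d} ⊆ {1,…,p}, let μ_j (j ∈ S) be Borel probability measures on ℝ, and let s_j ∈ ℝ (j ∈ S) be split values with 0 < μ_j{x : x > s_j} < 1. Define 𝔞_j = −μ_j{x : x ≤ s_j} / μ_j{x : x > s_j} and, for v ∈ {−1,1}^d, 𝔞_v = ∏_{j=1}^d 𝔞_{ℓ_j}^{𝟙(v_{ℓ_j} = 1)}. Then a height vector (β_v)_{v ∈ {−1,1}^d} satisfies the μ-identifiability condition if and only if β_v = β_{(−1,…,−1)} · 𝔞_v for every v ∈ {−1,1}^d. In particular, the space of height vectors satisfying the μ-identifiability condition is one-dimensional (its degree of freedom is 1). -/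
open MeasureTheory

noncomputable section

/-- The coefficient `𝔞_j = −μ_j{x ≤ s_j} / μ_j{x > s_j}` attached to the split value `s j`. -/
def splitCoeff {p : ℕ} (μ : Fin p → Measure ℝ) (s : Fin p → ℝ) (j : Fin p) : ℝ :=
  -((μ j {x | x ≤ s j}).toReal / (μ j {x | s j < x}).toReal)

/-- `𝔞_v = ∏_{j ∈ S} 𝔞_j^{𝟙(v_j = 1)}`, where `v j = true` encodes `v_j = 1`. -/
def splitCoeffV {p : ℕ} (S : Finset (Fin p)) (μ : Fin p → Measure ℝ) (s : Fin p → ℝ)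
    (v : {j // j ∈ S} → Bool) : ℝ :=
  ∏ j : {j // j ∈ S}, (if v j then splitCoeff μ s j.val else 1)

/-- The μ-identifiability condition for the height vector `β` of a binary-product tree with
split-variable set `S` and split values `s`: for every `k ∈ S` and every choice of the
remaining signs, `∑_{v_k ∈ {−1,1}} β_v μ_k^{(v_k)}{x > s_k} = 0`. -/
def HeightIdentifiable {p : ℕ} (S : Finset (Fin p)) (μ : Fin p → Measure ℝ) (s : Fin p → ℝ)
    (β : ({j // j ∈ S} → Bool) → ℝ) : Prop :=
  ∀ (k : {j // j ∈ S}) (v : {j // j ∈ S} → Bool),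
    β (Function.update v k true) * (μ k.val {x | s k.val < x}).toReal +
      β (Function.update v k false) * (1 - (μ k.val {x | s k.val < x}).toReal) = 0

lemma toReal_le_eq {p : ℕ} (μ : Fin p → Measure ℝ) [∀ j, IsProbabilityMeasure (μ j)]
    (s : Fin p → ℝ) (j : Fin p) :
    (μ j {x | x ≤ s j}).toReal = 1 - (μ j {x | s j < x}).toReal := by
  have h1 : {x : ℝ | x ≤ s j} = {x : ℝ | s j < x}ᶜ := by ext x; simp [not_lt]
  have hmeas : MeasurableSet {x : ℝ | s j < x} := measurableSet_Ioi
  rw [h1, prob_compl_eq_one_sub hmeas,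
    ENNReal.toReal_sub_of_le prob_le_one ENNReal.one_ne_top, ENNReal.toReal_one]

lemma splitCoeff_mul {p : ℕ} (μ : Fin p → Measure ℝ) [∀ j, IsProbabilityMeasure (μ j)]
    (s : Fin p → ℝ) (j : Fin p) (hm : 0 < (μ j {x | s j < x}).toReal) :
    splitCoeff μ s j * (μ j {x | s j < x}).toReal
      = -(1 - (μ j {x | s j < x}).toReal) := by
  rw [splitCoeff, toReal_le_eq]
  field_simp

lemma splitCoeffV_update {p : ℕ} (S : Finset (Fin p)) (μ : Fin p → Measure ℝ) (s : Fin p → ℝ)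
    (v : {j // j ∈ S} → Bool) (k : {j // j ∈ S}) :
    splitCoeffV S μ s (Function.update v k true)
      = splitCoeff μ s k.val * splitCoeffV S μ s (Function.update v k false) := by
  unfold splitCoeffV
  rw [← Finset.mul_prod_erase Finset.univ _ (Finset.mem_univ k),
      ← Finset.mul_prod_erase Finset.univ
        (fun j => if Function.update v k false j then splitCoeff μ s j.val else 1)
        (Finset.mem_univ k)]
  simp only [Function.update_self, if_true, if_false, Bool.false_eq_true, mul_assoc]
  rw [one_mul]
  congr 1
  refine Finset.prod_congr rfl fun j hj => ?_
  rw [Function.update_of_ne (Finset.ne_of_mem_erase hj),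
      Function.update_of_ne (Finset.ne_of_mem_erase hj)]

lemma forward {p : ℕ} (S : Finset (Fin p)) (μ : Fin p → Measure ℝ)
    [∀ j, IsProbabilityMeasure (μ j)] (s : Fin p → ℝ)
    (hs : ∀ j ∈ S, 0 < (μ j {x | s j < x}).toReal ∧ (μ j {x | s j < x}).toReal < 1)
    (β : ({j // j ∈ S} → Bool) → ℝ) (hβ : HeightIdentifiable S μ s β) :
    ∀ (n : ℕ) (v : {j // j ∈ S} → Bool),
      (Finset.univ.filter (fun j => v j = true)).card = n →
      β v = β (fun _ => false) * splitCoeffV S μ s v := by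
  intro n
  induction n with
  | zero =>
    intro v hv
    have hveq : v = fun _ => false := by
      funext j
      by_contra h
      rw [Finset.card_eq_zero, Finset.eq_empty_iff_forall_notMem] at hv
      simp only [Bool.not_eq_false] at h
      exact hv j (by simp [h])
    subst hveq
    have : splitCoeffV S μ s (fun _ => false) = 1 := by
      unfold splitCoeffV; simp
    rw [this, mul_one]
  | succ n ih =>
    intro v hv
    have hne : (Finset.univ.filter (fun j => v j = true)).Nonempty := by
      rw [← Finset.card_pos, hv]; omega
    obtain ⟨k, hk⟩ := hne
    have hvk : v k = true := by simpa using hk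
    set w := Function.update v k false with hw
    have hupd : Function.update w k true = v := by
      funext j
      by_cases h : j = k
      · subst h; simp [Function.update_self, hvk]
      · simp [Function.update_of_ne h, hw]
    have hupdf : Function.update w k false = w := by
      funext j
      by_cases h : j = k
      · subst h; simp [hw]
      · simp [Function.update_of_ne h]
    have hm := (hs k.val k.prop).1
    have heq := hβ k w
    rw [hupd, hupdf] at heq
    -- β v * m + β w * (1 - m) = 0  ⇒  β v = splitCoeff * β w
    have hβv : β v = splitCoeff μ s k.val * β w := by
      have hne' : (μ k.val {x | s k.val < x}).toReal ≠ 0 := ne_of_gt hm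
      have := splitCoeff_mul μ s k.val hm
      field_simp [splitCoeff, toReal_le_eq] at this ⊢
      apply mul_right_cancel₀ hne'
      linear_combination heq - β w * this
    have hcard : (Finset.univ.filter (fun j => w j = true)).card = n := by
      have : Finset.univ.filter (fun j => w j = true)
          = (Finset.univ.filter (fun j => v j = true)).erase k := by
        ext j
        by_cases h : j = k
        · subst h; simp [hw]
        · simp [hw, Function.update_of_ne h, h]
      rw [this, Finset.card_erase_of_mem hk, hv]
      omega
    have hihw := ih w hcard
    have hsv : splitCoeffV S μ s v = splitCoeff μ s k.val * splitCoeffV S μ s w := by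
      conv_lhs => rw [← hupd]
      rw [splitCoeffV_update, hupdf]
    rw [hβv, hihw, hsv]; ring

/-- a height vector satisfies the μ-identifiability condition iff
`β_v = β_{(−1,…,−1)} ⬝ 𝔞_v` for every `v`; in particular, the space of identifiable height
vectors is one-dimensional: it consists exactly of the multiples of `v ↦ 𝔞_v`. -/
theorem stmt1 {p : ℕ} (S : Finset (Fin p)) (μ : Fin p → Measure ℝ)
    [∀ j, IsProbabilityMeasure (μ j)] (s : Fin p → ℝ)
    (hs : ∀ j ∈ S, 0 < (μ j {x | s j < x}).toReal ∧ (μ j {x | s j < x}).toReal < 1)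
    (β : ({j // j ∈ S} → Bool) → ℝ) :
    (HeightIdentifiable S μ s β ↔
      ∀ v, β v = β (fun _ => false) * splitCoeffV S μ s v) ∧
    {β' : ({j // j ∈ S} → Bool) → ℝ | HeightIdentifiable S μ s β'} =
      {β' | ∃ c : ℝ, ∀ v, β' v = c * splitCoeffV S μ s v} := by
  have key : ∀ β' : ({j // j ∈ S} → Bool) → ℝ,
      HeightIdentifiable S μ s β' ↔
        ∀ v, β' v = β' (fun _ => false) * splitCoeffV S μ s v := by
    intro β'
    constructor
    · intro h v
      exact forward S μ s hs β' h _ v rfl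
    · intro h k v
      have hm := (hs k.val k.prop).1
      have hmul := splitCoeff_mul μ s k.val hm
      rw [h (Function.update v k true), h (Function.update v k false),
        splitCoeffV_update]
      set c := β' (fun _ => false)
      set P := splitCoeffV S μ s (Function.update v k false)
      set m := (μ k.val {x | s k.val < x}).toReal
      have : splitCoeff μ s k.val * m + (1 - m) = 0 := by rw [hmul]; ring
      linear_combination (c * P) * this
  refine ⟨key β, ?_⟩
  ext β'
  simp only [Set.mem_setOf_eq]
  constructor
  · intro h
    exact ⟨β' (fun _ => false), (key β').mp h⟩
  · rintro ⟨c, hc⟩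
    rw [key β']
    intro v
    have h0 : splitCoeffV S μ s (fun _ => false) = 1 := by
      unfold splitCoeffV; simp
    rw [hc v, hc (fun _ => false), h0, mul_one]
end
end

section
/- Let r ≥ 2 and let w ∈ ℝ^r satisfy w_j ≥ 0 for all j and Σ_{j=1}^r w_j = 1. For j ∈ {1,…,r}, let 𝟏_j ∈ ℝ^r be the vector whose first j entries are 1 and whose remaining entries are 0, and let 𝟏_j^c = 𝟏_r − 𝟏_j. Then for every u ∈ ℝ^r with ⟨w, u⟩ = 0 there exist real numbers (a_j, b_j), j = 1,…,r−1, such that: (i) u = Σ_{j=1}^{r−1} (a_j 𝟏_j + b_j 𝟏_j^c); (ii) ⟨w, a_j 𝟏_j + b_j 𝟏_j^c⟩ = 0 for every j ∈ {1,…,r−1}; and (iii) max{|a_j|, |b_j| : j ∈ {1,…,r−1}} ≤ 2 ‖u‖_∞, where ‖u‖_∞ = max_j |u_j|. -/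
open Finset

noncomputable section

/-- decomposition of a `w`-orthogonal vector `u ∈ ℝ^r` as a sum
`u = ∑_{j=1}^{r−1} (a_j 𝟏_j + b_j 𝟏_j^c)` of `w`-orthogonal "step" vectors, with
`max{|a_j|, |b_j|} ≤ 2 ‖u‖_∞`.  Here `𝟏_j` has its first `j` entries equal to `1` and the
rest equal to `0`, and `𝟏_j^c = 𝟏_r − 𝟏_j`. -/
theorem stmt4 (r : ℕ) (hr : 2 ≤ r) (w : Fin r → ℝ) (hw0 : ∀ j, 0 ≤ w j)
    (hw1 : ∑ j, w j = 1) (u : Fin r → ℝ) (hu : ∑ j, w j * u j = 0) :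
    ∃ a b : ℕ → ℝ,
      (∀ i : Fin r, u i = ∑ j ∈ Finset.Icc 1 (r - 1),
        (a j * (if (i : ℕ) < j then 1 else 0) + b j * (if (i : ℕ) < j then 0 else 1))) ∧
      (∀ j ∈ Finset.Icc 1 (r - 1),
        ∑ i : Fin r, w i *
          (a j * (if (i : ℕ) < j then 1 else 0) + b j * (if (i : ℕ) < j then 0 else 1)) = 0) ∧
      (∀ j ∈ Finset.Icc 1 (r - 1),
        |a j| ≤ 2 * Finset.univ.sup' (Finset.univ_nonempty_iff.mpr ⟨⟨0, by omega⟩⟩)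
            (fun i : Fin r => |u i|) ∧
        |b j| ≤ 2 * Finset.univ.sup' (Finset.univ_nonempty_iff.mpr ⟨⟨0, by omega⟩⟩)
            (fun i : Fin r => |u i|)) := by
  classical
  set M : ℝ := Finset.univ.sup' (Finset.univ_nonempty_iff.mpr ⟨⟨0, by omega⟩⟩)
      (fun i : Fin r => |u i|) with hMdef
  have hM : ∀ i : Fin r, |u i| ≤ M := fun i => Finset.le_sup' (fun i : Fin r => |u i|) (mem_univ i)
  have hM0 : 0 ≤ M := le_trans (abs_nonneg _) (hM ⟨0, by omega⟩)
  set W : ℕ → ℝ := fun j => ∑ i : Fin r, if (i : ℕ) < j then w i else 0 with hWdef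
  have hW0 : ∀ j, 0 ≤ W j := by
    intro j
    apply Finset.sum_nonneg
    intro i _
    split <;> simp [hw0 i]
  have hW1 : ∀ j, W j ≤ 1 := by
    intro j
    rw [← hw1]
    apply Finset.sum_le_sum
    intro i _
    split <;> simp [hw0 i]
  set d : ℕ → ℝ := fun j => if h : j < r ∧ 1 ≤ j then u ⟨j, h.1⟩ - u ⟨j - 1, by omega⟩ else 0
    with hddef
  have hd : ∀ j, |d j| ≤ 2 * M := by
    intro j
    simp only [hddef]
    split
    · rename_i h
      calc |u ⟨j, h.1⟩ - u ⟨j - 1, by omega⟩| ≤ |u ⟨j, h.1⟩| + |u ⟨j - 1, by omega⟩| :=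
          abs_sub _ _
        _ ≤ M + M := add_le_add (hM _) (hM _)
        _ = 2 * M := by ring
    · simpa using by linarith
  refine ⟨fun j => -(d j) * (1 - W j), fun j => d j * W j, ?_, ?_, ?_⟩
  · -- part (i)
    have hortho : ∀ j : ℕ, ∑ i : Fin r, w i *
        ((-(d j) * (1 - W j)) * (if (i : ℕ) < j then 1 else 0) +
          (d j * W j) * (if (i : ℕ) < j then 0 else 1)) = 0 := by
      intro j
      have : ∀ i : Fin r, w i *
          ((-(d j) * (1 - W j)) * (if (i : ℕ) < j then 1 else 0) +
            (d j * W j) * (if (i : ℕ) < j then 0 else 1)) =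
          (-(d j) * (1 - W j)) * (if (i : ℕ) < j then w i else 0) +
            (d j * W j) * (w i - (if (i : ℕ) < j then w i else 0)) := by
        intro i; split <;> ring
      rw [Finset.sum_congr rfl fun i _ => this i, Finset.sum_add_distrib, ← Finset.mul_sum,
        ← Finset.mul_sum, Finset.sum_sub_distrib, hw1]
      have hWj : (∑ i : Fin r, if (i : ℕ) < j then w i else 0) = W j := rfl
      rw [hWj]
      ring
    -- difference u - v is constant
    have key : ∀ n : ℕ, ∀ h : n < r,
        u ⟨n, h⟩ - (∑ j ∈ Finset.Icc 1 (r - 1),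
          ((-(d j) * (1 - W j)) * (if n < j then 1 else 0) +
            (d j * W j) * (if n < j then 0 else 1))) =
        u ⟨0, by omega⟩ - (∑ j ∈ Finset.Icc 1 (r - 1),
          ((-(d j) * (1 - W j)) * (if 0 < j then 1 else 0) +
            (d j * W j) * (if 0 < j then 0 else 1))) := by
      intro n
      induction n with
      | zero => intro h; rfl
      | succ m ih =>
        intro h
        have hm : m < r := by omega
        have IH := ih hm
        have hstep : (∑ j ∈ Finset.Icc 1 (r - 1),
            ((-(d j) * (1 - W j)) * (if m + 1 < j then 1 else 0) +
              (d j * W j) * (if m + 1 < j then 0 else 1))) -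
            (∑ j ∈ Finset.Icc 1 (r - 1),
            ((-(d j) * (1 - W j)) * (if m < j then 1 else 0) +
              (d j * W j) * (if m < j then 0 else 1))) = u ⟨m + 1, h⟩ - u ⟨m, hm⟩ := by
          rw [← Finset.sum_sub_distrib]
          have hcongr : ∀ j ∈ Finset.Icc 1 (r - 1),
              (((-(d j) * (1 - W j)) * (if m + 1 < j then 1 else 0) +
                (d j * W j) * (if m + 1 < j then 0 else 1)) -
              ((-(d j) * (1 - W j)) * (if m < j then 1 else 0) +
                (d j * W j) * (if m < j then 0 else 1))) =
              if j = m + 1 then d j else 0 := by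
            intro j hj
            by_cases hjm : j = m + 1
            · subst hjm
              have h1 : ¬ (m + 1 < m + 1) := lt_irrefl _
              have h2 : m < m + 1 := Nat.lt_succ_self m
              rw [if_pos rfl, if_neg h1, if_neg h1, if_pos h2, if_pos h2]
              ring
            · have : (m + 1 < j) ↔ (m < j) := by omega
              rw [if_neg hjm]
              simp only [this]
              ring
          rw [Finset.sum_congr rfl hcongr, Finset.sum_ite_eq' (Finset.Icc 1 (r - 1)) (m + 1)]
          have hmem : m + 1 ∈ Finset.Icc 1 (r - 1) := by
            rw [Finset.mem_Icc]; omega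
          rw [if_pos hmem]
          simp only [hddef]
          rw [dif_pos ⟨h, by omega⟩]
          congr 1
        linarith
    intro i
    -- combine: sum over w of the constant difference is the difference itself
    have hconst : ∀ i : Fin r,
        u i - (∑ j ∈ Finset.Icc 1 (r - 1),
          ((-(d j) * (1 - W j)) * (if (i : ℕ) < j then 1 else 0) +
            (d j * W j) * (if (i : ℕ) < j then 0 else 1))) =
        u ⟨0, by omega⟩ - (∑ j ∈ Finset.Icc 1 (r - 1),
          ((-(d j) * (1 - W j)) * (if 0 < j then 1 else 0) +
            (d j * W j) * (if 0 < j then 0 else 1))) := by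
      intro i
      have := key (i : ℕ) i.2
      simpa using this
    set C : ℝ := u ⟨0, by omega⟩ - (∑ j ∈ Finset.Icc 1 (r - 1),
        ((-(d j) * (1 - W j)) * (if 0 < j then 1 else 0) +
          (d j * W j) * (if 0 < j then 0 else 1))) with hCdef
    have hsumv : ∑ i : Fin r, w i * (∑ j ∈ Finset.Icc 1 (r - 1),
        ((-(d j) * (1 - W j)) * (if (i : ℕ) < j then 1 else 0) +
          (d j * W j) * (if (i : ℕ) < j then 0 else 1))) = 0 := by
      simp_rw [Finset.mul_sum]
      rw [Finset.sum_comm]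
      exact Finset.sum_eq_zero fun j _ => hortho j
    have hC : C = 0 := by
      have h1 : ∑ i : Fin r, w i * (u i - (∑ j ∈ Finset.Icc 1 (r - 1),
          ((-(d j) * (1 - W j)) * (if (i : ℕ) < j then 1 else 0) +
            (d j * W j) * (if (i : ℕ) < j then 0 else 1)))) = C := by
        rw [Finset.sum_congr rfl fun i _ => by rw [hconst i]]
        rw [← Finset.sum_mul, hw1, one_mul]
      have h2 : ∑ i : Fin r, w i * (u i - (∑ j ∈ Finset.Icc 1 (r - 1),
          ((-(d j) * (1 - W j)) * (if (i : ℕ) < j then 1 else 0) +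
            (d j * W j) * (if (i : ℕ) < j then 0 else 1)))) = 0 := by
        have hms : ∀ i : Fin r, w i * (u i - (∑ j ∈ Finset.Icc 1 (r - 1),
            ((-(d j) * (1 - W j)) * (if (i : ℕ) < j then 1 else 0) +
              (d j * W j) * (if (i : ℕ) < j then 0 else 1)))) =
            w i * u i - w i * (∑ j ∈ Finset.Icc 1 (r - 1),
            ((-(d j) * (1 - W j)) * (if (i : ℕ) < j then 1 else 0) +
              (d j * W j) * (if (i : ℕ) < j then 0 else 1))) := fun i => mul_sub _ _ _
        rw [Finset.sum_congr rfl fun i _ => hms i, Finset.sum_sub_distrib, hu, hsumv, sub_zero]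
      linarith [h1, h2]
    have := hconst i
    rw [hC, sub_eq_zero] at this
    exact this
  · -- part (ii)
    intro j _
    have : ∀ i : Fin r, w i *
        ((-(d j) * (1 - W j)) * (if (i : ℕ) < j then 1 else 0) +
          (d j * W j) * (if (i : ℕ) < j then 0 else 1)) =
        (-(d j) * (1 - W j)) * (if (i : ℕ) < j then w i else 0) +
          (d j * W j) * (w i - (if (i : ℕ) < j then w i else 0)) := by
      intro i; split <;> ring
    rw [Finset.sum_congr rfl fun i _ => this i, Finset.sum_add_distrib, ← Finset.mul_sum,
      ← Finset.mul_sum, Finset.sum_sub_distrib, hw1]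
    have hWj : (∑ i : Fin r, if (i : ℕ) < j then w i else 0) = W j := rfl
    rw [hWj]
    ring
  · -- part (iii)
    intro j _
    constructor
    · rw [abs_mul, abs_neg]
      have h1 : |1 - W j| ≤ 1 := by
        rw [abs_le]; constructor <;> [linarith [hW1 j]; linarith [hW0 j]]
      calc |d j| * |1 - W j| ≤ |d j| * 1 := by
            exact mul_le_mul_of_nonneg_left h1 (abs_nonneg _)
        _ = |d j| := mul_one _
        _ ≤ 2 * M := hd j
    · rw [abs_mul]
      have h1 : |W j| ≤ 1 := by
        rw [abs_le]; constructor <;> [linarith [hW0 j]; linarith [hW1 j]]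
      calc |d j| * |W j| ≤ |d j| * 1 := mul_le_mul_of_nonneg_left h1 (abs_nonneg _)
        _ = |d j| := mul_one _
        _ ≤ 2 * M := hd j
end
end

section
/- Let S be a finite set with |S| = d, let ℙ_j (j ∈ S) be Borel probability measures on [0,1] each admitting a density bounded below by p_L > 0, and let ℙ^ind = ⊗_{j ∈ S} ℙ_j on [0,1]^d. For an integer r ≥ 1, let 𝒫_j^EP be the equal-probability partition of [0,1] into the r intervals (q_{j,ℓ−1}, q_{j,ℓ}] determined by the ℓ/r-quantiles q_{j,ℓ} of ℙ_j, and for 𝓵 ∈ {1,…,r}^d let I_𝓵 = ∏_{j∈S} I_{j,ℓ_j} be the corresponding product cell. Let g : [0,1]^d → ℝ be α-Hölder with constant ‖g‖_{H^α} for some α ∈ (0,1], and suppose g satisfies the ℙ^ind-identifiability condition: for every j ∈ S and every value of the remaining coordinates, ∫ g dℙ_j = 0. Define γ_𝓵 = (1/ℙ^ind(I_𝓵)) ∫_{I_𝓵} g dℙ^ind and f(x) = Σ_𝓵 γ_𝓵 𝟙(x ∈ I_𝓵). Then: (i) f satisfies the ℙ^ind-identifiability condition, i.e. for every j ∈ S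 and every 𝓵 with its j-th coordinate removed, Σ_{k=1}^r γ_{𝓵 with j-th entry k} ℙ_j(I_{j,k}) = 0; and (ii) sup_{x ∈ [0,1]^d} |g(x) − f(x)| ≤ ‖g‖_{H^α} (√d / (r p_L))^α. -/
open MeasureTheory Finset

noncomputable section

lemma my_meas_singleton {μ : Measure ℝ} {dens : ℝ → ENNReal}
    (hdens : μ = MeasureTheory.volume.withDensity dens) (t : ℝ) : μ {t} = 0 := by
  rw [hdens, withDensity_apply _ (measurableSet_singleton t),
    Measure.restrict_eq_zero.mpr (by simp), lintegral_zero_measure]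

lemma my_meas_Ioc_lower {μ : Measure ℝ} {dens : ℝ → ENNReal} {pL : ℝ}
    (hdens : μ = MeasureTheory.volume.withDensity dens) (hpL : 0 < pL)
    (hlow : ∀ x ∈ Set.Icc (0:ℝ) 1, ENNReal.ofReal pL ≤ dens x)
    {a b : ℝ} (ha : 0 ≤ a) (hb : b ≤ 1) :
    ENNReal.ofReal (pL * (b - a)) ≤ μ (Set.Ioc a b) := by
  rcases le_or_gt b a with h | h
  · have : pL * (b - a) ≤ 0 := mul_nonpos_of_nonneg_of_nonpos hpL.le (by linarith)
    simp [ENNReal.ofReal_eq_zero.mpr this]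
  · rw [hdens, withDensity_apply _ measurableSet_Ioc]
    calc ENNReal.ofReal (pL * (b - a))
        = ∫⁻ _ in Set.Ioc a b, ENNReal.ofReal pL := by
          rw [setLIntegral_const, Real.volume_Ioc, ← ENNReal.ofReal_mul hpL.le]
      _ ≤ ∫⁻ x in Set.Ioc a b, dens x := by
          apply setLIntegral_mono' measurableSet_Ioc
          intro x hx
          exact hlow x ⟨le_trans ha hx.1.le, le_trans hx.2 hb⟩

/-- CDF value at a quantile. -/
lemma my_cdf_quantile {μ : Measure ℝ} [IsProbabilityMeasure μ] {dens : ℝ → ENNReal}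
    (hdens : μ = MeasureTheory.volume.withDensity dens)
    (hsupp : μ (Set.Icc (0:ℝ) 1) = 1) {c : ℝ} (hc0 : 0 ≤ c) (hc1 : c ≤ 1) :
    sInf {t | t ∈ Set.Icc (0:ℝ) 1 ∧ c ≤ (μ (Set.Icc 0 t)).toReal} ∈ Set.Icc (0:ℝ) 1 ∧
      (μ (Set.Icc 0 (sInf {t | t ∈ Set.Icc (0:ℝ) 1 ∧ c ≤ (μ (Set.Icc 0 t)).toReal}))).toReal
        = c := by
  set S := {t | t ∈ Set.Icc (0:ℝ) 1 ∧ c ≤ (μ (Set.Icc 0 t)).toReal} with hS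
  have hfin : ∀ s : Set ℝ, μ s ≠ ⊤ := fun s => measure_ne_top μ s
  have h1S : (1:ℝ) ∈ S := by
    refine ⟨⟨zero_le_one, le_refl 1⟩, ?_⟩
    rw [hsupp]; simpa using hc1
  have hbdd : BddBelow S := ⟨0, fun t ht => ht.1.1⟩
  set Q := sInf S with hQ
  have hQ0 : 0 ≤ Q := le_csInf ⟨1, h1S⟩ (fun t ht => ht.1.1)
  have hQ1 : Q ≤ 1 := csInf_le hbdd h1S
  have hmono : ∀ a b : ℝ, a ≤ b → μ (Set.Icc 0 a) ≤ μ (Set.Icc 0 b) :=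
    fun a b hab => measure_mono (Set.Icc_subset_Icc_right hab)
  -- points strictly above Q (and ≤ 1) are in S
  have habove : ∀ t : ℝ, Q < t → t ≤ 1 → c ≤ (μ (Set.Icc 0 t)).toReal := by
    intro t hQt ht1
    obtain ⟨s, hsS, hst⟩ := exists_lt_of_csInf_lt ⟨1, h1S⟩ hQt
    exact le_trans hsS.2 (ENNReal.toReal_mono (hfin _) (hmono _ _ hst.le))
  -- upper bound: F Q ≤ c
  have hFQ_le : (μ (Set.Icc 0 Q)).toReal ≤ c := by
    rcases eq_or_lt_of_le hQ0 with h0 | h0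
    · have : μ (Set.Icc 0 Q) = 0 := by
        rw [← h0, Set.Icc_self]
        exact my_meas_singleton hdens 0
      rw [this]; simpa using hc0
    · -- approximate from the left
      set s : ℕ → ℝ := fun n => Q - Q * (1 / (n + 1)) with hs
      have hs_lt : ∀ n, s n < Q := by
        intro n
        have : 0 < Q * (1 / ((n:ℝ) + 1)) := by positivity
        simp only [hs, one_div] at this ⊢
        linarith
      have hs_nonneg : ∀ n, 0 ≤ s n := by
        intro n
        have h1 : Q * (1 / ((n:ℝ) + 1)) ≤ Q * 1 := by
          apply mul_le_mul_of_nonneg_left _ hQ0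
          rw [div_le_one (by positivity)]; linarith [Nat.cast_nonneg (α := ℝ) n]
        simp only [hs, one_div] at h1 ⊢
        nlinarith
      have hs_mono : Monotone (fun n => Set.Icc (0:ℝ) (s n)) := by
        intro m n hmn
        apply Set.Icc_subset_Icc_right
        have : (1:ℝ) / (n + 1) ≤ 1 / (m + 1) := by
          apply one_div_le_one_div_of_le (by positivity)
          exact_mod_cast by omega
        simp only [hs]
        nlinarith [mul_le_mul_of_nonneg_left this hQ0]
      have hs_tendsto : Filter.Tendsto s Filter.atTop (nhds Q) := by
        have h0' : Filter.Tendsto (fun n : ℕ => 1 / ((n:ℝ) + 1)) Filter.atTop (nhds 0) :=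
          tendsto_one_div_add_atTop_nhds_zero_nat
        have h2 := ((h0'.const_mul Q).const_sub Q)
        simp only [mul_zero, sub_zero] at h2
        exact h2
      have hunion : (⋃ n, Set.Icc (0:ℝ) (s n)) = Set.Ico 0 Q := by
        ext x
        simp only [Set.mem_iUnion, Set.mem_Icc, Set.mem_Ico]
        constructor
        · rintro ⟨n, hx0, hxs⟩
          exact ⟨hx0, lt_of_le_of_lt hxs (hs_lt n)⟩
        · rintro ⟨hx0, hxQ⟩
          have : ∀ᶠ n in Filter.atTop, x ≤ s n := hs_tendsto.eventually_const_le hxQ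
          obtain ⟨n, hn⟩ := this.exists
          exact ⟨n, hx0, hn⟩
      have htend : Filter.Tendsto (fun n => μ (Set.Icc 0 (s n))) Filter.atTop
          (nhds (μ (Set.Ico 0 Q))) := by
        rw [← hunion]
        exact tendsto_measure_iUnion_atTop hs_mono
      have hIco : μ (Set.Ico 0 Q) = μ (Set.Icc 0 Q) := by
        apply le_antisymm (measure_mono Set.Ico_subset_Icc_self)
        calc μ (Set.Icc 0 Q) ≤ μ (Set.Ico 0 Q ∪ {Q}) := by
              apply measure_mono; intro x hx
              rcases eq_or_lt_of_le hx.2 with h | h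
              · exact Or.inr (by simp [h])
              · exact Or.inl ⟨hx.1, h⟩
          _ ≤ μ (Set.Ico 0 Q) + μ {Q} := measure_union_le _ _
          _ = μ (Set.Ico 0 Q) := by rw [my_meas_singleton hdens Q, add_zero]
      have hle : ∀ n, μ (Set.Icc 0 (s n)) ≤ ENNReal.ofReal c := by
        intro n
        have hsn_not : s n ∉ S := fun hmem => absurd (csInf_le hbdd hmem) (not_le.mpr (hs_lt n))
        have hsn_in : s n ∈ Set.Icc (0:ℝ) 1 := ⟨hs_nonneg n, le_trans (hs_lt n).le hQ1⟩
        have : ¬ c ≤ (μ (Set.Icc 0 (s n))).toReal := fun hcc => hsn_not ⟨hsn_in, hcc⟩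
        rw [← ENNReal.ofReal_toReal (hfin (Set.Icc 0 (s n)))]
        exact ENNReal.ofReal_le_ofReal (not_le.mp this).le
      have : μ (Set.Ico 0 Q) ≤ ENNReal.ofReal c := le_of_tendsto' htend hle
      rw [hIco] at this
      calc (μ (Set.Icc 0 Q)).toReal ≤ (ENNReal.ofReal c).toReal :=
            ENNReal.toReal_mono ENNReal.ofReal_ne_top this
        _ = c := ENNReal.toReal_ofReal hc0
  -- lower bound: c ≤ F Q
  have hFQ_ge : c ≤ (μ (Set.Icc 0 Q)).toReal := by
    rcases eq_or_lt_of_le hQ1 with h1 | h1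
    · rw [h1, hsupp]; simpa using hc1
    · set u : ℕ → ℝ := fun n => Q + (1 - Q) * (1 / (n + 1)) with hu
      have hu_gt : ∀ n, Q < u n := by
        intro n
        have : 0 < (1 - Q) * (1 / ((n:ℝ) + 1)) := by
          apply mul_pos (by linarith) (by positivity)
        simp only [hu, one_div] at this ⊢
        linarith
      have hu_le1 : ∀ n, u n ≤ 1 := by
        intro n
        have h1' : (1 - Q) * (1 / ((n:ℝ) + 1)) ≤ (1 - Q) * 1 := by
          apply mul_le_mul_of_nonneg_left _ (by linarith)
          rw [div_le_one (by positivity)]; linarith [Nat.cast_nonneg (α := ℝ) n]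
        simp only [hu, one_div] at h1' ⊢
        nlinarith
      have hu_anti : Antitone (fun n => Set.Icc (0:ℝ) (u n)) := by
        intro m n hmn
        apply Set.Icc_subset_Icc_right
        have : (1:ℝ) / (n + 1) ≤ 1 / (m + 1) := by
          apply one_div_le_one_div_of_le (by positivity)
          exact_mod_cast by omega
        simp only [hu]
        nlinarith [mul_le_mul_of_nonneg_left this (by linarith : (0:ℝ) ≤ 1 - Q)]
      have hu_tendsto : Filter.Tendsto u Filter.atTop (nhds Q) := by
        have h0' : Filter.Tendsto (fun n : ℕ => 1 / ((n:ℝ) + 1)) Filter.atTop (nhds 0) :=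
          tendsto_one_div_add_atTop_nhds_zero_nat
        have h2 := (h0'.const_mul (1 - Q)).const_add Q
        simp only [mul_zero, add_zero] at h2
        exact h2
      have hinter : (⋂ n, Set.Icc (0:ℝ) (u n)) = Set.Icc 0 Q := by
        ext x
        simp only [Set.mem_iInter, Set.mem_Icc]
        constructor
        · rintro h
          refine ⟨(h 0).1, ?_⟩
          exact ge_of_tendsto' hu_tendsto (fun n => (h n).2)
        · rintro ⟨hx0, hxQ⟩ n
          exact ⟨hx0, le_trans hxQ (hu_gt n).le⟩
      have htend : Filter.Tendsto (fun n => μ (Set.Icc 0 (u n))) Filter.atTop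
          (nhds (μ (Set.Icc 0 Q))) := by
        rw [← hinter]
        apply tendsto_measure_iInter_atTop
          (fun n => (measurableSet_Icc).nullMeasurableSet) hu_anti ⟨0, hfin _⟩
      have hge : ∀ n, ENNReal.ofReal c ≤ μ (Set.Icc 0 (u n)) := by
        intro n
        have := habove (u n) (hu_gt n) (hu_le1 n)
        rw [← ENNReal.ofReal_toReal (hfin (Set.Icc 0 (u n)))]
        exact ENNReal.ofReal_le_ofReal this
      have : ENNReal.ofReal c ≤ μ (Set.Icc 0 Q) := ge_of_tendsto' htend hge
      calc c = (ENNReal.ofReal c).toReal := (ENNReal.toReal_ofReal hc0).symm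
        _ ≤ (μ (Set.Icc 0 Q)).toReal := ENNReal.toReal_mono (hfin _) this
  exact ⟨⟨hQ0, hQ1⟩, le_antisymm hFQ_le hFQ_ge⟩

lemma my_integral_pi_eq_zero_of_slices {ι : Type*} [Fintype ι] [DecidableEq ι]
    (P : ι → Measure ℝ) [∀ i, SigmaFinite (P i)]
    (h : (ι → ℝ) → ℝ) (hint : Integrable h (Measure.pi P)) (j : ι)
    (hslice : ∀ x : ι → ℝ, ∫ t, h (Function.update x j t) ∂(P j) = 0) :
    ∫ x, h x ∂(Measure.pi P) = 0 := by
  classical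
  haveI : Unique {i : ι // i = j} := ⟨⟨⟨j, rfl⟩⟩, by rintro ⟨x, rfl⟩; rfl⟩
  have mp := measurePreserving_piEquivPiSubtypeProd (fun i : ι => P i) (fun i => i = j)
  have h1 := (mp.symm _).integral_comp
    (MeasurableEquiv.piEquivPiSubtypeProd (fun _ : ι => ℝ)
      (fun i => i = j)).symm.measurableEmbedding h
  have hint2 := ((mp.symm _).integrable_comp_emb
    (MeasurableEquiv.piEquivPiSubtypeProd (fun _ : ι => ℝ)
      (fun i => i = j)).symm.measurableEmbedding).mpr hint
  show ∫ x, h x ∂(Measure.pi fun i : ι => P i) = 0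
  rw [← h1, integral_prod_symm]
  rotate_left
  · exact hint2
  have hinner : ∀ y : {i : ι // ¬ i = j} → ℝ,
      (∫ x, h ((MeasurableEquiv.piEquivPiSubtypeProd (fun _ : ι => ℝ)
          (fun i => i = j)).symm (x, y)) ∂(Measure.pi fun i : {i : ι // i = j} => P i.1))
        = 0 := by
    intro y
    set xy : ι → ℝ := fun i => if hi : i = j then 0 else y ⟨i, hi⟩ with hxy
    have h2 := (measurePreserving_piUnique (fun i : {i : ι // i = j} => P i.1)).integral_comp
        (MeasurableEquiv.piUnique _).measurableEmbedding
        (fun t => h ((MeasurableEquiv.piEquivPiSubtypeProd (fun _ : ι => ℝ)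
          (fun i => i = j)).symm ((MeasurableEquiv.piUnique
          (fun _ : {i : ι // i = j} => ℝ)).symm t, y)))
    simp only [MeasurableEquiv.symm_apply_apply] at h2
    rw [h2]
    have h3 : ∀ t : ℝ,
        h ((MeasurableEquiv.piEquivPiSubtypeProd (fun _ : ι => ℝ)
            (fun i => i = j)).symm ((MeasurableEquiv.piUnique
            (fun _ : {i : ι // i = j} => ℝ)).symm t, y))
          = h (Function.update xy j t) := by
      intro t
      congr 1
      funext i
      by_cases hi : i = j
      · subst hi
        simp [MeasurableEquiv.piEquivPiSubtypeProd, Equiv.piEquivPiSubtypeProd,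
          MeasurableEquiv.piUnique, Equiv.piUnique]
      · simp [MeasurableEquiv.piEquivPiSubtypeProd, Equiv.piEquivPiSubtypeProd, hi,
          Function.update_of_ne hi, hxy]
    simp_rw [h3]
    rw [show P ((default : {i : ι // i = j}) : ι) = P j from by
      rw [(default : {i : ι // i = j}).2]]
    exact hslice xy
  refine Eq.trans (integral_congr_ae (Filter.Eventually.of_forall fun y => ?_))
    (integral_zero _ _)
  beta_reduce
  have : (Fintype.subtypeEq j) = (Subtype.fintype fun i : ι => i = j) :=
    Subsingleton.elim _ _
  rw [← this]
  exact hinner y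

lemma my_setIntegral_pi_eq_zero {ι : Type*} [Fintype ι] [DecidableEq ι]
    (P : ι → Measure ℝ) [∀ i, IsProbabilityMeasure (P i)]
    (J : ι → Set ℝ) (hJm : ∀ i, MeasurableSet (J i)) (hJsub : ∀ i, J i ⊆ Set.Icc 0 1)
    (j : ι) (hJj : J j = Set.Icc 0 1) (hsuppj : P j (Set.Icc (0:ℝ) 1) = 1)
    (g : (ι → ℝ) → ℝ) (hgm : Measurable g) (C : ℝ)
    (hbound : ∀ x : ι → ℝ, (∀ i, x i ∈ Set.Icc (0:ℝ) 1) → |g x| ≤ C)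
    (hident : ∀ x : ι → ℝ, (∀ k, x k ∈ Set.Icc (0:ℝ) 1) →
      ∫ t, g (Function.update x j t) ∂(P j) = 0) :
    ∫ x in Set.univ.pi J, g x ∂(Measure.pi P) = 0 := by
  classical
  rw [← integral_indicator (MeasurableSet.univ_pi hJm)]
  apply my_integral_pi_eq_zero_of_slices P _ _ j
  · -- slices
    intro x
    by_cases hx : ∀ i, i ≠ j → x i ∈ J i
    · have heq : ∀ t : ℝ, Set.indicator (Set.univ.pi J) g (Function.update x j t) =
          Set.indicator (Set.Icc 0 1) (fun s => g (Function.update x j s)) t := by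
        intro t
        by_cases ht : t ∈ Set.Icc (0:ℝ) 1
        · rw [Set.indicator_of_mem ht, Set.indicator_of_mem]
          rw [Set.mem_univ_pi]
          intro i
          by_cases hi : i = j
          · subst hi; rw [Function.update_self, hJj]; exact ht
          · rw [Function.update_of_ne hi]; exact hx i hi
        · rw [Set.indicator_of_notMem ht, Set.indicator_of_notMem]
          rw [Set.mem_univ_pi]
          push_neg
          exact ⟨j, by rw [Function.update_self, hJj]; exact ht⟩
      simp_rw [heq]
      rw [integral_indicator measurableSet_Icc]
      have hres : (P j).restrict (Set.Icc (0:ℝ) 1) = P j := by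
        apply Measure.restrict_eq_self_of_ae_mem
        have : P j (Set.Icc (0:ℝ) 1)ᶜ = 0 := by
          rw [measure_compl measurableSet_Icc (measure_ne_top _ _), hsuppj, measure_univ,
            tsub_self]
        exact (MeasureTheory.ae_iff.mpr (by simpa [Set.compl_def] using this))
      rw [hres]
      set x' : ι → ℝ := fun i => if i = j then 0 else x i with hx'
      have hupd : ∀ t : ℝ, Function.update x j t = Function.update x' j t := by
        intro t; funext i
        by_cases hi : i = j
        · subst hi; simp
        · simp [Function.update_of_ne hi, hx', hi]
      simp_rw [hupd]
      apply hident
      intro k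
      by_cases hk : k = j
      · subst hk; simp only [hx', if_pos rfl]; exact ⟨le_refl 0, zero_le_one⟩
      · simp only [hx', if_neg hk]; exact hJsub k (hx k hk)
    · push_neg at hx
      obtain ⟨i, hij, hxi⟩ := hx
      have heq : ∀ t : ℝ, Set.indicator (Set.univ.pi J) g (Function.update x j t) = 0 := by
        intro t
        apply Set.indicator_of_notMem
        rw [Set.mem_univ_pi]
        push_neg
        exact ⟨i, by rw [Function.update_of_ne hij]; exact hxi⟩
      simp_rw [heq]
      simp
  · -- integrability
    constructor
    · exact (hgm.indicator (MeasurableSet.univ_pi hJm)).aestronglyMeasurable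
    · apply HasFiniteIntegral.of_bounded (C := max C 0)
      apply Filter.Eventually.of_forall
      intro x
      rw [Real.norm_eq_abs]
      by_cases hxB : x ∈ Set.univ.pi J
      · rw [Set.indicator_of_mem hxB]
        refine le_trans (hbound x fun i => hJsub i (hxB i (Set.mem_univ i))) (le_max_left _ _)
      · rw [Set.indicator_of_notMem hxB]
        simp

/-- The multinary-product tree with coordinate partitions `P j 0, …, P j (φ j − 1)` and
heights `γ`: `f(x) = ∑_𝓵 γ_𝓵 ∏_j 𝟙(x_j ∈ I_{j,ℓ_j})`. -/
def treeFun {ι : Type*} [Fintype ι] [DecidableEq ι] (φ : ι → ℕ) (P : ι → ℕ → Set ℝ)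
    (γ : (ι → ℕ) → ℝ) (x : ι → ℝ) : ℝ :=
  ∑ 𝓵 ∈ Fintype.piFinset (fun j => Finset.range (φ j)),
    γ 𝓵 * ∏ j, Set.indicator (P j (𝓵 j)) (fun _ => (1 : ℝ)) (x j)

/-- the equal-probability product tree, whose heights are the conditional
means of an α-Hölder, `ℙ^ind`-identifiable function `g` over the quantile product cells,
is itself `ℙ^ind`-identifiable and approximates `g` uniformly on `[0,1]^d` with error at
most `‖g‖_{H^α} (√d/(r p_L))^α`. -/
theorem stmt6 {ι : Type*} [Fintype ι] [DecidableEq ι]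
    (P : ι → Measure ℝ) [∀ j, IsProbabilityMeasure (P j)]
    (dens : ι → ℝ → ENNReal) (pL : ℝ) (hpL : 0 < pL)
    (hdens : ∀ j, P j = MeasureTheory.volume.withDensity (dens j))
    (hlow : ∀ j, ∀ x ∈ Set.Icc (0 : ℝ) 1, ENNReal.ofReal pL ≤ dens j x)
    (hsupp : ∀ j, P j (Set.Icc (0 : ℝ) 1) = 1)
    (r : ℕ) (hr : 1 ≤ r)
    -- the `ℓ/r`-quantiles of each marginal
    (q : ι → ℕ → ℝ)
    (hq : ∀ j, ∀ ℓ ≤ r, q j ℓ =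
      sInf {t | t ∈ Set.Icc (0 : ℝ) 1 ∧ (ℓ : ℝ) / r ≤ (P j (Set.Icc 0 t)).toReal})
    -- the equal-probability partition determined by the quantiles
    (I : ι → ℕ → Set ℝ)
    (hI0 : ∀ j, I j 0 = Set.Icc (q j 0) (q j 1))
    (hI : ∀ j, ∀ k, 1 ≤ k → I j k = Set.Ioc (q j k) (q j (k + 1)))
    -- the α-Hölder, identifiable target function
    (g : (ι → ℝ) → ℝ) (hgm : Measurable g)
    (α H : ℝ) (hα : 0 < α) (hα1 : α ≤ 1) (hH : 0 ≤ H)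
    (hHolder : ∀ x y : ι → ℝ, (∀ j, x j ∈ Set.Icc (0 : ℝ) 1) →
        (∀ j, y j ∈ Set.Icc (0 : ℝ) 1) →
        |g x - g y| ≤ H * (Real.sqrt (∑ j, (x j - y j) ^ 2)) ^ α)
    (hident : ∀ j : ι, ∀ x : ι → ℝ, (∀ k, x k ∈ Set.Icc (0 : ℝ) 1) →
        ∫ t, g (Function.update x j t) ∂(P j) = 0)
    -- heights: conditional means of `g` over the product cells
    (γ : (ι → ℕ) → ℝ)
    (hγ : ∀ 𝓵 : ι → ℕ, γ 𝓵 =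
      (∫ x in Set.univ.pi (fun j => I j (𝓵 j)), g x ∂(Measure.pi P)) /
        ((Measure.pi P) (Set.univ.pi fun j => I j (𝓵 j))).toReal) :
    -- (i) the heights satisfy the populational identifiability condition
    (∀ j : ι, ∀ 𝓵 ∈ Fintype.piFinset (fun _ : ι => Finset.range r),
        ∑ k ∈ Finset.range r,
          γ (Function.update 𝓵 j k) * (P j (I j k)).toReal = 0) ∧
    -- (ii) uniform approximation on the unit cube
    (∀ x : ι → ℝ, (∀ j, x j ∈ Set.Icc (0 : ℝ) 1) →
        |g x - treeFun (fun _ : ι => r) I γ x| ≤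
          H * (Real.sqrt (Fintype.card ι) / (r * pL)) ^ α) := by
  classical
  have hr0 : (0:ℝ) < r := by exact_mod_cast hr
  -- quantile facts
  have hquant : ∀ j : ι, ∀ ℓ, ℓ ≤ r → q j ℓ ∈ Set.Icc (0:ℝ) 1 ∧
      (P j (Set.Icc 0 (q j ℓ))).toReal = (ℓ:ℝ) / r := by
    intro j ℓ hℓ
    have h := my_cdf_quantile (hdens j) (hsupp j) (c := (ℓ:ℝ)/r)
      (by positivity) (by rw [div_le_one hr0]; exact_mod_cast hℓ)
    rw [← hq j ℓ hℓ] at h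
    exact h
  have hq0 : ∀ j, q j 0 = 0 := by
    intro j
    rw [hq j 0 (Nat.zero_le r)]
    have : {t | t ∈ Set.Icc (0:ℝ) 1 ∧ ((0:ℕ):ℝ) / r ≤ (P j (Set.Icc 0 t)).toReal}
        = Set.Icc (0:ℝ) 1 := by
      ext t; simp [ENNReal.toReal_nonneg]
    rw [this, csInf_Icc zero_le_one]
  have hqr : ∀ j, q j r = 1 := by
    intro j
    rw [hq j r (le_refl r)]
    have hset : {t | t ∈ Set.Icc (0:ℝ) 1 ∧ ((r:ℕ):ℝ) / r ≤ (P j (Set.Icc 0 t)).toReal}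
        = {1} := by
      ext t
      simp only [Set.mem_setOf_eq, Set.mem_singleton_iff, Set.mem_Icc]
      constructor
      · rintro ⟨⟨ht0, ht1⟩, hge⟩
        by_contra hne
        have htlt : t < 1 := lt_of_le_of_ne ht1 hne
        -- show F t < 1
        have hsplit : P j (Set.Icc (0:ℝ) 1) = P j (Set.Icc 0 t) + P j (Set.Ioc t 1) := by
          rw [← Set.Icc_union_Ioc_eq_Icc ht0 ht1]
          exact measure_union (Set.disjoint_left.mpr fun y hy hy' => absurd hy'.1 (not_lt.mpr hy.2)) measurableSet_Ioc
        have hIoc_lb : pL * (1 - t) ≤ (P j (Set.Ioc t 1)).toReal := by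
          have hlb := my_meas_Ioc_lower (hdens j) hpL (hlow j) ht0 (le_refl 1)
          calc pL * (1 - t) = (ENNReal.ofReal (pL * (1 - t))).toReal :=
                (ENNReal.toReal_ofReal (by nlinarith)).symm
            _ ≤ (P j (Set.Ioc t 1)).toReal := ENNReal.toReal_mono (measure_ne_top _ _) hlb
        have hadd : (P j (Set.Icc 0 t)).toReal + (P j (Set.Ioc t 1)).toReal = 1 := by
          rw [← ENNReal.toReal_add (measure_ne_top _ _) (measure_ne_top _ _), ← hsplit,
            hsupp j, ENNReal.toReal_one]
        have : ((r:ℕ):ℝ) / r = 1 := by field_simp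
        rw [this] at hge
        nlinarith
      · rintro rfl
        refine ⟨⟨zero_le_one, le_refl 1⟩, ?_⟩
        rw [hsupp j]
        simp [div_self (ne_of_gt hr0)]
    rw [hset, csInf_singleton]
  have hqmono : ∀ j, ∀ k l : ℕ, k ≤ l → l ≤ r → q j k ≤ q j l := by
    intro j k l hkl hlr
    rw [hq j k (le_trans hkl hlr), hq j l hlr]
    apply csInf_le_csInf
    · exact ⟨0, fun t ht => ht.1.1⟩
    · refine ⟨1, ⟨zero_le_one, le_refl 1⟩, ?_⟩
      rw [hsupp j]
      simp only [ENNReal.toReal_one]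
      rw [div_le_one hr0]
      exact_mod_cast hlr
    · intro t ht
      refine ⟨ht.1, le_trans ?_ ht.2⟩
      exact (div_le_div_iff_of_pos_right hr0).mpr (by exact_mod_cast hkl)
  -- interval facts
  have hImeasSet : ∀ j k, MeasurableSet (I j k) := by
    intro j k
    match k with
    | 0 => rw [hI0]; exact measurableSet_Icc
    | (k+1) => rw [hI j (k+1) (Nat.succ_le_succ (Nat.zero_le k))]; exact measurableSet_Ioc
  have hIsub : ∀ j k, I j k ⊆ Set.Icc (q j k) (q j (k+1)) := by
    intro j k
    match k with
    | 0 => rw [hI0]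
    | (k+1) =>
      rw [hI j (k+1) (Nat.succ_le_succ (Nat.zero_le k))]
      exact Set.Ioc_subset_Icc_self
  have hIcube : ∀ j k, k < r → I j k ⊆ Set.Icc 0 1 := by
    intro j k hk
    refine subset_trans (hIsub j k) (Set.Icc_subset_Icc ?_ ?_)
    · exact (hquant j k hk.le).1.1
    · exact (hquant j (k+1) hk).1.2
  have hIoc : ∀ j k, k < r → (P j (Set.Ioc (q j k) (q j (k+1)))).toReal = 1/r := by
    intro j k hk
    have hqk0 : 0 ≤ q j k := (hquant j k hk.le).1.1
    have hqkk : q j k ≤ q j (k+1) := hqmono j k (k+1) (Nat.le_succ k) hk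
    have hdiffset : Set.Ioc (q j k) (q j (k+1)) =
        Set.Icc 0 (q j (k+1)) \ Set.Icc 0 (q j k) := by
      ext t
      simp only [Set.mem_Ioc, Set.mem_diff, Set.mem_Icc, not_and, not_le]
      constructor
      · rintro ⟨h1, h2⟩
        exact ⟨⟨le_trans hqk0 h1.le, h2⟩, fun _ => h1⟩
      · rintro ⟨⟨h0, h2⟩, h3⟩
        exact ⟨h3 h0, h2⟩
    rw [hdiffset, measure_diff (Set.Icc_subset_Icc_right hqkk)
      measurableSet_Icc.nullMeasurableSet (measure_ne_top _ _),
      ENNReal.toReal_sub_of_le (measure_mono (Set.Icc_subset_Icc_right hqkk))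
        (measure_ne_top _ _), (hquant j (k+1) hk).2, (hquant j k hk.le).2]
    push_cast
    field_simp
    ring
  have hImeas : ∀ j k, k < r → (P j (I j k)).toReal = 1/r := by
    intro j k hk
    match k with
    | 0 =>
      rw [hI0, hq0 j, (hquant j 1 hk).2]
      norm_num
    | (k+1) =>
      rw [hI j (k+1) (Nat.succ_le_succ (Nat.zero_le k))]
      exact hIoc j (k+1) hk
  have hlen : ∀ j k, k < r → q j (k+1) - q j k ≤ 1/(r*pL) := by
    intro j k hk
    have hqk0 : 0 ≤ q j k := (hquant j k hk.le).1.1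
    have hqk1 : q j (k+1) ≤ 1 := (hquant j (k+1) hk).1.2
    have hqkk : q j k ≤ q j (k+1) := hqmono j k (k+1) (Nat.le_succ k) hk
    have hlb := my_meas_Ioc_lower (hdens j) hpL (hlow j) hqk0 hqk1
    have h2 : pL * (q j (k+1) - q j k) ≤ 1/r := by
      calc pL * (q j (k+1) - q j k)
          = (ENNReal.ofReal (pL * (q j (k+1) - q j k))).toReal :=
            (ENNReal.toReal_ofReal (by nlinarith)).symm
        _ ≤ (P j (Set.Ioc (q j k) (q j (k+1)))).toReal :=
            ENNReal.toReal_mono (measure_ne_top _ _) hlb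
        _ = 1/r := hIoc j k hk
    rw [le_div_iff₀ (by positivity : (0:ℝ) < (r:ℝ))] at h2
    rw [le_div_iff₀ (by positivity : (0:ℝ) < (r:ℝ)*pL)]
    nlinarith
  have hIdisj : ∀ j k k', k < r → k' < r → k ≠ k' → ∀ x, x ∈ I j k → x ∉ I j k' := by
    have key : ∀ j k k', k < k' → k' < r → ∀ x, x ∈ I j k → x ∉ I j k' := by
      intro j k k' hkk' hk' x hx hx'
      have h1 : x ≤ q j (k+1) := ((hIsub j k) hx).2
      have h2 : q j k' < x := by
        have : I j k' = Set.Ioc (q j k') (q j (k'+1)) := hI j k' (by omega)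
        rw [this] at hx'
        exact hx'.1
      have h3 : q j (k+1) ≤ q j k' := hqmono j (k+1) k' (by omega) hk'.le
      linarith
    intro j k k' hk hk' hne x hx hx'
    rcases lt_or_gt_of_ne hne with h | h
    · exact key j k k' h hk' x hx hx'
    · exact key j k' k h hk x hx' hx
  have hIcover : ∀ j, ∀ x : ℝ, x ∈ Set.Icc (0:ℝ) 1 → ∃ k, k < r ∧ x ∈ I j k := by
    intro j x hx
    by_cases hx1 : x ≤ q j 1
    · refine ⟨0, hr, ?_⟩
      rw [hI0, hq0 j]
      exact ⟨hx.1, hx1⟩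
    · push_neg at hx1
      have hr2 : 2 ≤ r := by
        by_contra hr2
        have hre : r = 1 := by omega
        subst hre
        have := hqr j
        linarith [hx.2]
      set Pr : ℕ → Prop := fun m => q j m < x with hPr
      set k := Nat.findGreatest Pr (r-1) with hk
      have hP1 : Pr 1 := hx1
      have h1r : 1 ≤ r - 1 := by omega
      have hk1 : 1 ≤ k := Nat.le_findGreatest h1r hP1
      have hkr : k ≤ r - 1 := Nat.findGreatest_le (r-1)
      have hqkx : q j k < x := Nat.findGreatest_spec h1r hP1
      have hxk1 : x ≤ q j (k+1) := by
        by_cases hkeq : k = r - 1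
        · rw [show k + 1 = r by omega, hqr j]
          exact hx.2
        · have := Nat.findGreatest_is_greatest (P := Pr) (n := r-1)
            (k := k+1) (by omega) (by omega)
          rw [hPr] at this
          exact not_lt.mp this
      refine ⟨k, by omega, ?_⟩
      rw [hI j k hk1]
      exact ⟨hqkx, hxk1⟩
  -- bound for g on the cube
  set d := Fintype.card ι with hd
  set C : ℝ := |g (fun _ => 0)| + H * (Real.sqrt d) ^ α with hC
  have hgbd : ∀ y : ι → ℝ, (∀ i, y i ∈ Set.Icc (0:ℝ) 1) → |g y| ≤ C := by
    intro y hy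
    have hzero : ∀ i : ι, (fun _ : ι => (0:ℝ)) i ∈ Set.Icc (0:ℝ) 1 :=
      fun i => ⟨le_refl 0, zero_le_one⟩
    have hhol := hHolder y (fun _ => 0) hy hzero
    have hsum : (∑ i, (y i - (fun _ : ι => (0:ℝ)) i)^2) ≤ (d:ℝ) := by
      calc (∑ i, (y i - (fun _ : ι => (0:ℝ)) i)^2) = ∑ i, (y i)^2 := by simp
        _ ≤ ∑ _i : ι, (1:ℝ) :=
            Finset.sum_le_sum fun i _ => by nlinarith [(hy i).1, (hy i).2]
        _ = (d:ℝ) := by simp [hd, Finset.card_univ]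
    have hrp : (Real.sqrt (∑ i, (y i - (fun _ : ι => (0:ℝ)) i)^2))^α ≤ (Real.sqrt d)^α :=
      Real.rpow_le_rpow (Real.sqrt_nonneg _) (Real.sqrt_le_sqrt hsum) hα.le
    calc |g y| = |(g y - g (fun _ => 0)) + g (fun _ => 0)| := by ring_nf
      _ ≤ |g y - g (fun _ => 0)| + |g (fun _ => 0)| := abs_add_le _ _
      _ ≤ H * (Real.sqrt (∑ i, (y i - (fun _ : ι => (0:ℝ)) i)^2))^α + |g (fun _ => 0)| := by
          linarith
      _ ≤ H * (Real.sqrt d)^α + |g (fun _ => 0)| := by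
          have := mul_le_mul_of_nonneg_left hrp hH
          linarith
      _ = C := by rw [hC]; ring
  -- cell measure
  have hcellm : ∀ (𝓁 : ι → ℕ), (∀ i, 𝓁 i < r) →
      ((Measure.pi P) (Set.univ.pi fun i => I i (𝓁 i))).toReal = (1/(r:ℝ))^d := by
    intro 𝓁 h𝓁
    rw [Measure.pi_pi, ENNReal.toReal_prod,
      Finset.prod_congr rfl (fun i _ => hImeas i (𝓁 i) (h𝓁 i)),
      Finset.prod_const, Finset.card_univ]
  have hcpos : (0:ℝ) < (1/(r:ℝ))^d := by positivity
  -- cell integrability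
  have hintOn : ∀ (𝓁 : ι → ℕ), (∀ i, 𝓁 i < r) →
      IntegrableOn g (Set.univ.pi fun i => I i (𝓁 i)) (Measure.pi P) := by
    intro 𝓁 h𝓁
    apply Measure.integrableOn_of_bounded (M := C) (measure_ne_top _ _)
      hgm.aestronglyMeasurable
    have hmem := ae_restrict_mem (μ := Measure.pi P) (MeasurableSet.univ_pi (fun i => hImeasSet i (𝓁 i)))
    filter_upwards [hmem] with y hy
    rw [Real.norm_eq_abs]
    exact hgbd y (fun i => hIcube i (𝓁 i) (h𝓁 i) (hy i (Set.mem_univ i)))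
  constructor
  · -- part (i): identifiability of the heights
    intro j 𝓵 h𝓵
    have h𝓵' : ∀ i, 𝓵 i < r := fun i => Finset.mem_range.mp (Fintype.mem_piFinset.mp h𝓵 i)
    set J : ι → Set ℝ := fun i => if i = j then Set.Icc 0 1 else I i (𝓵 i) with hJ
    have hupdlt : ∀ k, k < r → ∀ i, Function.update 𝓵 j k i < r := by
      intro k hk i
      by_cases hi : i = j
      · subst hi; rw [Function.update_self]; exact hk
      · rw [Function.update_of_ne hi]; exact h𝓵' i
    have hterm : ∀ k ∈ Finset.range r,
        γ (Function.update 𝓵 j k) * (P j (I j k)).toReal =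
        (∫ x in Set.univ.pi (fun i => I i (Function.update 𝓵 j k i)), g x ∂(Measure.pi P))
          * ((1/(r:ℝ)) / (1/(r:ℝ))^d) := by
      intro k hk
      rw [hγ, hcellm _ (hupdlt k (Finset.mem_range.mp hk)),
        hImeas j k (Finset.mem_range.mp hk)]
      ring
    rw [Finset.sum_congr rfl hterm, ← Finset.sum_mul]
    have hsum0 : (∑ k ∈ Finset.range r, ∫ x in Set.univ.pi
        (fun i => I i (Function.update 𝓵 j k i)), g x ∂(Measure.pi P)) = 0 := by
      rw [← integral_biUnion_finset (Finset.range r)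
        (fun k _ => MeasurableSet.univ_pi (fun i => hImeasSet i (Function.update 𝓵 j k i)))
        ?_ (fun k hk => hintOn _ (hupdlt k (Finset.mem_range.mp hk)))]
      · have hUnion : (⋃ k ∈ Finset.range r,
            Set.univ.pi (fun i => I i (Function.update 𝓵 j k i))) = Set.univ.pi J := by
          ext x
          simp only [Set.mem_iUnion, Set.mem_univ_pi, Finset.mem_range, exists_prop]
          constructor
          · rintro ⟨k, hk, hxk⟩ i
            by_cases hi : i = j
            · subst hi
              simp only [hJ, if_pos rfl]
              have h1 := hxk i; rw [Function.update_self] at h1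
              exact hIcube i k hk h1
            · simp only [hJ, if_neg hi]
              have h1 := hxk i; rw [Function.update_of_ne hi] at h1; exact h1
          · intro hxJ
            have hxj : x j ∈ Set.Icc (0:ℝ) 1 := by
              have := hxJ j; simpa [hJ] using this
            obtain ⟨k, hk, hxk⟩ := hIcover j (x j) hxj
            refine ⟨k, hk, fun i => ?_⟩
            by_cases hi : i = j
            · subst hi; rw [Function.update_self]; exact hxk
            · rw [Function.update_of_ne hi]
              have := hxJ i; simpa [hJ, if_neg hi] using this
        rw [hUnion]
        apply my_setIntegral_pi_eq_zero P J ?_ ?_ j ?_ (hsupp j) g hgm C hgbd (hident j)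
        · intro i
          by_cases hi : i = j
          · simp only [hJ, if_pos hi]; exact measurableSet_Icc
          · simp only [hJ, if_neg hi]; exact hImeasSet i (𝓵 i)
        · intro i
          by_cases hi : i = j
          · simp only [hJ, if_pos hi]; exact subset_rfl
          · simp only [hJ, if_neg hi]; exact hIcube i (𝓵 i) (h𝓵' i)
        · simp only [hJ, if_pos rfl]
      · -- pairwise disjointness
        intro a ha b hb hab
        have har : a < r := Finset.mem_range.mp (Finset.mem_coe.mp ha)
        have hbr : b < r := Finset.mem_range.mp (Finset.mem_coe.mp hb)
        rw [Function.onFun]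
        rw [Set.disjoint_left]
        intro x hxa hxb
        have h1 := hxa j (Set.mem_univ j); simp only [Function.update_self] at h1
        have h2 := hxb j (Set.mem_univ j); simp only [Function.update_self] at h2
        exact hIdisj j a b har hbr hab (x j) h1 h2
    rw [hsum0, zero_mul]
  · -- part (ii): uniform approximation
    intro x hx
    have hch : ∀ j : ι, ∃ k, k < r ∧ x j ∈ I j k := fun j => hIcover j (x j) (hx j)
    choose ℓx hℓxr hℓxmem using hch
    have hmemfin : ℓx ∈ Fintype.piFinset (fun _ : ι => Finset.range r) :=
      Fintype.mem_piFinset.mpr fun i => Finset.mem_range.mpr (hℓxr i)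
    have hzero : ∀ 𝓵 ∈ Fintype.piFinset (fun _ : ι => Finset.range r), 𝓵 ≠ ℓx →
        γ 𝓵 * ∏ i, Set.indicator (I i (𝓵 i)) (fun _ => (1 : ℝ)) (x i) = 0 := by
      intro 𝓵 h𝓵 hne
      obtain ⟨i0, hi0⟩ := Function.ne_iff.mp hne
      have h𝓵i : 𝓵 i0 < r := Finset.mem_range.mp (Fintype.mem_piFinset.mp h𝓵 i0)
      have hx0 : x i0 ∉ I i0 (𝓵 i0) :=
        hIdisj i0 (ℓx i0) (𝓵 i0) (hℓxr i0) h𝓵i (Ne.symm hi0) (x i0) (hℓxmem i0)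
      rw [Finset.prod_eq_zero (Finset.mem_univ i0)
        (Set.indicator_of_notMem hx0 _), mul_zero]
    have htree : treeFun (fun _ : ι => r) I γ x = γ ℓx := by
      simp only [treeFun]
      rw [Finset.sum_eq_single_of_mem ℓx hmemfin hzero,
        Finset.prod_congr rfl (fun i _ => Set.indicator_of_mem (hℓxmem i)
          (fun _ => (1:ℝ))), Finset.prod_const_one, mul_one]
    rw [htree, hγ ℓx]
    set A := Set.univ.pi fun i => I i (ℓx i) with hA
    set cA := ((Measure.pi P) A).toReal with hcA
    have hcAv : cA = (1/(r:ℝ))^d := hcellm ℓx hℓxr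
    have hcApos : 0 < cA := hcAv ▸ hcpos
    set K := H * (Real.sqrt d / ((r:ℝ) * pL)) ^ α with hK
    have hAcube : ∀ y ∈ A, ∀ i, y i ∈ Set.Icc (0:ℝ) 1 := fun y hy i =>
      hIcube i (ℓx i) (hℓxr i) (hy i (Set.mem_univ i))
    have hdiff : ∀ y ∈ A, |g x - g y| ≤ K := by
      intro y hy
      refine le_trans (hHolder x y hx (hAcube y hy)) ?_
      rw [hK]
      refine mul_le_mul_of_nonneg_left ?_ hH
      refine Real.rpow_le_rpow (Real.sqrt_nonneg _) ?_ hα.le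
      have hbound : ∀ i, (x i - y i)^2 ≤ (1/((r:ℝ)*pL))^2 := by
        intro i
        have hxi := (hIsub i (ℓx i)) (hℓxmem i)
        have hyi := (hIsub i (ℓx i)) (hy i (Set.mem_univ i))
        have hl := hlen i (ℓx i) (hℓxr i)
        have h2 : |x i - y i| ≤ 1/((r:ℝ)*pL) := by
          rw [abs_le]
          constructor
          · linarith [hxi.1, hyi.2]
          · linarith [hxi.2, hyi.1]
        calc (x i - y i)^2 = |x i - y i|^2 := (sq_abs _).symm
          _ ≤ (1/((r:ℝ)*pL))^2 := by nlinarith [abs_nonneg (x i - y i)]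
      calc Real.sqrt (∑ i, (x i - y i)^2)
          ≤ Real.sqrt (∑ _i : ι, (1/((r:ℝ)*pL))^2) :=
            Real.sqrt_le_sqrt (Finset.sum_le_sum fun i _ => hbound i)
        _ = Real.sqrt ((d:ℝ) * (1/((r:ℝ)*pL))^2) := by
            rw [Finset.sum_const, Finset.card_univ, nsmul_eq_mul]
        _ = Real.sqrt d * (1/((r:ℝ)*pL)) := by
            rw [Real.sqrt_mul (Nat.cast_nonneg d), Real.sqrt_sq (by positivity)]
        _ = Real.sqrt d / ((r:ℝ)*pL) := by ring
    have hgint : IntegrableOn g A (Measure.pi P) := hintOn ℓx hℓxr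
    have hconst : IntegrableOn (fun _ => g x) A (Measure.pi P) :=
      integrableOn_const (measure_lt_top _ _).ne
    have hsub_int : ∫ y in A, (g x - g y) ∂(Measure.pi P)
        = cA * g x - ∫ y in A, g y ∂(Measure.pi P) := by
      rw [integral_sub hconst hgint, setIntegral_const, smul_eq_mul]
      rfl
    have hnorm : |∫ y in A, (g x - g y) ∂(Measure.pi P)| ≤ K * cA := by
      have hh := norm_setIntegral_le_of_norm_le_const (μ := Measure.pi P) (s := A)
        (C := K) (f := fun y => g x - g y) (measure_lt_top _ _)
        (fun y hy => by rw [Real.norm_eq_abs]; exact hdiff y hy)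
      rw [Real.norm_eq_abs] at hh
      exact hh
    have hgoal : g x - (∫ y in A, g y ∂(Measure.pi P)) / cA
        = (∫ y in A, (g x - g y) ∂(Measure.pi P)) / cA := by
      rw [hsub_int]
      field_simp
    rw [hgoal, abs_div, abs_of_pos hcApos, div_le_iff₀ hcApos]
    calc |∫ y in A, (g x - g y) ∂(Measure.pi P)| ≤ K * cA := hnorm
      _ = H * (Real.sqrt d / ((r:ℝ) * pL)) ^ α * cA := by rw [hK]
end
end

section
/- Let S be a finite set, let ν_j (j ∈ S) be probability measures on [0,1], and let f(x) = Σ_𝓵 γ_𝓵 ∏_{j∈S} 𝟙(x_j ∈ I_{j,ℓ_j}) be a multinary-product tree on interval partitions 𝒫_j = {I_{j,1},…,I_{j,φ_j}} of [0,1] that is ν-identifiable. Suppose h ∈ S has φ_h = r > 2, with the intervals I_{h,1} < ⋯ < I_{h,r} ordered from left to right. Then there exist r − 1 multinary-product trees f_1, …, f_{r−1} such that: (i) f = f_1 + ⋯ + f_{r−1} pointwise; (ii) each f_m uses the same partitions 𝒫_k in every coordinate k ≠ h and a two-interval partition { I_{h,1} ∪ ⋯ ∪ I_{h,m}, I_{h,m+1}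 ∪ ⋯ ∪ I_{h,r} } in coordinate h; (iii) each f_m is ν-identifiable; and (iv) sup_{m} ‖f_m‖_∞ ≤ 2 ‖f‖_∞. -/
open MeasureTheory Finset

noncomputable section

/-- `I 0, …, I (φ−1)` is an interval partition of `[0,1]`: the pieces are intervals
(order-connected sets), pairwise disjoint, and their union is `[0,1]`. -/
def IsIntervalPartition (φ : ℕ) (I : ℕ → Set ℝ) : Prop :=
  (∀ k < φ, (I k).OrdConnected) ∧
  (∀ k < φ, ∀ l < φ, k ≠ l → Disjoint (I k) (I l)) ∧
  (⋃ k ∈ Finset.range φ, I k) = Set.Icc (0 : ℝ) 1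

/-- The identifiability condition for the heights `γ` of a multinary-product tree with
respect to the weights `w j k` (the `ν_j`-masses of the pieces): every one-dimensional
weighted partial sum vanishes. -/
def IdentHeightsW {ι : Type*} [Fintype ι] [DecidableEq ι] (φ : ι → ℕ)
    (w : ι → ℕ → ℝ) (γ : (ι → ℕ) → ℝ) : Prop :=
  ∀ j : ι, ∀ 𝓵 ∈ Fintype.piFinset (fun j => Finset.range (φ j)),
    ∑ k ∈ Finset.range (φ j), γ (Function.update 𝓵 j k) * w j k = 0

/-- The coordinate partitions obtained by keeping `P j` for `j ≠ h` and replacing the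
partition in coordinate `h` by the two-piece partition
`{I_{h,1} ∪ ⋯ ∪ I_{h,m}, I_{h,m+1} ∪ ⋯ ∪ I_{h,r}}`. -/
def splitPart {ι : Type*} [DecidableEq ι] (P : ι → ℕ → Set ℝ) (h : ι) (r m : ℕ) :
    ι → ℕ → Set ℝ :=
  fun j k =>
    if j = h then
      (if k = 0 then ⋃ i ∈ Finset.range m, P h i else ⋃ i ∈ Finset.Ico m r, P h i)
    else P j k

section AuxLemmas

lemma treeFun_eq_zero {ι : Type*} [Fintype ι] [DecidableEq ι]
    (φ : ι → ℕ) (P : ι → ℕ → Set ℝ) (γ : (ι → ℕ) → ℝ) (x : ι → ℝ)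
    (j₀ : ι) (hj : ∀ k < φ j₀, x j₀ ∉ P j₀ k) : treeFun φ P γ x = 0 := by
  unfold treeFun
  refine Finset.sum_eq_zero fun 𝓵 h𝓵 => ?_
  have hk : 𝓵 j₀ < φ j₀ := Finset.mem_range.1 (Fintype.mem_piFinset.1 h𝓵 j₀)
  rw [Finset.prod_eq_zero (Finset.mem_univ j₀)
    (Set.indicator_of_notMem (hj _ hk) _), mul_zero]

lemma treeFun_eval {ι : Type*} [Fintype ι] [DecidableEq ι]
    (φ : ι → ℕ) (P : ι → ℕ → Set ℝ) (γ : (ι → ℕ) → ℝ) (x : ι → ℝ)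
    (hdisj : ∀ j, ∀ k < φ j, ∀ l < φ j, k ≠ l → Disjoint (P j k) (P j l))
    (𝓵 : ι → ℕ) (h𝓵 : ∀ j, 𝓵 j < φ j) (hx : ∀ j, x j ∈ P j (𝓵 j)) :
    treeFun φ P γ x = γ 𝓵 := by
  unfold treeFun
  rw [Finset.sum_eq_single_of_mem 𝓵
      (Fintype.mem_piFinset.2 fun j => Finset.mem_range.2 (h𝓵 j))]
  · rw [Finset.prod_eq_one fun j _ => by simp [Set.indicator_of_mem (hx j)], mul_one]
  · intro 𝓵' h𝓵' hne
    obtain ⟨j, hj⟩ := Function.ne_iff.1 hne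
    have h𝓵'j : 𝓵' j < φ j := Finset.mem_range.1 (Fintype.mem_piFinset.1 h𝓵' j)
    have hxj : x j ∉ P j (𝓵' j) := fun hin =>
      (Set.disjoint_left.1 (hdisj j _ h𝓵'j _ (h𝓵 j) hj) hin) (hx j)
    rw [Finset.prod_eq_zero (Finset.mem_univ j) (Set.indicator_of_notMem hxj _), mul_zero]

lemma abel_sum (w g : ℕ → ℝ) (n : ℕ) :
    ∑ i ∈ range n, (∑ j ∈ range (i + 1), w j) * (g (i + 1) - g i)
      = (∑ j ∈ range n, w j) * g n - ∑ j ∈ range n, w j * g j := by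
  induction n with
  | zero => simp
  | succ n ih =>
    rw [Finset.sum_range_succ, ih, Finset.sum_range_succ w,
      Finset.sum_range_succ (fun j => w j * g j)]
    ring

lemma tele_sum (g : ℕ → ℝ) (k n : ℕ) :
    ∑ i ∈ range n, (if k < i + 1 then (1 : ℝ) else 0) * (g (i + 1) - g i)
      = (if k < n then g n - g k else 0) := by
  induction n with
  | zero => simp
  | succ n ih =>
    rw [Finset.sum_range_succ, ih]
    by_cases h1 : k < n
    · rw [if_pos h1, if_pos (by omega), if_pos (by omega)]; ring
    · by_cases h2 : k < n + 1
      · have hk : k = n := by omega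
        rw [if_neg h1, if_pos h2, if_pos h2, hk]; ring
      · rw [if_neg h1, if_neg h2, if_neg (by omega)]; ring

lemma telescope_key (w g : ℕ → ℝ) (r k : ℕ) (hk : k < r)
    (hw1 : ∑ i ∈ range r, w i = 1) (hwg : ∑ i ∈ range r, w i * g i = 0) :
    ∑ m ∈ Finset.Icc 1 (r - 1),
      ((if k < m then -(1 - ∑ i ∈ range m, w i) else ∑ i ∈ range m, w i) * (g m - g (m - 1)))
      = g k := by
  have hIcc : Finset.Icc 1 (r - 1) = Finset.Ico 1 r := by
    rw [← Finset.Ico_add_one_right_eq_Icc]; congr 1; omega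
  rw [hIcc, Finset.sum_Ico_eq_sum_range]
  have hstep : ∀ i : ℕ,
      ((if k < 1 + i then -(1 - ∑ j ∈ range (1 + i), w j) else ∑ j ∈ range (1 + i), w j) *
        (g (1 + i) - g (1 + i - 1)))
      = (∑ j ∈ range (i + 1), w j) * (g (i + 1) - g i)
        - (if k < i + 1 then (1 : ℝ) else 0) * (g (i + 1) - g i) := by
    intro i
    have h1 : 1 + i = i + 1 := by omega
    rw [h1, Nat.add_sub_cancel]
    by_cases hc : k < i + 1
    · rw [if_pos hc, if_pos hc]; ring
    · rw [if_neg hc, if_neg hc]; ring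
  rw [Finset.sum_congr rfl fun i _ => hstep i, Finset.sum_sub_distrib, abel_sum, tele_sum]
  obtain ⟨n, rfl⟩ : ∃ n, r = n + 1 := ⟨r - 1, by omega⟩
  simp only [Nat.add_sub_cancel]
  rw [Finset.sum_range_succ] at hw1
  rw [Finset.sum_range_succ] at hwg
  have hA : ∑ j ∈ range n, w j = 1 - w n := by linarith
  have hB : ∑ j ∈ range n, w j * g j = -(w n * g n) := by linarith
  rw [hA, hB]
  by_cases hkn : k < n
  · rw [if_pos hkn]; ring
  · have hk' : k = n := by omega
    subst hk'
    rw [if_neg hkn]; ring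

lemma meas_biUnion_toReal (ν : Measure ℝ) [IsProbabilityMeasure ν] (φ : ℕ) (P : ℕ → Set ℝ)
    (hpart : IsIntervalPartition φ P) (s : Finset ℕ) (hs : ∀ i ∈ s, i < φ) :
    (ν (⋃ i ∈ s, P i)).toReal = ∑ i ∈ s, (ν (P i)).toReal := by
  rw [measure_biUnion_finset (fun i hi j hj hij => hpart.2.1 i (hs i hi) j (hs j hj) hij)
    (fun i hi => (hpart.1 i (hs i hi)).measurableSet)]
  exact ENNReal.toReal_sum fun i _ => measure_ne_top ν _

open Classical in
noncomputable def gammaTilde {ι : Type*} (P : ι → ℕ → Set ℝ) (γ : (ι → ℕ) → ℝ) :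
    (ι → ℕ) → ℝ :=
  fun 𝓵 => if ∀ j, (P j (𝓵 j)).Nonempty then γ 𝓵 else 0

lemma gammaTilde_eq {ι : Type*} (P : ι → ℕ → Set ℝ) (γ : (ι → ℕ) → ℝ) (𝓵 : ι → ℕ)
    (hne : ∀ j, (P j (𝓵 j)).Nonempty) : gammaTilde P γ 𝓵 = γ 𝓵 := by
  unfold gammaTilde
  rw [if_pos hne]

lemma gammaTilde_ident {ι : Type*} [Fintype ι] [DecidableEq ι] (φ : ι → ℕ)
    (P : ι → ℕ → Set ℝ) (wf : ι → ℕ → ℝ) (γ : (ι → ℕ) → ℝ)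
    (hident : IdentHeightsW φ wf γ) (hw0 : ∀ j k, P j k = ∅ → wf j k = 0) :
    IdentHeightsW φ wf (gammaTilde P γ) := by
  classical
  intro j 𝓵 h𝓵
  by_cases hne : ∀ j', j' ≠ j → (P j' (𝓵 j')).Nonempty
  · rw [← hident j 𝓵 h𝓵]
    refine Finset.sum_congr rfl fun k _ => ?_
    by_cases hk : (P j k).Nonempty
    · rw [gammaTilde_eq]
      intro j'
      rcases eq_or_ne j' j with rfl | hj'
      · simpa using hk
      · rw [Function.update_of_ne hj']; exact hne j' hj'
    · rw [hw0 j k (Set.not_nonempty_iff_eq_empty.1 hk), mul_zero, mul_zero]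
  · push_neg at hne
    obtain ⟨j', hj'ne, hj'emp⟩ := hne
    refine Finset.sum_eq_zero fun k _ => ?_
    have hz : gammaTilde P γ (Function.update 𝓵 j k) = 0 := by
      unfold gammaTilde
      refine if_neg ?_
      push_neg
      exact ⟨j', by rwa [Function.update_of_ne hj'ne]⟩
    rw [hz, zero_mul]

noncomputable def gammaSplit {ι : Type*} [DecidableEq ι] (P : ι → ℕ → Set ℝ)
    (γ : (ι → ℕ) → ℝ) (w : ℕ → ℝ) (h : ι) (m : ℕ) : (ι → ℕ) → ℝ :=
  fun 𝓵 =>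
    (if 𝓵 h = 0 then -(1 - ∑ i ∈ Finset.range m, w i)
      else if 𝓵 h = 1 then ∑ i ∈ Finset.range m, w i else 0) *
    (gammaTilde P γ (Function.update 𝓵 h m) - gammaTilde P γ (Function.update 𝓵 h (m - 1)))

lemma splitPart_self0 {ι : Type*} [DecidableEq ι] (P : ι → ℕ → Set ℝ) (h : ι) (r m : ℕ) :
    splitPart P h r m h 0 = ⋃ i ∈ Finset.range m, P h i := by simp [splitPart]

lemma splitPart_self_ne0 {ι : Type*} [DecidableEq ι] (P : ι → ℕ → Set ℝ) (h : ι) (r m : ℕ)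
    {k : ℕ} (hk : k ≠ 0) :
    splitPart P h r m h k = ⋃ i ∈ Finset.Ico m r, P h i := by simp [splitPart, hk]

lemma splitPart_noteq {ι : Type*} [DecidableEq ι] (P : ι → ℕ → Set ℝ) {h j : ι}
    (hjh : j ≠ h) (r m k : ℕ) : splitPart P h r m j k = P j k := by simp [splitPart, hjh]

end AuxLemmas

/-- a ν-identifiable multinary-product tree whose partition in coordinate `h`
has `r > 2` (left-to-right ordered) pieces decomposes as a sum of `r − 1` ν-identifiable
multinary-product trees, each binary in coordinate `h` (splitting after the first `m`
intervals) and unchanged in the other coordinates, with sup norms at most `2‖f‖_∞`. -/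
theorem stmt7 {ι : Type*} [Fintype ι] [DecidableEq ι]
    (ν : ι → Measure ℝ) [∀ j, IsProbabilityMeasure (ν j)]
    (hsupp : ∀ j, ν j (Set.Icc (0 : ℝ) 1) = 1)
    (φ : ι → ℕ) (P : ι → ℕ → Set ℝ) (hpart : ∀ j, IsIntervalPartition (φ j) (P j))
    (γ : (ι → ℕ) → ℝ)
    (hident : IdentHeightsW φ (fun j k => (ν j (P j k)).toReal) γ)
    (h : ι) (hr : 2 < φ h)
    (hord : ∀ k l, k < l → l < φ h → ∀ x ∈ P h k, ∀ y ∈ P h l, x < y) :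
    ∃ γ' : ℕ → (ι → ℕ) → ℝ,
      (∀ x : ι → ℝ, treeFun φ P γ x =
          ∑ m ∈ Finset.Icc 1 (φ h - 1),
            treeFun (Function.update φ h 2) (splitPart P h (φ h) m) (γ' m) x) ∧
      (∀ m ∈ Finset.Icc 1 (φ h - 1),
          IdentHeightsW (Function.update φ h 2)
            (fun j k => (ν j (splitPart P h (φ h) m j k)).toReal) (γ' m)) ∧
      (∀ B : ℝ, (∀ x : ι → ℝ, |treeFun φ P γ x| ≤ B) →
          ∀ m ∈ Finset.Icc 1 (φ h - 1), ∀ x : ι → ℝ,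
            |treeFun (Function.update φ h 2) (splitPart P h (φ h) m) (γ' m) x| ≤ 2 * B) := by
  classical
  clear hord
  have hdisj : ∀ j, ∀ k < φ j, ∀ l < φ j, k ≠ l → Disjoint (P j k) (P j l) :=
    fun j => (hpart j).2.1
  have hw1 : ∑ i ∈ range (φ h), (ν h (P h i)).toReal = 1 := by
    have h1 := meas_biUnion_toReal (ν h) (φ h) (P h) (hpart h) (range (φ h))
      (fun i hi => Finset.mem_range.1 hi)
    rw [(hpart h).2.2, hsupp h] at h1
    simpa using h1.symm
  have hident' : IdentHeightsW φ (fun j k => (ν j (P j k)).toReal) (gammaTilde P γ) :=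
    gammaTilde_ident φ P _ γ hident (fun j k hk => by simp [hk])
  have hsplit_disj : ∀ m, m ≤ φ h → ∀ j, ∀ k < Function.update φ h 2 j,
      ∀ l < Function.update φ h 2 j, k ≠ l →
      Disjoint (splitPart P h (φ h) m j k) (splitPart P h (φ h) m j l) := by
    intro m hm j k hk l hl hkl
    rcases eq_or_ne j h with rfl | hjh
    · rw [Function.update_self] at hk hl
      have hU : Disjoint (⋃ i ∈ Finset.range m, P j i) (⋃ i ∈ Finset.Ico m (φ j), P j i) := by
        rw [Set.disjoint_left]
        intro a ha ha'
        simp only [Set.mem_iUnion, Finset.mem_range, Finset.mem_Ico, exists_prop] at ha ha'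
        obtain ⟨i, hi, hai⟩ := ha
        obtain ⟨i', hi', hai'⟩ := ha'
        exact Set.disjoint_left.1
          (hdisj j i (by omega) i' (by omega) (by omega)) hai hai'
      have hcase : (k = 0 ∧ l = 1) ∨ (k = 1 ∧ l = 0) := by omega
      rcases hcase with ⟨rfl, rfl⟩ | ⟨rfl, rfl⟩
      · rw [splitPart_self0, splitPart_self_ne0 _ _ _ _ one_ne_zero]
        exact hU
      · rw [splitPart_self0, splitPart_self_ne0 _ _ _ _ one_ne_zero]
        exact hU.symm
    · rw [Function.update_of_ne hjh] at hk hl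
      rw [splitPart_noteq P hjh, splitPart_noteq P hjh]
      exact hdisj j k hk l hl hkl
  have hmaster : ∀ x : ι → ℝ,
      (treeFun φ P γ x = 0 ∧ ∀ m ∈ Finset.Icc 1 (φ h - 1),
          treeFun (Function.update φ h 2) (splitPart P h (φ h) m)
            (gammaSplit P γ (fun i => (ν h (P h i)).toReal) h m) x = 0)
      ∨ ∃ 𝓵 : ι → ℕ, (∀ j, 𝓵 j < φ j) ∧ (∀ j, x j ∈ P j (𝓵 j)) ∧
          treeFun φ P γ x = γ 𝓵 ∧
          ∀ m ∈ Finset.Icc 1 (φ h - 1),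
            treeFun (Function.update φ h 2) (splitPart P h (φ h) m)
              (gammaSplit P γ (fun i => (ν h (P h i)).toReal) h m) x
              = gammaSplit P γ (fun i => (ν h (P h i)).toReal) h m
                  (Function.update 𝓵 h (if 𝓵 h < m then 0 else 1)) := by
    intro x
    by_cases hcov : ∀ j, ∃ k, k < φ j ∧ x j ∈ P j k
    · right
      choose 𝓵 h𝓵lt hx using hcov
      refine ⟨𝓵, h𝓵lt, hx, treeFun_eval φ P γ x hdisj 𝓵 h𝓵lt hx, ?_⟩
      intro m hm
      have hm1 : 1 ≤ m := (Finset.mem_Icc.1 hm).1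
      have hmr : m < φ h := by have := (Finset.mem_Icc.1 hm).2; omega
      refine treeFun_eval _ _ _ x (hsplit_disj m (le_of_lt hmr)) _ ?_ ?_
      · intro j
        rcases eq_or_ne j h with rfl | hjh
        · simp only [Function.update_self]
          split <;> omega
        · simp only [Function.update_of_ne hjh]
          exact h𝓵lt j
      · intro j
        rcases eq_or_ne j h with rfl | hjh
        · simp only [Function.update_self]
          by_cases hc : 𝓵 j < m
          · rw [if_pos hc, splitPart_self0]
            exact Set.mem_biUnion (Finset.mem_range.2 hc) (hx j)
          · rw [if_neg hc, splitPart_self_ne0 _ _ _ _ one_ne_zero]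
            exact Set.mem_biUnion (Finset.mem_Ico.2 ⟨by omega, h𝓵lt j⟩) (hx j)
        · simp only [Function.update_of_ne hjh]
          rw [splitPart_noteq P hjh]
          exact hx j
    · left
      push_neg at hcov
      obtain ⟨j₀, hj₀⟩ := hcov
      constructor
      · exact treeFun_eq_zero φ P γ x j₀ (fun k hk => hj₀ k hk)
      · intro m hm
        have hmr : m ≤ φ h := by have := (Finset.mem_Icc.1 hm).2; omega
        refine treeFun_eq_zero _ _ _ x j₀ ?_
        intro k hk
        rcases eq_or_ne j₀ h with rfl | hjh
        · rcases eq_or_ne k 0 with rfl | hk0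
          · rw [splitPart_self0]
            intro hmem
            simp only [Set.mem_iUnion, Finset.mem_range, exists_prop] at hmem
            obtain ⟨i, hi, hmi⟩ := hmem
            exact hj₀ i (by omega) hmi
          · rw [splitPart_self_ne0 _ _ _ _ hk0]
            intro hmem
            simp only [Set.mem_iUnion, Finset.mem_Ico, exists_prop] at hmem
            obtain ⟨i, hi, hmi⟩ := hmem
            exact hj₀ i (by omega) hmi
        · rw [Function.update_of_ne hjh] at hk
          rw [splitPart_noteq P hjh]
          exact hj₀ k hk
  have hγEq : ∀ m, ∀ 𝓵 : ι → ℕ,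
      gammaSplit P γ (fun i => (ν h (P h i)).toReal) h m
        (Function.update 𝓵 h (if 𝓵 h < m then 0 else 1))
      = (if 𝓵 h < m then -(1 - ∑ i ∈ range m, (ν h (P h i)).toReal)
          else ∑ i ∈ range m, (ν h (P h i)).toReal) *
        (gammaTilde P γ (Function.update 𝓵 h m)
          - gammaTilde P γ (Function.update 𝓵 h (m - 1))) := by
    intro m 𝓵
    by_cases hc : 𝓵 h < m <;>
      simp [gammaSplit, hc, Function.update_idem, Function.update_self]
  refine ⟨fun m => gammaSplit P γ (fun i => (ν h (P h i)).toReal) h m, ?_, ?_, ?_⟩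
  · -- (i) pointwise decomposition
    intro x
    rcases hmaster x with ⟨h0, hm0⟩ | ⟨𝓵, h𝓵lt, hx, hf, hfm⟩
    · rw [h0, Finset.sum_congr rfl hm0]
      simp
    · rw [hf, Finset.sum_congr rfl hfm, Finset.sum_congr rfl (fun m _ => hγEq m 𝓵)]
      have hwg : ∑ i ∈ range (φ h),
          (ν h (P h i)).toReal * gammaTilde P γ (Function.update 𝓵 h i) = 0 := by
        have h2 := hident' h 𝓵 (Fintype.mem_piFinset.2 fun j => Finset.mem_range.2 (h𝓵lt j))
        rw [← h2]
        exact Finset.sum_congr rfl fun k _ => mul_comm _ _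
      have tk := telescope_key (fun i => (ν h (P h i)).toReal)
        (fun i => gammaTilde P γ (Function.update 𝓵 h i)) (φ h) (𝓵 h) (h𝓵lt h) hw1 hwg
      simp only [Function.update_eq_self] at tk
      have hγγt : γ 𝓵 = gammaTilde P γ 𝓵 := (gammaTilde_eq P γ 𝓵 fun j => ⟨x j, hx j⟩).symm
      exact hγγt.trans tk.symm
  · -- (ii) identifiability
    intro m hm j 𝓵 h𝓵
    have hm1 : 1 ≤ m := (Finset.mem_Icc.1 hm).1
    have hmr : m < φ h := by have := (Finset.mem_Icc.1 hm).2; omega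
    rcases eq_or_ne j h with rfl | hjh
    · simp only [Function.update_self]
      have w0 : (ν j (splitPart P j (φ j) m j 0)).toReal
          = ∑ i ∈ range m, (ν j (P j i)).toReal := by
        rw [splitPart_self0]
        exact meas_biUnion_toReal (ν j) (φ j) (P j) (hpart j) (range m)
          (fun i hi => by have := Finset.mem_range.1 hi; omega)
      have w1 : (ν j (splitPart P j (φ j) m j 1)).toReal
          = 1 - ∑ i ∈ range m, (ν j (P j i)).toReal := by
        rw [splitPart_self_ne0 _ _ _ _ one_ne_zero]
        rw [meas_biUnion_toReal (ν j) (φ j) (P j) (hpart j) (Finset.Ico m (φ j))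
          (fun i hi => (Finset.mem_Ico.1 hi).2)]
        have e2 := Finset.sum_Ico_consecutive (fun i => (ν j (P j i)).toReal)
          (Nat.zero_le m) (le_of_lt hmr)
        simp only [← Finset.range_eq_Ico] at e2
        linarith
      have c0 : gammaSplit P γ (fun i => (ν j (P j i)).toReal) j m (Function.update 𝓵 j 0)
          = -(1 - ∑ i ∈ range m, (ν j (P j i)).toReal) *
            (gammaTilde P γ (Function.update 𝓵 j m)
              - gammaTilde P γ (Function.update 𝓵 j (m - 1))) := by
        simp [gammaSplit, Function.update_idem, Function.update_self]
      have c1 : gammaSplit P γ (fun i => (ν j (P j i)).toReal) j m (Function.update 𝓵 j 1)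
          = (∑ i ∈ range m, (ν j (P j i)).toReal) *
            (gammaTilde P γ (Function.update 𝓵 j m)
              - gammaTilde P γ (Function.update 𝓵 j (m - 1))) := by
        simp [gammaSplit, Function.update_idem, Function.update_self]
      rw [Finset.sum_range_succ, Finset.sum_range_one, w0, w1, c0, c1]
      ring
    · simp only [Function.update_of_ne hjh]
      simp only [splitPart_noteq P hjh]
      have hmem : ∀ i, i < φ h → Function.update 𝓵 h i ∈
          Fintype.piFinset (fun j' => Finset.range (φ j')) := by
        intro i hi
        refine Fintype.mem_piFinset.2 fun j' => ?_
        rcases eq_or_ne j' h with rfl | hj'h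
        · rw [Function.update_self]; exact Finset.mem_range.2 hi
        · rw [Function.update_of_ne hj'h]
          have := Fintype.mem_piFinset.1 h𝓵 j'
          rwa [Function.update_of_ne hj'h] at this
      have hA : ∑ k ∈ range (φ j), gammaTilde P γ
            (Function.update (Function.update 𝓵 h m) j k) * (ν j (P j k)).toReal = 0 :=
        hident' j (Function.update 𝓵 h m) (hmem m hmr)
      have hB : ∑ k ∈ range (φ j), gammaTilde P γ
            (Function.update (Function.update 𝓵 h (m - 1)) j k) * (ν j (P j k)).toReal = 0 :=
        hident' j (Function.update 𝓵 h (m - 1)) (hmem (m - 1) (by omega))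
      have hexp : ∀ k, gammaSplit P γ (fun i => (ν h (P h i)).toReal) h m
            (Function.update 𝓵 j k) * (ν j (P j k)).toReal
          = (if 𝓵 h = 0 then -(1 - ∑ i ∈ range m, (ν h (P h i)).toReal)
              else if 𝓵 h = 1 then ∑ i ∈ range m, (ν h (P h i)).toReal else 0) *
              (gammaTilde P γ (Function.update (Function.update 𝓵 h m) j k)
                * (ν j (P j k)).toReal)
            - (if 𝓵 h = 0 then -(1 - ∑ i ∈ range m, (ν h (P h i)).toReal)
              else if 𝓵 h = 1 then ∑ i ∈ range m, (ν h (P h i)).toReal else 0) *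
              (gammaTilde P γ (Function.update (Function.update 𝓵 h (m - 1)) j k)
                * (ν j (P j k)).toReal) := by
        intro k
        unfold gammaSplit
        rw [Function.update_of_ne (Ne.symm hjh),
          Function.update_comm (Ne.symm (Ne.symm hjh)),
          Function.update_comm (Ne.symm (Ne.symm hjh))]
        ring
      rw [Finset.sum_congr rfl fun k _ => hexp k, Finset.sum_sub_distrib,
        ← Finset.mul_sum, ← Finset.mul_sum]
      rw [hA, hB]
      simp
  · -- (iv) bound
    intro B hB m hm x
    have hm1 : 1 ≤ m := (Finset.mem_Icc.1 hm).1
    have hmr : m < φ h := by have := (Finset.mem_Icc.1 hm).2; omega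
    have hB0 : 0 ≤ B := le_trans (abs_nonneg _) (hB fun _ => 0)
    have hγt_bound : ∀ 𝓵 : ι → ℕ, (∀ j, 𝓵 j < φ j) → |gammaTilde P γ 𝓵| ≤ B := by
      intro 𝓵 h𝓵
      by_cases hne : ∀ j, (P j (𝓵 j)).Nonempty
      · rw [gammaTilde_eq P γ 𝓵 hne]
        choose y hy using hne
        rw [← treeFun_eval φ P γ y hdisj 𝓵 h𝓵 hy]
        exact hB y
      · unfold gammaTilde
        rw [if_neg hne]
        simpa using hB0
    have hbnd : ∀ 𝓵 : ι → ℕ, (∀ j, j ≠ h → 𝓵 j < φ j) →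
        |gammaSplit P γ (fun i => (ν h (P h i)).toReal) h m 𝓵| ≤ 2 * B := by
      intro 𝓵 h𝓵
      have hWnn : 0 ≤ ∑ i ∈ range m, (ν h (P h i)).toReal :=
        Finset.sum_nonneg fun i _ => ENNReal.toReal_nonneg
      have hWle : ∑ i ∈ range m, (ν h (P h i)).toReal ≤ 1 := by
        rw [← hw1]
        exact Finset.sum_le_sum_of_subset_of_nonneg
          (Finset.range_subset_range.2 (le_of_lt hmr)) (fun i _ _ => ENNReal.toReal_nonneg)
      have hcoef : |(if 𝓵 h = 0 then -(1 - ∑ i ∈ range m, (ν h (P h i)).toReal)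
          else if 𝓵 h = 1 then ∑ i ∈ range m, (ν h (P h i)).toReal else 0)| ≤ 1 := by
        split
        · rw [abs_neg, abs_of_nonneg (by linarith)]; linarith
        · split
          · rw [abs_of_nonneg hWnn]; exact hWle
          · simp
      have hup : ∀ i, i < φ h → ∀ j, (Function.update 𝓵 h i) j < φ j := by
        intro i hi j
        rcases eq_or_ne j h with rfl | hjh
        · rw [Function.update_self]; exact hi
        · rw [Function.update_of_ne hjh]; exact h𝓵 j hjh
      have hΔ : |gammaTilde P γ (Function.update 𝓵 h m) -
          gammaTilde P γ (Function.update 𝓵 h (m - 1))| ≤ 2 * B := by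
        calc |gammaTilde P γ (Function.update 𝓵 h m) -
            gammaTilde P γ (Function.update 𝓵 h (m - 1))|
            ≤ |gammaTilde P γ (Function.update 𝓵 h m)| +
              |gammaTilde P γ (Function.update 𝓵 h (m - 1))| := abs_sub _ _
          _ ≤ B + B := add_le_add (hγt_bound _ (hup m hmr)) (hγt_bound _ (hup (m-1) (by omega)))
          _ = 2 * B := by ring
      unfold gammaSplit
      rw [abs_mul]
      have hmul := mul_le_mul hcoef hΔ (abs_nonneg _) zero_le_one
      linarith
    rcases hmaster x with ⟨h0, hm0⟩ | ⟨𝓵, h𝓵lt, hx, hf, hfm⟩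
    · rw [hm0 m hm, abs_zero]
      linarith
    · rw [hfm m hm]
      exact hbnd _ (fun j hjh => by rw [Function.update_of_ne hjh]; exact h𝓵lt j)
end
end

section
/- Let S be a finite set with |S| = d, let ν_j (j ∈ S) be probability measures on [0,1], and let f be a ν-identifiable multinary-product tree on interval partitions 𝒫_j of [0,1] with |𝒫_j| = r for every j ∈ S, where r ≥ 2. Then f can be written as a sum of (r − 1)^d many ν-identifiable binary-product trees (multinary-product trees all of whose coordinate partitions have exactly two intervals), f = Σ_{k_1=1}^{r−1} ⋯ Σ_{k_d=1}^{r−1} f_{k_1,…,k_d}, with sup_{k_1,…,k_d} ‖f_{k_1,…,k_d}‖_∞ ≤ 2^d ‖f‖_∞. -/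
open MeasureTheory Finset

noncomputable section

open Classical in
private lemma aux_sum_split {ι : Type*} [Fintype ι] [DecidableEq ι] (n : ℕ) (j : ι)
    (F : (ι → ℕ) → ℝ) :
    ∑ 𝓵 ∈ Fintype.piFinset (fun _ : ι => Finset.range n), F 𝓵 =
      ∑ 𝓵 ∈ (Fintype.piFinset (fun _ : ι => Finset.range n)).filter (fun 𝓵 => 𝓵 j = 0),
        ∑ k ∈ Finset.range n, F (Function.update 𝓵 j k) := by
  rw [← Finset.sum_product']
  refine (Finset.sum_nbij' (fun 𝓵 => (Function.update 𝓵 j 0, 𝓵 j))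
    (fun p => Function.update p.1 j p.2) ?_ ?_ ?_ ?_ ?_).symm |>.symm
  · intro a ha
    simp only [Finset.mem_product, Finset.mem_filter, Fintype.mem_piFinset] at ha ⊢
    have h0 : (0:ℕ) ∈ Finset.range n := by
      have := ha j; simp only [Finset.mem_range] at this ⊢; omega
    refine ⟨⟨fun i => ?_, Function.update_self _ _ _⟩, ha j⟩
    by_cases h : i = j
    · subst h; simpa [Function.update_self] using h0
    · simpa [Function.update_of_ne h] using ha i
  · intro p hp
    simp only [Finset.mem_product, Finset.mem_filter, Fintype.mem_piFinset] at hp ⊢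
    intro i
    by_cases h : i = j
    · subst h; simpa [Function.update_self] using hp.2
    · simpa [Function.update_of_ne h] using hp.1.1 i
  · intro a _
    funext i
    by_cases h : i = j
    · subst h; simp
    · simp [Function.update_of_ne h]
  · intro p hp
    simp only [Finset.mem_product, Finset.mem_filter, Fintype.mem_piFinset] at hp
    have h1 : Function.update (Function.update p.1 j p.2) j 0 = p.1 := by
      rw [Function.update_idem, ← hp.1.2, Function.update_eq_self]
    have h2 : (Function.update p.1 j p.2) j = p.2 := Function.update_self _ _ _
    exact Prod.ext h1 h2
  · intro a _
    simp


open Classical in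
private lemma aux_delta {ι : Type*} [Fintype ι] [DecidableEq ι] (n : ℕ)
    (w : ι → ℕ → ℝ) (γ : (ι → ℕ) → ℝ)
    (hident : ∀ j : ι, ∀ 𝓵 ∈ Fintype.piFinset (fun _ : ι => Finset.range n),
      ∑ k ∈ Finset.range n, γ (Function.update 𝓵 j k) * w j k = 0)
    (lam : ι → ℕ) (hlam : lam ∈ Fintype.piFinset (fun _ : ι => Finset.range n)) :
    ∑ 𝓵 ∈ Fintype.piFinset (fun _ : ι => Finset.range n),
      γ 𝓵 * ∏ j, ((if 𝓵 j = lam j then (1:ℝ) else 0) - w j (𝓵 j)) = γ lam := by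
  have key : ∀ T : Finset ι,
      ∑ 𝓵 ∈ Fintype.piFinset (fun _ : ι => Finset.range n),
        γ 𝓵 * ((∏ j ∈ T, ((if 𝓵 j = lam j then (1:ℝ) else 0) - w j (𝓵 j))) *
          ∏ j ∈ Finset.univ \ T, (if 𝓵 j = lam j then (1:ℝ) else 0)) = γ lam := by
    intro T
    induction T using Finset.induction_on with
    | empty =>
      rw [Finset.sum_eq_single lam]
      · simp
      · intro b hb hbne
        obtain ⟨j, hj⟩ := Function.ne_iff.mp hbne
        have h0 : (∏ j ∈ Finset.univ \ (∅:Finset ι), (if b j = lam j then (1:ℝ) else 0)) = 0 :=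
          Finset.prod_eq_zero (i := j) (by simp) (by simp [hj])
        simp only [mul_eq_zero]
        exact Or.inr (by simpa using h0)
      · intro h; exact absurd hlam h
    | @insert a T haT IH =>
      have hsplit : Finset.univ \ insert a T = (Finset.univ \ T) \ {a} := by
        ext i; simp only [Finset.mem_sdiff, Finset.mem_insert, Finset.mem_univ, true_and,
          Finset.mem_singleton]; tauto
      have hmem : a ∈ Finset.univ \ T := by simp [haT]
      have hprod : ∀ 𝓵 : ι → ℕ,
          (∏ j ∈ Finset.univ \ T, (if 𝓵 j = lam j then (1:ℝ) else 0)) =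
          (if 𝓵 a = lam a then (1:ℝ) else 0) *
            ∏ j ∈ Finset.univ \ insert a T, (if 𝓵 j = lam j then (1:ℝ) else 0) := by
        intro 𝓵
        rw [Finset.prod_eq_mul_prod_sdiff_singleton_of_mem hmem, hsplit]
      have hzero : ∑ 𝓵 ∈ Fintype.piFinset (fun _ : ι => Finset.range n),
          γ 𝓵 * (w a (𝓵 a) *
            ((∏ j ∈ T, ((if 𝓵 j = lam j then (1:ℝ) else 0) - w j (𝓵 j))) *
             ∏ j ∈ Finset.univ \ insert a T, (if 𝓵 j = lam j then (1:ℝ) else 0))) = 0 := by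
        rw [aux_sum_split n a]
        refine Finset.sum_eq_zero fun 𝓵 h𝓵 => ?_
        simp only [Finset.mem_filter] at h𝓵
        have hC : ∀ k : ℕ,
            γ (Function.update 𝓵 a k) * (w a ((Function.update 𝓵 a k) a) *
              ((∏ j ∈ T, ((if (Function.update 𝓵 a k) j = lam j then (1:ℝ) else 0)
                  - w j ((Function.update 𝓵 a k) j))) *
               ∏ j ∈ Finset.univ \ insert a T,
                  (if (Function.update 𝓵 a k) j = lam j then (1:ℝ) else 0))) =
            (γ (Function.update 𝓵 a k) * w a k) *
              ((∏ j ∈ T, ((if 𝓵 j = lam j then (1:ℝ) else 0) - w j (𝓵 j))) *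
               ∏ j ∈ Finset.univ \ insert a T, (if 𝓵 j = lam j then (1:ℝ) else 0)) := by
          intro k
          have e1 : (∏ j ∈ T, ((if (Function.update 𝓵 a k) j = lam j then (1:ℝ) else 0)
              - w j ((Function.update 𝓵 a k) j))) =
              ∏ j ∈ T, ((if 𝓵 j = lam j then (1:ℝ) else 0) - w j (𝓵 j)) := by
            refine Finset.prod_congr rfl fun j hj => ?_
            have hja : j ≠ a := by rintro rfl; exact haT hj
            rw [Function.update_of_ne hja]
          have e2 : (∏ j ∈ Finset.univ \ insert a T,
              (if (Function.update 𝓵 a k) j = lam j then (1:ℝ) else 0)) =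
              ∏ j ∈ Finset.univ \ insert a T, (if 𝓵 j = lam j then (1:ℝ) else 0) := by
            refine Finset.prod_congr rfl fun j hj => ?_
            have hja : j ≠ a := by
              simp only [Finset.mem_sdiff, Finset.mem_insert] at hj
              exact fun h => hj.2 (Or.inl h)
            rw [Function.update_of_ne hja]
          rw [Function.update_self, e1, e2]; ring
        rw [Finset.sum_congr rfl fun k _ => hC k, ← Finset.sum_mul,
          hident a 𝓵 h𝓵.1, zero_mul]
      calc ∑ 𝓵 ∈ Fintype.piFinset (fun _ : ι => Finset.range n),
            γ 𝓵 * ((∏ j ∈ insert a T, ((if 𝓵 j = lam j then (1:ℝ) else 0) - w j (𝓵 j))) *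
              ∏ j ∈ Finset.univ \ insert a T, (if 𝓵 j = lam j then (1:ℝ) else 0))
          = ∑ 𝓵 ∈ Fintype.piFinset (fun _ : ι => Finset.range n),
            (γ 𝓵 * ((∏ j ∈ T, ((if 𝓵 j = lam j then (1:ℝ) else 0) - w j (𝓵 j))) *
              ∏ j ∈ Finset.univ \ T, (if 𝓵 j = lam j then (1:ℝ) else 0))
             - γ 𝓵 * (w a (𝓵 a) *
              ((∏ j ∈ T, ((if 𝓵 j = lam j then (1:ℝ) else 0) - w j (𝓵 j))) *
               ∏ j ∈ Finset.univ \ insert a T, (if 𝓵 j = lam j then (1:ℝ) else 0)))) := by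
            refine Finset.sum_congr rfl fun 𝓵 _ => ?_
            rw [Finset.prod_insert haT, hprod 𝓵]; ring
        _ = γ lam := by rw [Finset.sum_sub_distrib, IH, hzero, sub_zero]
  have := key Finset.univ
  simpa using this


/-- evaluation at a point lying in specified pieces -/
private lemma aux_eval {ι : Type*} [Fintype ι] [DecidableEq ι] (φ : ι → ℕ)
    (P : ι → ℕ → Set ℝ) (γ : (ι → ℕ) → ℝ) (x : ι → ℝ)
    (hdisj : ∀ j, ∀ k < φ j, ∀ l < φ j, k ≠ l → Disjoint (P j k) (P j l))
    (lam : ι → ℕ) (hlam : lam ∈ Fintype.piFinset (fun j => Finset.range (φ j)))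
    (hx : ∀ j, x j ∈ P j (lam j)) :
    treeFun φ P γ x = γ lam := by
  unfold treeFun
  rw [Finset.sum_eq_single lam]
  · have : ∀ j : ι, Set.indicator (P j (lam j)) (fun _ => (1:ℝ)) (x j) = 1 := fun j =>
      Set.indicator_of_mem (hx j) _
    simp [this]
  · intro b hb hbne
    obtain ⟨j, hj⟩ := Function.ne_iff.mp hbne
    have hb' : b j < φ j := by
      simp only [Fintype.mem_piFinset, Finset.mem_range] at hb; exact hb j
    have hl' : lam j < φ j := by
      simp only [Fintype.mem_piFinset, Finset.mem_range] at hlam; exact hlam j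
    have hnot : x j ∉ P j (b j) := fun hmem =>
      (Set.disjoint_left.mp (hdisj j (b j) hb' (lam j) hl' hj) hmem) (hx j)
    have h0 : Set.indicator (P j (b j)) (fun _ => (1:ℝ)) (x j) = 0 :=
      Set.indicator_of_notMem hnot _
    exact mul_eq_zero.mpr (Or.inr (Finset.prod_eq_zero (Finset.mem_univ j) h0))
  · intro h; exact absurd hlam h

/-- vanishing outside the cube -/
private lemma aux_eval_zero {ι : Type*} [Fintype ι] [DecidableEq ι] (φ : ι → ℕ)
    (P : ι → ℕ → Set ℝ) (γ : (ι → ℕ) → ℝ) (x : ι → ℝ)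
    (hsub : ∀ j, ∀ k < φ j, P j k ⊆ Set.Icc (0:ℝ) 1)
    (j0 : ι) (hx : x j0 ∉ Set.Icc (0:ℝ) 1) :
    treeFun φ P γ x = 0 := by
  unfold treeFun
  refine Finset.sum_eq_zero fun 𝓵 h𝓵 => ?_
  have h𝓵' : 𝓵 j0 < φ j0 := by
    simp only [Fintype.mem_piFinset, Finset.mem_range] at h𝓵; exact h𝓵 j0
  have h0 : Set.indicator (P j0 (𝓵 j0)) (fun _ => (1:ℝ)) (x j0) = 0 :=
    Set.indicator_of_notMem (fun hm => hx (hsub j0 _ h𝓵' hm)) _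
  exact mul_eq_zero.mpr (Or.inr (Finset.prod_eq_zero (Finset.mem_univ j0) h0))

/-- the telescoping sum computation -/
private lemma aux_Tsum (r p : ℕ) (hr : 2 ≤ r) (hp : p < r) (u : ℕ → ℝ)
    (h0 : u 0 = 0) (hrr : u r = 0) :
    ∑ k ∈ Finset.Icc 1 (r-1), u k * ((if p = k then (1:ℝ) else 0) -
      (if p = k - 1 then (1:ℝ) else 0)) = u p - u (p+1) := by
  have step : ∀ k ∈ Finset.Icc 1 (r-1), u k * ((if p = k then (1:ℝ) else 0) -
      (if p = k - 1 then (1:ℝ) else 0)) =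
      (if k = p then u k else 0) - (if k = p + 1 then u k else 0) := by
    intro k hk
    simp only [Finset.mem_Icc] at hk
    have h1 : (p = k - 1) ↔ (k = p + 1) := by omega
    by_cases hkp : k = p
    · subst hkp
      have hne : ¬ (k = k - 1) := by omega
      have hne2 : ¬ (k = k + 1) := by omega
      simp [hne, hne2]
    · by_cases hkp1 : k = p + 1
      · have hp' : p = k - 1 := by omega
        have hne : ¬ (p = k) := by omega
        have hne' : ¬ (k = p) := fun h => hne h.symm
        rw [if_neg hne, if_pos hp', if_neg hne', if_pos hkp1]
        ring
      · have : ¬ (p = k) := fun h => hkp h.symm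
        have h2 : ¬ (p = k - 1) := by omega
        simp [hkp, hkp1, this, h2]
  rw [Finset.sum_congr rfl step, Finset.sum_sub_distrib,
    Finset.sum_ite_eq' _ p u, Finset.sum_ite_eq' _ (p+1) u]
  by_cases hp0 : p = 0
  · subst hp0
    have hn : (0:ℕ) ∉ Finset.Icc 1 (r-1) := by simp
    have h1 : (0:ℕ) + 1 ∈ Finset.Icc 1 (r-1) := by simp only [Finset.mem_Icc]; omega
    rw [if_neg hn, if_pos h1, h0, zero_sub]
  · by_cases hpr : p = r - 1
    · have hmem : p ∈ Finset.Icc 1 (r-1) := by simp only [Finset.mem_Icc]; omega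
      have hnot : p + 1 ∉ Finset.Icc 1 (r-1) := by simp only [Finset.mem_Icc]; omega
      have hpr1 : p + 1 = r := by omega
      rw [if_pos hmem, if_neg hnot, hpr1, hrr, sub_zero]
    · have hmem : p ∈ Finset.Icc 1 (r-1) := by simp only [Finset.mem_Icc]; omega
      have hmem1 : p + 1 ∈ Finset.Icc 1 (r-1) := by simp only [Finset.mem_Icc]; omega
      rw [if_pos hmem, if_pos hmem1]


private def pkey (I : ℕ → Set ℝ) (k : ℕ) : ℝ := sInf (I k) + sSup (I k)

private def plt (I : ℕ → Set ℝ) (k l : ℕ) : Prop :=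
  pkey I k < pkey I l ∨ (pkey I k = pkey I l ∧ k < l)

private lemma plt_trans {I : ℕ → Set ℝ} {k l m : ℕ} (h1 : plt I k l) (h2 : plt I l m) :
    plt I k m := by
  rcases h1 with h1 | ⟨h1, h1'⟩ <;> rcases h2 with h2 | ⟨h2, h2'⟩
  · exact Or.inl (h1.trans h2)
  · exact Or.inl (h2 ▸ h1)
  · exact Or.inl (h1 ▸ h2)
  · exact Or.inr ⟨h1.trans h2, h1'.trans h2'⟩

private lemma plt_irrefl {I : ℕ → Set ℝ} (k : ℕ) : ¬ plt I k k := by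
  rintro (h | ⟨_, h⟩)
  exacts [lt_irrefl _ h, lt_irrefl _ h]

private lemma plt_total {I : ℕ → Set ℝ} {k l : ℕ} (h : k ≠ l) : plt I k l ∨ plt I l k := by
  rcases lt_trichotomy (pkey I k) (pkey I l) with h1 | h1 | h1
  · exact Or.inl (Or.inl h1)
  · rcases Nat.lt_or_ge k l with h2 | h2
    · exact Or.inl (Or.inr ⟨h1, h2⟩)
    · exact Or.inr (Or.inr ⟨h1.symm, by omega⟩)
  · exact Or.inr (Or.inl h1)

open Classical in
private def ppos (r : ℕ) (I : ℕ → Set ℝ) (k : ℕ) : ℕ :=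
  ((Finset.range r).filter (fun l => plt I l k)).card

section geom
variable {r : ℕ} {I : ℕ → Set ℝ} (hI : IsIntervalPartition r I)
include hI

private lemma sub_Icc {k : ℕ} (hk : k < r) : I k ⊆ Set.Icc (0:ℝ) 1 := by
  intro x hx
  rw [← hI.2.2]
  exact Set.mem_biUnion (Finset.mem_range.mpr hk) hx

private lemma exists_piece {x : ℝ} (hx : x ∈ Set.Icc (0:ℝ) 1) : ∃ k < r, x ∈ I k := by
  rw [← hI.2.2] at hx
  simpa using hx

/-- pointwise comparison of two pieces -/
private lemma piece_lt {k l : ℕ} (hk : k < r) (hl : l < r) (hkl : k ≠ l)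
    {a b : ℝ} (ha : a ∈ I k) (hb : b ∈ I l) (hab : a ≤ b) :
    ∀ c ∈ I k, ∀ d ∈ I l, c < d := by
  have hdisj := hI.2.1 k hk l hl hkl
  have hab' : a < b := lt_of_le_of_ne hab (fun h => (Set.disjoint_left.mp hdisj ha) (h ▸ hb))
  intro c hc d hd
  by_contra hcon
  push_neg at hcon
  by_cases hda : a ≤ d
  · have hdk : d ∈ I k := (hI.1 k hk).out ha hc ⟨hda, hcon⟩
    exact (Set.disjoint_left.mp hdisj hdk) hd
  · push_neg at hda
    have hal : a ∈ I l := (hI.1 l hl).out hd hb ⟨hda.le, hab⟩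
    exact (Set.disjoint_left.mp hdisj ha) hal

/-- strict key comparison -/
private lemma key_lt {k l : ℕ} (hk : k < r) (hl : l < r) (hkl : k ≠ l)
    {a b : ℝ} (ha : a ∈ I k) (hb : b ∈ I l) (hab : a ≤ b) :
    pkey I k < pkey I l := by
  have hpw := piece_lt hI hk hl hkl ha hb hab
  have hbbk : BddBelow (I k) := (bddBelow_Icc : BddBelow (Set.Icc (0:ℝ) 1)).mono (sub_Icc hI hk)
  have hbak : BddAbove (I k) := (bddAbove_Icc (a := (0:ℝ)) (b := 1)).mono (sub_Icc hI hk)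
  have hbbl : BddBelow (I l) := (bddBelow_Icc : BddBelow (Set.Icc (0:ℝ) 1)).mono (sub_Icc hI hl)
  have hbal : BddAbove (I l) := (bddAbove_Icc (a := (0:ℝ)) (b := 1)).mono (sub_Icc hI hl)
  have hne_k : (I k).Nonempty := ⟨a, ha⟩
  have hne_l : (I l).Nonempty := ⟨b, hb⟩
  have h1 : sInf (I k) ≤ sInf (I l) := by
    refine le_trans (csInf_le hbbk ha) (le_csInf hne_l fun d hd => (hpw a ha d hd).le)
  have h2 : sSup (I k) ≤ sSup (I l) :=
    le_trans (csSup_le hne_k fun c hc => (hpw c hc b hb).le) (le_csSup hbal hb)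
  by_contra hcon
  push_neg at hcon
  unfold pkey at hcon
  have e1 : sInf (I k) = sInf (I l) := by linarith
  have e2 : sSup (I k) = sSup (I l) := by linarith
  -- every element of I k equals sInf (I k)
  have hIk : ∀ c ∈ I k, c = sInf (I k) := by
    intro c hc
    have hle : c ≤ sInf (I l) := le_csInf hne_l fun d hd => (hpw c hc d hd).le
    exact le_antisymm (e1 ▸ hle) (csInf_le hbbk hc)
  have hIl : ∀ d ∈ I l, d = sSup (I l) := by
    intro d hd
    have hge : sSup (I k) ≤ d := csSup_le hne_k fun c hc => (hpw c hc d hd).le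
    exact le_antisymm (le_csSup hbal hd) (e2 ▸ hge)
  have hb' : b = sSup (I l) := hIl b hb
  have ha' : a = sInf (I k) := hIk a ha
  have hinfl : sInf (I l) = b := le_antisymm (csInf_le hbbl hb)
    (le_csInf hne_l fun d hd => le_of_eq (hb'.trans (hIl d hd).symm))
  have : a = b := by rw [ha', e1, hinfl]
  exact absurd (hpw a ha b hb) (by rw [this]; exact lt_irrefl b)

omit hI in
private lemma ppos_lt_ppos {k l : ℕ} (hk : k < r) (hl : l < r) (h : plt I k l) :
    ppos r I k < ppos r I l := by
  classical
  apply Finset.card_lt_card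
  rw [Finset.ssubset_iff_of_subset]
  · exact ⟨k, by simp [Finset.mem_filter, Finset.mem_range, hk, h],
      by simp [Finset.mem_filter, plt_irrefl]⟩
  · intro m hm
    simp only [Finset.mem_filter, Finset.mem_range] at hm ⊢
    exact ⟨hm.1, plt_trans hm.2 h⟩

omit hI in
private lemma ppos_lt (hk : k < r) : ppos r I k < r := by
  classical
  have h1 : ((Finset.range r).filter (fun l => plt I l k)) ⊆ (Finset.range r).erase k := by
    intro m hm
    simp only [Finset.mem_filter, Finset.mem_range] at hm
    refine Finset.mem_erase.mpr ⟨fun h => ?_, Finset.mem_range.mpr hm.1⟩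
    exact plt_irrefl k (h ▸ hm.2)
  calc ppos r I k ≤ ((Finset.range r).erase k).card := Finset.card_le_card h1
    _ < r := by
        rw [Finset.card_erase_of_mem (Finset.mem_range.mpr hk), Finset.card_range]
        omega

private lemma ppos_inj {k l : ℕ} (hk : k < r) (hl : l < r)
    (h : ppos r I k = ppos r I l) : k = l := by
  by_contra hkl
  rcases plt_total (I := I) hkl with h1 | h1
  · exact absurd h (Nat.ne_of_lt (ppos_lt_ppos hk hl h1))
  · exact absurd h.symm (Nat.ne_of_lt (ppos_lt_ppos hl hk h1))

end geom

private def Bset (r : ℕ) (I : ℕ → Set ℝ) (t : ℕ) : Set ℝ :=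
  ⋃ k ∈ (Finset.range r).filter (fun k => ppos r I k < t), I k

private lemma mem_Bset {r t : ℕ} {I : ℕ → Set ℝ} {x : ℝ} :
    x ∈ Bset r I t ↔ ∃ k, k < r ∧ ppos r I k < t ∧ x ∈ I k := by
  simp only [Bset, Set.mem_iUnion, Finset.mem_filter, Finset.mem_range, exists_prop]
  tauto

section geom2
variable {r : ℕ} {I : ℕ → Set ℝ} (hI : IsIntervalPartition r I)
include hI

private lemma Bset_subset_Icc (t : ℕ) : Bset r I t ⊆ Set.Icc (0:ℝ) 1 := by
  intro x hx
  obtain ⟨k, hk, _, hxk⟩ := mem_Bset.mp hx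
  exact sub_Icc hI hk hxk

omit hI in
private lemma Bset_zero : Bset r I 0 = ∅ := by
  ext x; simp [mem_Bset]

private lemma Bset_top : Bset r I r = Set.Icc (0:ℝ) 1 := by
  apply Set.Subset.antisymm (Bset_subset_Icc hI r)
  intro x hx
  obtain ⟨k, hk, hxk⟩ := exists_piece hI hx
  exact mem_Bset.mpr ⟨k, hk, ppos_lt hk, hxk⟩

private lemma ordConnected_Bset (t : ℕ) : (Bset r I t).OrdConnected := by
  rw [Set.ordConnected_iff]
  intro x hx z hz hxz y hy
  obtain ⟨k, hk, hpk, hxk⟩ := mem_Bset.mp hx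
  obtain ⟨m, hm, hpm, hzm⟩ := mem_Bset.mp hz
  have hyI : y ∈ Set.Icc (0:ℝ) 1 := by
    have h1 := sub_Icc hI hk hxk
    have h2 := sub_Icc hI hm hzm
    exact ⟨le_trans h1.1 hy.1, le_trans hy.2 h2.2⟩
  obtain ⟨l, hl, hyl⟩ := exists_piece hI hyI
  by_cases hlm : l = m
  · exact mem_Bset.mpr ⟨l, hl, by rw [hlm]; exact hpm, hyl⟩
  · have hkey : pkey I l < pkey I m := key_lt hI hl hm hlm hyl hzm hy.2
    have : ppos r I l < ppos r I m := ppos_lt_ppos hl hm (Or.inl hkey)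
    exact mem_Bset.mpr ⟨l, hl, by omega, hyl⟩

private lemma ordConnected_Bset_compl (t : ℕ) :
    (Set.Icc (0:ℝ) 1 \ Bset r I t).OrdConnected := by
  rw [Set.ordConnected_iff]
  intro x hx z hz hxz y hy
  have hyI : y ∈ Set.Icc (0:ℝ) 1 := ⟨le_trans hx.1.1 hy.1, le_trans hy.2 hz.1.2⟩
  refine ⟨hyI, fun hyB => ?_⟩
  obtain ⟨m, hm, hpm, hym⟩ := mem_Bset.mp hyB
  obtain ⟨l, hl, hxl⟩ := exists_piece hI hx.1
  have hlpos : ¬ (ppos r I l < t) := fun h => hx.2 (mem_Bset.mpr ⟨l, hl, h, hxl⟩)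
  by_cases hlm : l = m
  · exact hlpos (by rw [hlm]; exact hpm)
  · have hkey : pkey I l < pkey I m := key_lt hI hl hm hlm hxl hym hy.1
    have : ppos r I l < ppos r I m := ppos_lt_ppos hl hm (Or.inl hkey)
    exact hlpos (by omega)

private lemma measurableSet_Bset (t : ℕ) : MeasurableSet (Bset r I t) := by
  apply Finset.measurableSet_biUnion
  intro k hk
  simp only [Finset.mem_filter, Finset.mem_range] at hk
  exact (hI.1 k hk.1).measurableSet

private lemma Bset_succ {l : ℕ} (hl : l < r) :
    Bset r I (ppos r I l + 1) = Bset r I (ppos r I l) ∪ I l := by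
  ext x
  simp only [mem_Bset, Set.mem_union]
  constructor
  · rintro ⟨k, hk, hpk, hxk⟩
    rcases Nat.lt_or_ge (ppos r I k) (ppos r I l) with h | h
    · exact Or.inl ⟨k, hk, h, hxk⟩
    · have : ppos r I k = ppos r I l := by omega
      have : k = l := ppos_inj hI hk hl this
      exact Or.inr (this ▸ hxk)
  · rintro (⟨k, hk, hpk, hxk⟩ | hxl)
    · exact ⟨k, hk, by omega, hxk⟩
    · exact ⟨l, hl, by omega, hxl⟩

private lemma Bset_disj {l : ℕ} (hl : l < r) :
    Disjoint (Bset r I (ppos r I l)) (I l) := by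
  rw [Set.disjoint_left]
  intro x hx hxl
  obtain ⟨k, hk, hpk, hxk⟩ := mem_Bset.mp hx
  have hkl : k ≠ l := fun h => by subst h; omega
  exact (Set.disjoint_left.mp (hI.2.1 k hk l hl hkl) hxk) hxl

private lemma meas_Bset_succ (ν : Measure ℝ) [IsProbabilityMeasure ν] {l : ℕ} (hl : l < r) :
    (ν (Bset r I (ppos r I l + 1))).toReal =
      (ν (Bset r I (ppos r I l))).toReal + (ν (I l)).toReal := by
  rw [Bset_succ hI hl, measure_union (Bset_disj hI hl) (hI.1 l hl).measurableSet,
    ENNReal.toReal_add (measure_ne_top _ _) (measure_ne_top _ _)]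

private lemma meas_Bset_compl (ν : Measure ℝ) [IsProbabilityMeasure ν]
    (hsupp : ν (Set.Icc (0:ℝ) 1) = 1) (t : ℕ) :
    (ν (Set.Icc (0:ℝ) 1 \ Bset r I t)).toReal = 1 - (ν (Bset r I t)).toReal := by
  have hmeas : MeasurableSet (Set.Icc (0:ℝ) 1 \ Bset r I t) :=
    measurableSet_Icc.diff (measurableSet_Bset hI t)
  have h1 : ν (Bset r I t ∪ (Set.Icc (0:ℝ) 1 \ Bset r I t)) =
      ν (Bset r I t) + ν (Set.Icc (0:ℝ) 1 \ Bset r I t) :=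
    measure_union Set.disjoint_sdiff_right hmeas
  rw [Set.union_diff_cancel (Bset_subset_Icc hI t), hsupp] at h1
  have h2 : (1:ℝ) = (ν (Bset r I t)).toReal + (ν (Set.Icc (0:ℝ) 1 \ Bset r I t)).toReal := by
    have := congrArg ENNReal.toReal h1
    rwa [ENNReal.toReal_one, ENNReal.toReal_add (measure_ne_top _ _) (measure_ne_top _ _)] at this
  linarith

end geom2

private lemma toReal_le_one {ν : Measure ℝ} [IsProbabilityMeasure ν] (s : Set ℝ) :
    (ν s).toReal ≤ 1 := by
  have h := prob_le_one (μ := ν) (s := s)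
  calc (ν s).toReal ≤ (1 : ENNReal).toReal := ENNReal.toReal_mono (by simp) h
    _ = 1 := ENNReal.toReal_one



section main
variable {ι : Type*} [Fintype ι] [DecidableEq ι]

private def Qdef (r : ℕ) (P : ι → ℕ → Set ℝ) (κ : ι → ℕ) (j : ι) (e : ℕ) : Set ℝ :=
  if e = 0 then Bset r (P j) (κ j) else Set.Icc (0:ℝ) 1 \ Bset r (P j) (κ j)

open Classical in
private def gtil (r : ℕ) (P : ι → ℕ → Set ℝ) (γ : (ι → ℕ) → ℝ) (𝓵 : ι → ℕ) : ℝ :=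
  if ∀ j, (P j (𝓵 j)).Nonempty then γ 𝓵 else 0

private def cdef (ν : ι → Measure ℝ) (r : ℕ) (P : ι → ℕ → Set ℝ) (j : ι) (k e l : ℕ) : ℝ :=
  (if e = 0 then -(1 - (ν j (Bset r (P j) k)).toReal) else (ν j (Bset r (P j) k)).toReal) *
    ((if ppos r (P j) l = k then (1:ℝ) else 0) - (if ppos r (P j) l = k - 1 then (1:ℝ) else 0))

private def gdef (ν : ι → Measure ℝ) (r : ℕ) (P : ι → ℕ → Set ℝ) (γ : (ι → ℕ) → ℝ)
    (κ eps : ι → ℕ) : ℝ :=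
  ∑ 𝓵 ∈ Fintype.piFinset (fun _ : ι => Finset.range r),
    gtil r P γ 𝓵 * ∏ j, cdef ν r P j (κ j) (eps j) (𝓵 j)

private lemma Qdef_partition {r : ℕ} {P : ι → ℕ → Set ℝ} (hpart : ∀ j, IsIntervalPartition r (P j))
    (κ : ι → ℕ) (j : ι) : IsIntervalPartition 2 (Qdef r P κ j) := by
  refine ⟨?_, ?_, ?_⟩
  · intro k hk
    interval_cases k
    · simpa [Qdef] using ordConnected_Bset (hpart j) (κ j)
    · simpa [Qdef] using ordConnected_Bset_compl (hpart j) (κ j)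
  · intro k hk l hl hkl
    interval_cases k <;> interval_cases l <;> simp_all [Qdef]
    · exact Set.disjoint_sdiff_right
    · exact Set.disjoint_sdiff_right.symm
  · have h2 : Finset.range 2 = {0, 1} := rfl
    rw [h2]
    simp only [Finset.set_biUnion_insert, Finset.set_biUnion_singleton]
    have e0 : Qdef r P κ j 0 = Bset r (P j) (κ j) := by simp [Qdef]
    have e1 : Qdef r P κ j 1 = Set.Icc (0:ℝ) 1 \ Bset r (P j) (κ j) := by simp [Qdef]
    rw [e0, e1, Set.union_diff_cancel (Bset_subset_Icc (hpart j) (κ j))]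

private lemma Qdef_sub_Icc {r : ℕ} {P : ι → ℕ → Set ℝ} (hpart : ∀ j, IsIntervalPartition r (P j))
    (κ : ι → ℕ) (j : ι) {k : ℕ} (hk : k < 2) : Qdef r P κ j k ⊆ Set.Icc (0:ℝ) 1 :=
  sub_Icc (Qdef_partition hpart κ j) hk

open Classical in
private lemma eval_binary {r : ℕ} {P : ι → ℕ → Set ℝ} (hpart : ∀ j, IsIntervalPartition r (P j))
    (κ : ι → ℕ) (γ2 : (ι → ℕ) → ℝ) (x : ι → ℝ) (hx : ∀ j, x j ∈ Set.Icc (0:ℝ) 1) :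
    treeFun (fun _ => 2) (Qdef r P κ) γ2 x =
      γ2 (fun j => if x j ∈ Bset r (P j) (κ j) then 0 else 1) := by
  apply aux_eval
  · intro j k hk l hl hkl
    exact (Qdef_partition hpart κ j).2.1 k hk l hl hkl
  · simp only [Fintype.mem_piFinset, Finset.mem_range]
    intro j
    by_cases h : x j ∈ Bset r (P j) (κ j) <;> simp [h]
  · intro j
    show x j ∈ Qdef r P κ j (if x j ∈ Bset r (P j) (κ j) then 0 else 1)
    by_cases h : x j ∈ Bset r (P j) (κ j)
    · rw [if_pos h]
      simpa [Qdef] using h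
    · rw [if_neg h]
      have he : Qdef r P κ j 1 = Set.Icc (0:ℝ) 1 \ Bset r (P j) (κ j) := by simp [Qdef]
      rw [he]
      exact ⟨hx j, h⟩

private lemma aux_coord {r : ℕ} (hr : 2 ≤ r) {I : ℕ → Set ℝ} (hI : IsIntervalPartition r I)
    (ν : Measure ℝ) [IsProbabilityMeasure ν] (hsupp : ν (Set.Icc (0:ℝ) 1) = 1)
    {l m : ℕ} (hl : l < r) (hm : m < r) :
    ∑ k ∈ Finset.Icc 1 (r-1),
      ((if ppos r I m < k then -(1 - (ν (Bset r I k)).toReal) else (ν (Bset r I k)).toReal) *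
       ((if ppos r I l = k then (1:ℝ) else 0) - (if ppos r I l = k - 1 then (1:ℝ) else 0))) =
      (if l = m then (1:ℝ) else 0) - (ν (I l)).toReal := by
  have h0 : (if ppos r I m < 0 then -(1 - (ν (Bset r I 0)).toReal) else (ν (Bset r I 0)).toReal)
      = 0 := by
    rw [if_neg (by omega)]
    rw [Bset_zero (r := r) (I := I)]
    simp
  have hmr : ppos r I m < r := ppos_lt hm
  have hrr : (if ppos r I m < r then -(1 - (ν (Bset r I r)).toReal) else (ν (Bset r I r)).toReal)
      = 0 := by
    rw [if_pos hmr, Bset_top hI, hsupp]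
    simp
  have hsum := aux_Tsum r (ppos r I l) hr (ppos_lt hl)
    (fun k => if ppos r I m < k then -(1 - (ν (Bset r I k)).toReal) else (ν (Bset r I k)).toReal)
    h0 hrr
  rw [hsum]
  beta_reduce
  have hsucc := meas_Bset_succ hI ν hl
  rcases lt_trichotomy (ppos r I m) (ppos r I l) with h | h | h
  · have hlm : l ≠ m := fun e => by rw [e] at h; omega
    rw [if_pos h, if_pos (by omega : ppos r I m < ppos r I l + 1), if_neg hlm]
    linarith
  · have hlm : l = m := ppos_inj hI hl hm h.symm
    rw [if_neg (by omega : ¬ ppos r I m < ppos r I l),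
      if_pos (by omega : ppos r I m < ppos r I l + 1), if_pos hlm]
    linarith
  · have hlm : l ≠ m := fun e => by rw [e] at h; omega
    rw [if_neg (by omega : ¬ ppos r I m < ppos r I l),
      if_neg (by omega : ¬ ppos r I m < ppos r I l + 1), if_neg hlm]
    linarith

/-- the zeroed heights are still identifiable -/
private lemma gtil_ident {r : ℕ} {P : ι → ℕ → Set ℝ} (ν : ι → Measure ℝ)
    [∀ j, IsProbabilityMeasure (ν j)]
    (γ : (ι → ℕ) → ℝ)
    (hident : IdentHeightsW (fun _ => r) (fun j k => (ν j (P j k)).toReal) γ) :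
    ∀ j : ι, ∀ 𝓵 ∈ Fintype.piFinset (fun _ : ι => Finset.range r),
      ∑ k ∈ Finset.range r, gtil r P γ (Function.update 𝓵 j k) * (ν j (P j k)).toReal = 0 := by
  classical
  intro j 𝓵 h𝓵
  by_cases hne : ∀ i, i ≠ j → (P i (𝓵 i)).Nonempty
  · rw [← hident j 𝓵 h𝓵]
    refine Finset.sum_congr rfl fun k _ => ?_
    by_cases hk : (P j k).Nonempty
    · congr 1
      unfold gtil
      rw [if_pos]
      intro i
      by_cases hij : i = j
      · subst hij; rwa [Function.update_self]
      · rw [Function.update_of_ne hij]; exact hne i hij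
    · have : (ν j (P j k)).toReal = 0 := by
        rw [Set.not_nonempty_iff_eq_empty.mp hk]
        simp
      simp [this]
  · push_neg at hne
    obtain ⟨i0, hi0, hemp⟩ := hne
    refine Finset.sum_eq_zero fun k _ => ?_
    have : gtil r P γ (Function.update 𝓵 j k) = 0 := by
      unfold gtil
      rw [if_neg]
      push_neg
      exact ⟨i0, by rwa [Function.update_of_ne hi0]⟩
    rw [this, zero_mul]

private lemma gdef_ident {r : ℕ} {P : ι → ℕ → Set ℝ} (ν : ι → Measure ℝ)
    [∀ j, IsProbabilityMeasure (ν j)] (hsupp : ∀ j, ν j (Set.Icc (0 : ℝ) 1) = 1)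
    (hpart : ∀ j, IsIntervalPartition r (P j)) (γ : (ι → ℕ) → ℝ) (κ : ι → ℕ) :
    IdentHeightsW (fun _ => 2) (fun j k => (ν j (Qdef r P κ j k)).toReal) (gdef ν r P γ κ) := by
  classical
  intro j eps heps
  have hw0 : (ν j (Qdef r P κ j 0)).toReal = (ν j (Bset r (P j) (κ j))).toReal := by
    simp [Qdef]
  have hw1 : (ν j (Qdef r P κ j 1)).toReal = 1 - (ν j (Bset r (P j) (κ j))).toReal := by
    have he : Qdef r P κ j 1 = Set.Icc (0:ℝ) 1 \ Bset r (P j) (κ j) := by simp [Qdef]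
    rw [he]
    exact meas_Bset_compl (hpart j) (ν j) (hsupp j) (κ j)
  beta_reduce
  rw [Finset.sum_range_succ, Finset.sum_range_one, hw0, hw1]
  unfold gdef
  rw [Finset.sum_mul, Finset.sum_mul, ← Finset.sum_add_distrib]
  refine Finset.sum_eq_zero fun 𝓵 _ => ?_
  have hsplit : ∀ k : ℕ, (∏ i, cdef ν r P i (κ i) ((Function.update eps j k) i) (𝓵 i)) =
      cdef ν r P j (κ j) k (𝓵 j) * ∏ i ∈ Finset.univ \ {j}, cdef ν r P i (κ i) (eps i) (𝓵 i) := by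
    intro k
    rw [Finset.prod_eq_mul_prod_sdiff_singleton_of_mem (Finset.mem_univ j), Function.update_self]
    congr 1
    refine Finset.prod_congr rfl fun i hi => ?_
    have hij : i ≠ j := by simpa using (Finset.mem_sdiff.mp hi).2
    rw [Function.update_of_ne hij]
  rw [hsplit 0, hsplit 1]
  unfold cdef
  rw [if_pos rfl, if_neg one_ne_zero]
  ring

private lemma gtil_bound {r : ℕ} {P : ι → ℕ → Set ℝ}
    (hpart : ∀ j, IsIntervalPartition r (P j)) (γ : (ι → ℕ) → ℝ) {B : ℝ}
    (hB : ∀ x : ι → ℝ, |treeFun (fun _ => r) P γ x| ≤ B) :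
    ∀ 𝓵 ∈ Fintype.piFinset (fun _ : ι => Finset.range r), |gtil r P γ 𝓵| ≤ B := by
  classical
  intro 𝓵 h𝓵
  unfold gtil
  by_cases h : ∀ j, (P j (𝓵 j)).Nonempty
  · rw [if_pos h]
    have heval : treeFun (fun _ => r) P γ (fun j => (h j).some) = γ 𝓵 :=
      aux_eval _ _ _ _ (fun j => (hpart j).2.1) 𝓵 h𝓵 (fun j => (h j).some_mem)
    rw [← heval]; exact hB _
  · rw [if_neg h, abs_zero]
    exact (abs_nonneg _).trans (hB 0)

private lemma gdef_bound {r : ℕ} {P : ι → ℕ → Set ℝ} (ν : ι → Measure ℝ)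
    [∀ j, IsProbabilityMeasure (ν j)]
    (hpart : ∀ j, IsIntervalPartition r (P j)) (γ : (ι → ℕ) → ℝ)
    {B : ℝ} (hB0 : 0 ≤ B)
    (hgt : ∀ 𝓵 ∈ Fintype.piFinset (fun _ : ι => Finset.range r), |gtil r P γ 𝓵| ≤ B)
    (κ eps : ι → ℕ) :
    |gdef ν r P γ κ eps| ≤ 2 ^ (Fintype.card ι) * B := by
  classical
  have habs : ∀ (j : ι) (k e : ℕ), ∑ l ∈ Finset.range r, |cdef ν r P j k e l| ≤ 2 := by
    intro j k e
    have hW0 : 0 ≤ (ν j (Bset r (P j) k)).toReal := ENNReal.toReal_nonneg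
    have hW1 : (ν j (Bset r (P j) k)).toReal ≤ 1 := toReal_le_one _
    have h1 : ∀ l, |cdef ν r P j k e l| ≤
        (if ppos r (P j) l = k then (1:ℝ) else 0) +
        (if ppos r (P j) l = k - 1 then (1:ℝ) else 0) := by
      intro l
      unfold cdef
      rw [abs_mul]
      have hf : |if e = 0 then -(1 - (ν j (Bset r (P j) k)).toReal)
          else (ν j (Bset r (P j) k)).toReal| ≤ 1 := by
        by_cases he : e = 0
        · rw [if_pos he, abs_neg, abs_of_nonneg (by linarith : (0:ℝ) ≤ 1 - (ν j (Bset r (P j) k)).toReal)]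
          linarith
        · rw [if_neg he, abs_le]
          exact ⟨by linarith, hW1⟩
      have hs : |(if ppos r (P j) l = k then (1:ℝ) else 0) -
          (if ppos r (P j) l = k - 1 then (1:ℝ) else 0)| ≤
          (if ppos r (P j) l = k then (1:ℝ) else 0) +
          (if ppos r (P j) l = k - 1 then (1:ℝ) else 0) := by
        have ha : (0:ℝ) ≤ if ppos r (P j) l = k then (1:ℝ) else 0 := by split <;> norm_num
        have hb : (0:ℝ) ≤ if ppos r (P j) l = k - 1 then (1:ℝ) else 0 := by split <;> norm_num
        refine (abs_sub _ _).trans ?_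
        rw [abs_of_nonneg ha, abs_of_nonneg hb]
      calc |if e = 0 then -(1 - (ν j (Bset r (P j) k)).toReal)
            else (ν j (Bset r (P j) k)).toReal| *
          |(if ppos r (P j) l = k then (1:ℝ) else 0) -
            (if ppos r (P j) l = k - 1 then (1:ℝ) else 0)|
          ≤ 1 * ((if ppos r (P j) l = k then (1:ℝ) else 0) +
            (if ppos r (P j) l = k - 1 then (1:ℝ) else 0)) :=
            mul_le_mul hf hs (abs_nonneg _) zero_le_one
        _ = (if ppos r (P j) l = k then (1:ℝ) else 0) +
            (if ppos r (P j) l = k - 1 then (1:ℝ) else 0) := one_mul _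
    have hcard : ∀ m : ℕ, ∑ l ∈ Finset.range r, (if ppos r (P j) l = m then (1:ℝ) else 0) ≤ 1 := by
      intro m
      rw [Finset.sum_boole]
      have : ((Finset.range r).filter (fun l => ppos r (P j) l = m)).card ≤ 1 := by
        rw [Finset.card_le_one]
        intro a ha b hb
        simp only [Finset.mem_filter, Finset.mem_range] at ha hb
        exact ppos_inj (hpart j) ha.1 hb.1 (ha.2.trans hb.2.symm)
      exact_mod_cast this
    calc ∑ l ∈ Finset.range r, |cdef ν r P j k e l|
        ≤ ∑ l ∈ Finset.range r, ((if ppos r (P j) l = k then (1:ℝ) else 0) +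
          (if ppos r (P j) l = k - 1 then (1:ℝ) else 0)) :=
          Finset.sum_le_sum fun l _ => h1 l
      _ = (∑ l ∈ Finset.range r, (if ppos r (P j) l = k then (1:ℝ) else 0)) +
          ∑ l ∈ Finset.range r, (if ppos r (P j) l = k - 1 then (1:ℝ) else 0) :=
          Finset.sum_add_distrib
      _ ≤ 1 + 1 := add_le_add (hcard k) (hcard (k-1))
      _ = 2 := by norm_num
  calc |gdef ν r P γ κ eps|
      ≤ ∑ 𝓵 ∈ Fintype.piFinset (fun _ : ι => Finset.range r),
        |gtil r P γ 𝓵 * ∏ j, cdef ν r P j (κ j) (eps j) (𝓵 j)| :=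
        Finset.abs_sum_le_sum_abs _ _
    _ ≤ ∑ 𝓵 ∈ Fintype.piFinset (fun _ : ι => Finset.range r),
        B * ∏ j, |cdef ν r P j (κ j) (eps j) (𝓵 j)| := by
        refine Finset.sum_le_sum fun 𝓵 h𝓵 => ?_
        rw [abs_mul, Finset.abs_prod]
        exact mul_le_mul_of_nonneg_right (hgt 𝓵 h𝓵)
          (Finset.prod_nonneg fun j _ => abs_nonneg _)
    _ = B * ∑ 𝓵 ∈ Fintype.piFinset (fun _ : ι => Finset.range r),
        ∏ j, |cdef ν r P j (κ j) (eps j) (𝓵 j)| := by rw [← Finset.mul_sum]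
    _ = B * ∏ j : ι, ∑ l ∈ Finset.range r, |cdef ν r P j (κ j) (eps j) l| := by
        congr 1
        exact (Finset.prod_univ_sum (fun _ : ι => Finset.range r)
          (fun j l => |cdef ν r P j (κ j) (eps j) l|)).symm
    _ ≤ B * ∏ _j : ι, (2:ℝ) := by
        refine mul_le_mul_of_nonneg_left (Finset.prod_le_prod
          (fun j _ => Finset.sum_nonneg fun l _ => abs_nonneg _)
          (fun j _ => habs j (κ j) (eps j))) hB0
    _ = 2 ^ (Fintype.card ι) * B := by
        rw [Finset.prod_const, Finset.card_univ, mul_comm]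

private lemma main_identity {r : ℕ} (hr : 2 ≤ r) {P : ι → ℕ → Set ℝ}
    (ν : ι → Measure ℝ) [∀ j, IsProbabilityMeasure (ν j)]
    (hsupp : ∀ j, ν j (Set.Icc (0 : ℝ) 1) = 1)
    (hpart : ∀ j, IsIntervalPartition r (P j)) (γ : (ι → ℕ) → ℝ)
    (hident : IdentHeightsW (fun _ => r) (fun j k => (ν j (P j k)).toReal) γ)
    (x : ι → ℝ) :
    treeFun (fun _ => r) P γ x =
      ∑ κ ∈ Fintype.piFinset (fun _ : ι => Finset.Icc 1 (r - 1)),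
        treeFun (fun _ => 2) (Qdef r P κ) (gdef ν r P γ κ) x := by
  classical
  by_cases hcube : ∀ j, x j ∈ Set.Icc (0:ℝ) 1
  case neg =>
    push_neg at hcube
    obtain ⟨j0, hj0⟩ := hcube
    rw [aux_eval_zero _ _ _ _ (fun j k hk => sub_Icc (hpart j) hk) j0 hj0]
    refine (Finset.sum_eq_zero fun κ _ =>
      aux_eval_zero _ _ _ _ (fun j k hk => Qdef_sub_Icc hpart κ j hk) j0 hj0).symm
  case pos =>
    choose lam hlam1 hlam2 using fun j => exists_piece (hpart j) (hcube j)
    have hlamfin : lam ∈ Fintype.piFinset (fun _ : ι => Finset.range r) := by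
      simp only [Fintype.mem_piFinset, Finset.mem_range]; exact hlam1
    have hLHS : treeFun (fun _ => r) P γ x = γ lam :=
      aux_eval _ _ _ _ (fun j => (hpart j).2.1) lam hlamfin hlam2
    have hmemB : ∀ (j : ι) (t : ℕ), x j ∈ Bset r (P j) t ↔ ppos r (P j) (lam j) < t := by
      intro j t
      constructor
      · intro h
        obtain ⟨k, hk, hpk, hxk⟩ := mem_Bset.mp h
        have hkl : k = lam j := by
          by_contra hne
          exact (Set.disjoint_left.mp ((hpart j).2.1 k hk (lam j) (hlam1 j) hne) hxk) (hlam2 j)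
        rwa [hkl] at hpk
      · intro h
        exact mem_Bset.mpr ⟨lam j, hlam1 j, h, hlam2 j⟩
    have hRHS : ∀ κ : ι → ℕ, treeFun (fun _ => 2) (Qdef r P κ) (gdef ν r P γ κ) x =
        gdef ν r P γ κ (fun j => if ppos r (P j) (lam j) < κ j then 0 else 1) := by
      intro κ
      rw [eval_binary hpart κ _ x hcube]
      congr 1
      funext j
      exact if_congr (hmemB j (κ j)) rfl rfl
    rw [Finset.sum_congr rfl fun κ _ => hRHS κ]
    have hswap : ∑ κ ∈ Fintype.piFinset (fun _ : ι => Finset.Icc 1 (r - 1)),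
        gdef ν r P γ κ (fun j => if ppos r (P j) (lam j) < κ j then 0 else 1) =
        ∑ 𝓵 ∈ Fintype.piFinset (fun _ : ι => Finset.range r), gtil r P γ 𝓵 *
          ∑ κ ∈ Fintype.piFinset (fun _ : ι => Finset.Icc 1 (r - 1)),
            ∏ j, cdef ν r P j (κ j) (if ppos r (P j) (lam j) < κ j then 0 else 1) (𝓵 j) := by
      unfold gdef
      beta_reduce
      rw [Finset.sum_comm]
      exact Finset.sum_congr rfl fun 𝓵 _ => (Finset.mul_sum _ _ _).symm
    rw [hswap]
    have hcoord : ∀ 𝓵 ∈ Fintype.piFinset (fun _ : ι => Finset.range r), ∀ j : ι,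
        (∑ kk ∈ Finset.Icc 1 (r-1),
          cdef ν r P j kk (if ppos r (P j) (lam j) < kk then 0 else 1) (𝓵 j)) =
        (if 𝓵 j = lam j then (1:ℝ) else 0) - (ν j (P j (𝓵 j))).toReal := by
      intro 𝓵 h𝓵 j
      have h𝓵j : 𝓵 j < r := by
        simp only [Fintype.mem_piFinset, Finset.mem_range] at h𝓵; exact h𝓵 j
      have hco := aux_coord hr (hpart j) (ν j) (hsupp j) h𝓵j (hlam1 j)
      rw [← hco]
      refine Finset.sum_congr rfl fun k _ => ?_
      unfold cdef
      by_cases h : ppos r (P j) (lam j) < k <;> simp [h]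
    have hper : ∀ 𝓵 ∈ Fintype.piFinset (fun _ : ι => Finset.range r),
        (gtil r P γ 𝓵) * (∑ κ ∈ Fintype.piFinset (fun _ : ι => Finset.Icc 1 (r - 1)),
          ∏ j, cdef ν r P j (κ j) (if ppos r (P j) (lam j) < κ j then 0 else 1) (𝓵 j)) =
        (gtil r P γ 𝓵) *
          ∏ j, ((if 𝓵 j = lam j then (1:ℝ) else 0) - (ν j (P j (𝓵 j))).toReal) := by
      intro 𝓵 h𝓵
      congr 1
      refine ((Finset.prod_univ_sum (fun _ : ι => Finset.Icc 1 (r-1))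
        (fun j k => cdef ν r P j k (if ppos r (P j) (lam j) < k then 0 else 1) (𝓵 j))).symm).trans ?_
      exact Finset.prod_congr rfl fun j _ => hcoord 𝓵 h𝓵 j
    rw [Finset.sum_congr rfl hper]
    rw [aux_delta r _ (gtil r P γ) (gtil_ident ν γ hident) lam hlamfin]
    rw [hLHS]
    unfold gtil
    rw [if_pos fun j => ⟨x j, hlam2 j⟩]

end main

/-- a ν-identifiable multinary-product tree whose coordinate partitions all
have `r ≥ 2` pieces decomposes as a sum of `(r−1)^d` ν-identifiable binary-product trees
(multinary-product trees with two-piece interval partitions in every coordinate), whose sup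
norms are at most `2^d ‖f‖_∞`. -/
theorem stmt8 {ι : Type*} [Fintype ι] [DecidableEq ι]
    (ν : ι → Measure ℝ) [∀ j, IsProbabilityMeasure (ν j)]
    (hsupp : ∀ j, ν j (Set.Icc (0 : ℝ) 1) = 1)
    (r : ℕ) (hr : 2 ≤ r)
    (P : ι → ℕ → Set ℝ) (hpart : ∀ j, IsIntervalPartition r (P j))
    (γ : (ι → ℕ) → ℝ)
    (hident : IdentHeightsW (fun _ => r) (fun j k => (ν j (P j k)).toReal) γ) :
    ∃ (Q : (ι → ℕ) → ι → ℕ → Set ℝ) (γ' : (ι → ℕ) → (ι → ℕ) → ℝ),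
      (∀ x : ι → ℝ, treeFun (fun _ => r) P γ x =
          ∑ κ ∈ Fintype.piFinset (fun _ : ι => Finset.Icc 1 (r - 1)),
            treeFun (fun _ => 2) (Q κ) (γ' κ) x) ∧
      (∀ κ ∈ Fintype.piFinset (fun _ : ι => Finset.Icc 1 (r - 1)),
          ∀ j : ι, IsIntervalPartition 2 (Q κ j)) ∧
      (∀ κ ∈ Fintype.piFinset (fun _ : ι => Finset.Icc 1 (r - 1)),
          IdentHeightsW (fun _ => 2) (fun j k => (ν j (Q κ j k)).toReal) (γ' κ)) ∧
      (∀ B : ℝ, (∀ x : ι → ℝ, |treeFun (fun _ => r) P γ x| ≤ B) →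
          ∀ κ ∈ Fintype.piFinset (fun _ : ι => Finset.Icc 1 (r - 1)), ∀ x : ι → ℝ,
            |treeFun (fun _ => 2) (Q κ) (γ' κ) x| ≤ 2 ^ (Fintype.card ι) * B) := by
  classical
  refine ⟨Qdef r P, gdef ν r P γ, ?_, ?_, ?_, ?_⟩
  · exact main_identity hr ν hsupp hpart γ hident
  · exact fun κ _ j => Qdef_partition hpart κ j
  · exact fun κ _ => gdef_ident ν hsupp hpart γ κ
  · intro B hB κ hκ x
    have hB0 : 0 ≤ B := (abs_nonneg _).trans (hB 0)
    by_cases hcube : ∀ j, x j ∈ Set.Icc (0:ℝ) 1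
    · rw [eval_binary hpart κ _ x hcube]
      exact gdef_bound ν hpart γ hB0 (gtil_bound hpart γ hB) κ _
    · push_neg at hcube
      obtain ⟨j0, hj0⟩ := hcube
      rw [aux_eval_zero _ _ _ _ (fun j k hk => Qdef_sub_Icc hpart κ j hk) j0 hj0, abs_zero]
      exact mul_nonneg (by positivity) hB0

end
end

section
/- Let ℙ be a Borel probability measure on [0,1]^p with density p_X (with respect to Lebesgue measure), let ℙ_j be its marginals with densities p_j, and let p^ind(x) = ∏_{j=1}^p p_j(x_j). Suppose there exist constants 0 < C_L ≤ C_U < ∞ with C_L ≤ p_X(x)/p^ind(x) ≤ C_U for all x ∈ [0,1]^p. For each S ⊆ {1,…,p}, let g_S be a bounded measurable function depending only on x_S and satisfying the ℙ^ind-identifiability condition (for every j ∈ S, ∫ g_S dℙ_j = 0 for almost every value of the remaining coordinates of S), where ℙ^ind = ⊗_j ℙ_j. Then for every S₀ ⊆ {1,…,p}, ‖Σ_{S ⊆ {1,…,p}} g_S‖²_{L²(ℙ)} ≥ (C_L / C_U) ‖g_{S₀}‖²_{L²(ℙ)}. -/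
open MeasureTheory ENNReal

noncomputable section

private lemma lint_prod13 {n : ℕ} (μ : Fin n → Measure ℝ) [∀ i, SigmaFinite (μ i)]
    (f : Fin n → ℝ → ℝ≥0∞) (hf : ∀ i, Measurable (f i)) :
    ∫⁻ x, ∏ i, f i (x i) ∂Measure.pi μ = ∏ i, ∫⁻ t, f i t ∂μ i := by
  induction n with
  | zero => simp [lintegral_const, Measure.pi_univ]
  | succ n ih =>
      have hmp := ((measurePreserving_piFinSuccAbove μ 0).symm)
      have hFm : Measurable fun x : Fin (n+1) → ℝ => ∏ i, f i (x i) :=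
        Finset.measurable_prod _ fun i _ => (hf i).comp (measurable_pi_apply i)
      have h1 : ∫⁻ x, ∏ i, f i (x i) ∂Measure.pi μ
          = ∫⁻ q : ℝ × (Fin n → ℝ),
              ∏ i, f i ((MeasurableEquiv.piFinSuccAbove (fun _ : Fin (n+1) => ℝ) 0).symm q i)
              ∂(μ 0).prod (Measure.pi fun i => μ ((0 : Fin (n+1)).succAbove i)) :=
        (hmp.lintegral_comp hFm).symm
      rw [h1]
      have h2 : ∀ q : ℝ × (Fin n → ℝ),
          (∏ i, f i ((MeasurableEquiv.piFinSuccAbove (fun _ : Fin (n+1) => ℝ) 0).symm q i))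
          = f 0 q.1 * ∏ i : Fin n, f i.succ (q.2 i) := by
        intro q
        simp only [MeasurableEquiv.piFinSuccAbove_symm_apply, Fin.insertNthEquiv,
          Equiv.coe_fn_mk, Fin.insertNth_zero, Fin.zero_succAbove, cast_eq]
        rw [Fin.prod_univ_succ]
        simp [Fin.cons_succ]
      simp_rw [h2]
      have hg : Measurable fun y : Fin n → ℝ => ∏ i : Fin n, f i.succ (y i) :=
        Finset.measurable_prod _ fun i _ => (hf i.succ).comp (measurable_pi_apply i)
      have h3 := lintegral_prod_mul (μ := μ 0)
        (ν := Measure.pi fun i => μ ((0 : Fin (n+1)).succAbove i))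
        (f := f 0) (g := fun y : Fin n → ℝ => ∏ i : Fin n, f i.succ (y i))
        (hf 0).aemeasurable hg.aemeasurable
      rw [h3]
      have h4 : (Measure.pi fun i : Fin n => μ ((0 : Fin (n+1)).succAbove i))
          = Measure.pi fun i : Fin n => μ i.succ := by congr 1
      rw [h4, ih (fun i => μ i.succ) (fun i => f i.succ) (fun i => hf i.succ),
        Fin.prod_univ_succ]

private lemma pi_dens13 {n : ℕ} (μ : Fin n → Measure ℝ) [∀ i, SigmaFinite (μ i)]
    (f : Fin n → ℝ → ℝ≥0∞) (hf : ∀ i, Measurable (f i))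
    (hμ : ∀ i, μ i = MeasureTheory.volume.withDensity (f i)) :
    Measure.pi μ = (MeasureTheory.volume : Measure (Fin n → ℝ)).withDensity
      (fun x => ∏ i, f i (x i)) := by
  refine (Measure.pi_eq (μ := μ) fun s hs => ?_)
  rw [withDensity_apply _ (MeasurableSet.univ_pi hs), ← lintegral_indicator
    (MeasurableSet.univ_pi hs) _]
  have hind : ∀ x : Fin n → ℝ,
      (Set.univ.pi s).indicator (fun x => ∏ i, f i (x i)) x
      = ∏ i, (s i).indicator (f i) (x i) := by
    intro x
    by_cases hx : x ∈ Set.univ.pi s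
    · rw [Set.indicator_of_mem hx]
      exact Finset.prod_congr rfl fun i _ =>
        (Set.indicator_of_mem (hx i (Set.mem_univ i)) _).symm
    · rw [Set.indicator_of_notMem hx]
      rw [Set.mem_univ_pi] at hx; push_neg at hx; obtain ⟨i, hi⟩ := hx
      exact (Finset.prod_eq_zero (Finset.mem_univ i) (Set.indicator_of_notMem hi _)).symm
  simp_rw [hind]
  rw [volume_pi, lint_prod13 _ (fun i => (s i).indicator (f i))
    (fun i => (hf i).indicator (hs i))]
  exact Finset.prod_congr rfl fun i _ => by
    rw [lintegral_indicator (hs i), ← withDensity_apply _ (hs i), ← hμ i]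

private lemma map_update13 {n : ℕ} (μ : Fin n → Measure ℝ) [∀ i, IsProbabilityMeasure (μ i)]
    (j : Fin n) :
    Measure.map (fun q : (Fin n → ℝ) × ℝ => Function.update q.1 j q.2)
      ((Measure.pi μ).prod (μ j)) = Measure.pi μ := by
  refine (Measure.pi_eq (μ := μ) fun s hs => ?_).symm
  rw [Measure.map_apply measurable_update' (MeasurableSet.univ_pi hs)]
  have hpre : (fun q : (Fin n → ℝ) × ℝ => Function.update q.1 j q.2) ⁻¹' Set.univ.pi s
      = (Set.univ.pi (Function.update s j Set.univ)) ×ˢ s j := by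
    ext q
    simp only [Set.mem_preimage, Set.mem_univ_pi, Set.mem_prod]
    constructor
    · intro h
      refine ⟨fun i => ?_, by simpa using h j⟩
      by_cases hij : i = j
      · subst hij; simp
      · simpa [Function.update_of_ne hij] using h i
    · rintro ⟨h1, h2⟩ i
      by_cases hij : i = j
      · subst hij; simpa using h2
      · have := h1 i
        simpa [Function.update_of_ne hij] using this
  rw [hpre, Measure.prod_prod, Measure.pi_pi]
  have : ∀ i, μ i (Function.update s j Set.univ i)
      = Function.update (fun i => μ i (s i)) j 1 i := by
    intro i
    by_cases hij : i = j
    · subst hij; simp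
    · simp [Function.update_of_ne hij]
  rw [Finset.prod_congr rfl (fun i _ => this i), Finset.prod_update_of_mem (Finset.mem_univ j),
    ← Finset.mul_prod_erase Finset.univ _ (Finset.mem_univ j),
    Finset.sdiff_singleton_eq_erase]
  ring

private lemma integrable_of_bdd13 {α : Type*} [MeasurableSpace α] (μ : Measure α)
    [IsFiniteMeasure μ] (φ : α → ℝ) (hφ : Measurable φ) (C : ℝ) (hC : ∀ x, |φ x| ≤ C) :
    Integrable φ μ :=
  Integrable.mono' (integrable_const C) hφ.aestronglyMeasurable
    (Filter.Eventually.of_forall fun x => hC x)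

private lemma integral_update13 {n : ℕ} (μ : Fin n → Measure ℝ) [∀ i, IsProbabilityMeasure (μ i)]
    (j : Fin n) (φ : (Fin n → ℝ) → ℝ) (hφ : Measurable φ) (C : ℝ) (hC : ∀ x, |φ x| ≤ C) :
    ∫ x, φ x ∂Measure.pi μ = ∫ x, ∫ t, φ (Function.update x j t) ∂μ j ∂Measure.pi μ := by
  have hint : Integrable (fun q : (Fin n → ℝ) × ℝ => φ (Function.update q.1 j q.2))
      ((Measure.pi μ).prod (μ j)) := by
    refine Integrable.mono' (integrable_const C) ((hφ.comp measurable_update').aestronglyMeasurable)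
      (Filter.Eventually.of_forall fun q => ?_)
    simpa using hC _
  have h1 : ∫ x, φ x ∂Measure.pi μ
      = ∫ q : (Fin n → ℝ) × ℝ, φ (Function.update q.1 j q.2) ∂(Measure.pi μ).prod (μ j) := by
    conv_lhs => rw [← map_update13 μ j]
    rw [integral_map measurable_update'.aemeasurable]
    rw [map_update13 μ j]
    exact hφ.aestronglyMeasurable
  rw [h1, integral_prod _ hint]

private lemma cross_zero13 {n : ℕ} (μ : Fin n → Measure ℝ) [∀ i, IsProbabilityMeasure (μ i)]
    (T : Finset (Fin n)) (j : Fin n) (hjT : j ∉ T)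
    (gS gT : (Fin n → ℝ) → ℝ) (hSm : Measurable gS) (hTm : Measurable gT)
    (CS CT : ℝ) (hCS : ∀ x, |gS x| ≤ CS) (hCT : ∀ x, |gT x| ≤ CT)
    (hdepT : ∀ x y : Fin n → ℝ, (∀ i ∈ T, x i = y i) → gT x = gT y)
    (hid : ∀ᵐ x ∂Measure.pi μ, ∫ t, gS (Function.update x j t) ∂μ j = 0) :
    ∫ x, gS x * gT x ∂Measure.pi μ = 0 := by
  have hbd : ∀ x, |gS x * gT x| ≤ CS * CT := by
    intro x
    rw [abs_mul]
    exact mul_le_mul (hCS x) (hCT x) (abs_nonneg _) ((abs_nonneg _).trans (hCS x))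
  rw [integral_update13 μ j (fun x => gS x * gT x) (hSm.mul hTm) (CS * CT) hbd]
  have hz : (fun x => ∫ t, gS (Function.update x j t) * gT (Function.update x j t) ∂μ j)
      =ᵐ[Measure.pi μ] 0 := by
    filter_upwards [hid] with x hx
    have hTeq : ∀ t, gT (Function.update x j t) = gT x := fun t =>
      hdepT _ _ fun i hi => Function.update_of_ne (fun h => hjT (by rwa [h] at hi)) _ _
    have : (fun t => gS (Function.update x j t) * gT (Function.update x j t))
        = fun t => gS (Function.update x j t) * gT x := funext fun t => by rw [hTeq t]
    simp only [Pi.zero_apply]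
    rw [this, integral_mul_const, hx, zero_mul]
  rw [integral_congr_ae hz]
  simp


/-- if the density of `ℙ` is comparable to the product of its marginal
densities (`C_L ≤ p_X/p^ind ≤ C_U` on `[0,1]^p`), then for functional-ANOVA components
`g_S` satisfying the `ℙ^ind`-identifiability condition one has
`‖∑_S g_S‖²_{L²(ℙ)} ≥ (C_L/C_U) ‖g_{S₀}‖²_{L²(ℙ)}` for every `S₀`. -/
theorem stmt13 (p : ℕ) (CL CU : ℝ) (hCL : 0 < CL) (hCU : CL ≤ CU)
    (pX : (Fin p → ℝ) → ℝ) (pj : Fin p → ℝ → ℝ)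
    (hpXm : Measurable pX) (hpjm : ∀ j, Measurable (pj j)) (hpj0 : ∀ j x, 0 ≤ pj j x)
    (ℙ : Measure (Fin p → ℝ)) (Pj : Fin p → Measure ℝ)
    (hℙ : ℙ = MeasureTheory.volume.withDensity (fun x => ENNReal.ofReal (pX x)))
    (hPj : ∀ j, Pj j = MeasureTheory.volume.withDensity (fun t => ENNReal.ofReal (pj j t)))
    (hprob : IsProbabilityMeasure ℙ)
    (hmarg : ∀ j, ℙ.map (fun x => x j) = Pj j)
    (hratio : ∀ x : Fin p → ℝ, (∀ j, x j ∈ Set.Icc (0 : ℝ) 1) →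
        CL * ∏ j, pj j (x j) ≤ pX x ∧ pX x ≤ CU * ∏ j, pj j (x j))
    (hout : ∀ x : Fin p → ℝ, ¬(∀ j, x j ∈ Set.Icc (0 : ℝ) 1) → pX x = 0)
    (g : Finset (Fin p) → (Fin p → ℝ) → ℝ)
    (hgm : ∀ S, Measurable (g S))
    (hgb : ∀ S, ∃ C : ℝ, ∀ x, |g S x| ≤ C)
    (hdep : ∀ S : Finset (Fin p), ∀ x y : Fin p → ℝ, (∀ j ∈ S, x j = y j) → g S x = g S y)
    (hident : ∀ S : Finset (Fin p), ∀ j ∈ S, ∀ᵐ x ∂(Measure.pi Pj),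
        ∫ t, g S (Function.update x j t) ∂(Pj j) = 0) :
    ∀ S₀ : Finset (Fin p),
      (CL / CU) * ∫ x, (g S₀ x) ^ 2 ∂ℙ ≤ ∫ x, (∑ S : Finset (Fin p), g S x) ^ 2 ∂ℙ := by
  intro S₀
  have hCU0 : 0 < CU := lt_of_lt_of_le hCL hCU
  haveI hPjprob : ∀ j, IsProbabilityMeasure (Pj j) := fun j => by
    rw [← hmarg j]
    exact Measure.isProbabilityMeasure_map (measurable_pi_apply j).aemeasurable
  set ν : Measure (Fin p → ℝ) := Measure.pi Pj with hνdef
  haveI : IsProbabilityMeasure ν := by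
    rw [hνdef]; infer_instance
  -- bounds for the g S
  choose Cg hCg using hgb
  -- total sum function
  set f : (Fin p → ℝ) → ℝ := fun x => ∑ S : Finset (Fin p), g S x with hfdef
  have hfm : Measurable f := Finset.measurable_sum _ fun S _ => hgm S
  have hfb : ∀ x, |f x| ≤ ∑ S : Finset (Fin p), Cg S := fun x =>
    (Finset.abs_sum_le_sum_abs _ _).trans (Finset.sum_le_sum fun S _ => hCg S x)
  -- orthogonality : cross terms vanish over ν
  have hkey : ∀ S T : Finset (Fin p), S ≠ T → ∫ x, g S x * g T x ∂ν = 0 := by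
    intro S T hne
    by_cases h : ∃ j ∈ S, j ∉ T
    · obtain ⟨j, hjS, hjT⟩ := h
      exact cross_zero13 Pj T j hjT (g S) (g T) (hgm S) (hgm T) (Cg S) (Cg T)
        (hCg S) (hCg T) (hdep T) (hident S j hjS)
    · push_neg at h
      have hST : S ⊆ T := h
      have : ¬ T ⊆ S := fun hTS => hne (Finset.Subset.antisymm hST hTS)
      obtain ⟨j, hjT, hjS⟩ := Finset.not_subset.mp this
      have := cross_zero13 Pj S j hjS (g T) (g S) (hgm T) (hgm S) (Cg T) (Cg S)
        (hCg T) (hCg S) (hdep S) (hident T j hjT)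
      simpa [mul_comm] using this
  have hgint : ∀ S T : Finset (Fin p), Integrable (fun x => g S x * g T x) ν := by
    intro S T
    refine integrable_of_bdd13 ν _ ((hgm S).mul (hgm T)) (Cg S * Cg T) fun x => ?_
    rw [abs_mul]
    exact mul_le_mul (hCg S x) (hCg T x) (abs_nonneg _) ((abs_nonneg _).trans (hCg S x))
  have horth : ∫ x, (g S₀ x) ^ 2 ∂ν ≤ ∫ x, f x ^ 2 ∂ν := by
    have hsq : ∀ x, f x ^ 2 = ∑ S : Finset (Fin p), ∑ T : Finset (Fin p), g S x * g T x := by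
      intro x
      rw [sq, hfdef, Finset.sum_mul_sum]
    calc ∫ x, (g S₀ x) ^ 2 ∂ν = ∫ x, g S₀ x * g S₀ x ∂ν := by simp_rw [sq]
      _ ≤ ∑ S : Finset (Fin p), ∫ x, g S x * g S x ∂ν := by
          refine Finset.single_le_sum (f := fun S => ∫ x, g S x * g S x ∂ν)
            (fun S _ => integral_nonneg fun x => mul_self_nonneg _) (Finset.mem_univ S₀)
      _ = ∑ S : Finset (Fin p), ∑ T : Finset (Fin p), ∫ x, g S x * g T x ∂ν := by
          refine Finset.sum_congr rfl fun S _ => ?_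
          rw [Finset.sum_eq_single S (fun T _ hTS => hkey S T (Ne.symm hTS)) (by simp)]
      _ = ∫ x, f x ^ 2 ∂ν := by
          simp_rw [hsq]
          rw [integral_finset_sum _ fun S _ => integrable_finset_sum _ fun T _ => hgint S T]
          exact Finset.sum_congr rfl fun S _ =>
            (integral_finset_sum _ fun T _ => hgint S T).symm
  -- ν as a density over Lebesgue
  have hν : ν = (MeasureTheory.volume : Measure (Fin p → ℝ)).withDensity
      (fun x => ∏ j, ENNReal.ofReal (pj j (x j))) :=
    pi_dens13 Pj (fun j t => ENNReal.ofReal (pj j t))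
      (fun j => (hpjm j).ennreal_ofReal) hPj
  -- marginal densities vanish a.e. outside [0,1]
  have hpjnull : ∀ j, ∀ᵐ t : ℝ ∂(MeasureTheory.volume), t ∉ Set.Icc (0:ℝ) 1 → pj j t = 0 := by
    intro j
    have h0 : Pj j ((Set.Icc (0:ℝ) 1)ᶜ) = 0 := by
      rw [← hmarg j, Measure.map_apply (measurable_pi_apply j) measurableSet_Icc.compl, hℙ,
        withDensity_apply _ (measurableSet_Icc.compl.preimage (measurable_pi_apply j))]
      have : ∀ᵐ x ∂(MeasureTheory.volume : Measure (Fin p → ℝ)),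
          x ∈ (fun x : Fin p → ℝ => x j) ⁻¹' (Set.Icc (0:ℝ) 1)ᶜ →
            ENNReal.ofReal (pX x) = (0 : ℝ≥0∞) := by
        refine Filter.Eventually.of_forall fun x hx => ?_
        rw [hout x (fun hall => hx (hall j)), ENNReal.ofReal_zero]
      rw [setLIntegral_congr_fun_ae (measurableSet_Icc.compl.preimage (measurable_pi_apply j)) this]
      simp
    rw [hPj j, withDensity_apply _ measurableSet_Icc.compl] at h0
    have h1 := (lintegral_eq_zero_iff (hpjm j).ennreal_ofReal).mp h0
    have h2 := (ae_restrict_iff' measurableSet_Icc.compl).mp h1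
    filter_upwards [h2] with t ht hmem
    have h3 : ENNReal.ofReal (pj j t) = 0 := ht hmem
    exact le_antisymm (ENNReal.ofReal_eq_zero.mp h3) (hpj0 j t)
  have hae : ∀ᵐ x : (Fin p → ℝ) ∂(MeasureTheory.volume),
      ∀ j, x j ∉ Set.Icc (0:ℝ) 1 → pj j (x j) = 0 := by
    rw [ae_all_iff]
    intro j
    have hnull : (MeasureTheory.volume : Measure ℝ)
        {t : ℝ | ¬ (t ∉ Set.Icc (0:ℝ) 1 → pj j t = 0)} = 0 := by
      have := hpjnull j
      rwa [ae_iff] at this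
    rw [ae_iff]
    have hset : {x : Fin p → ℝ | ¬ (x j ∉ Set.Icc (0:ℝ) 1 → pj j (x j) = 0)}
        = Function.eval j ⁻¹' {t : ℝ | ¬ (t ∉ Set.Icc (0:ℝ) 1 → pj j t = 0)} := rfl
    rw [hset, volume_pi]
    exact Measure.pi_eval_preimage_null _ hnull
  -- pointwise a.e. density comparison
  have hcomp : ∀ᵐ x : (Fin p → ℝ) ∂(MeasureTheory.volume),
      ENNReal.ofReal CL * ∏ j, ENNReal.ofReal (pj j (x j)) ≤ ENNReal.ofReal (pX x)
      ∧ ENNReal.ofReal (pX x) ≤ ENNReal.ofReal CU * ∏ j, ENNReal.ofReal (pj j (x j)) := by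
    filter_upwards [hae] with x hx
    have hprod : ∏ j, ENNReal.ofReal (pj j (x j)) = ENNReal.ofReal (∏ j, pj j (x j)) :=
      (ENNReal.ofReal_prod_of_nonneg fun i _ => hpj0 i (x i)).symm
    rw [hprod, ← ENNReal.ofReal_mul hCL.le, ← ENNReal.ofReal_mul hCU0.le]
    by_cases hc : ∀ j, x j ∈ Set.Icc (0:ℝ) 1
    · obtain ⟨hl, hu⟩ := hratio x hc
      exact ⟨ENNReal.ofReal_le_ofReal hl, ENNReal.ofReal_le_ofReal hu⟩
    · obtain ⟨j, hj⟩ := not_forall.mp hc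
      have hpj : pj j (x j) = 0 := hx j hj
      have hprod0 : ∏ i, pj i (x i) = 0 := Finset.prod_eq_zero (Finset.mem_univ j) hpj
      rw [hout x hc, hprod0, mul_zero, mul_zero]
      simp
  -- lintegral comparison
  set D : (Fin p → ℝ) → ℝ≥0∞ := fun x => ∏ j, ENNReal.ofReal (pj j (x j)) with hDdef
  have hDm : Measurable D :=
    Finset.measurable_prod _ fun j _ => ((hpjm j).comp (measurable_pi_apply j)).ennreal_ofReal
  have hKey1 : ∀ F : (Fin p → ℝ) → ℝ≥0∞, Measurable F →
      ∫⁻ x, F x ∂ℙ ≤ ENNReal.ofReal CU * ∫⁻ x, F x ∂ν := by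
    intro F hF
    rw [hℙ, hν, lintegral_withDensity_eq_lintegral_mul _ hpXm.ennreal_ofReal hF,
      lintegral_withDensity_eq_lintegral_mul _ hDm hF]
    simp only [Pi.mul_apply]
    rw [← lintegral_const_mul _ (show Measurable fun a => D a * F a from hDm.mul hF)]
    refine lintegral_mono_ae ?_
    filter_upwards [hcomp] with x hx
    calc (ENNReal.ofReal (pX x)) * F x ≤ (ENNReal.ofReal CU * D x) * F x :=
          mul_le_mul_left hx.2 _
      _ = ENNReal.ofReal CU * (D x * F x) := by ring
  have hKey2 : ∀ F : (Fin p → ℝ) → ℝ≥0∞, Measurable F →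
      ENNReal.ofReal CL * ∫⁻ x, F x ∂ν ≤ ∫⁻ x, F x ∂ℙ := by
    intro F hF
    rw [hℙ, hν, lintegral_withDensity_eq_lintegral_mul _ hpXm.ennreal_ofReal hF,
      lintegral_withDensity_eq_lintegral_mul _ hDm hF]
    simp only [Pi.mul_apply]
    rw [← lintegral_const_mul _ (show Measurable fun a => D a * F a from hDm.mul hF)]
    refine lintegral_mono_ae ?_
    filter_upwards [hcomp] with x hx
    calc ENNReal.ofReal CL * (D x * F x) = (ENNReal.ofReal CL * D x) * F x := by ring
      _ ≤ (ENNReal.ofReal (pX x)) * F x := mul_le_mul_left hx.1 _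
  -- the two nonnegative integrands
  set H : (Fin p → ℝ) → ℝ≥0∞ := fun x => ENNReal.ofReal ((g S₀ x) ^ 2) with hHdef
  set F : (Fin p → ℝ) → ℝ≥0∞ := fun x => ENNReal.ofReal (f x ^ 2) with hFdef2
  have hHm : Measurable H := ((hgm S₀).pow_const 2).ennreal_ofReal
  have hFm2 : Measurable F := (hfm.pow_const 2).ennreal_ofReal
  -- finiteness of all lintegrals
  have hfin : ∀ (μ : Measure (Fin p → ℝ)) [IsProbabilityMeasure μ],
      ∀ (φ : (Fin p → ℝ) → ℝ) (C : ℝ), (∀ x, |φ x| ≤ C) →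
      ∫⁻ x, ENNReal.ofReal (φ x ^ 2) ∂μ ≠ ⊤ := by
    intro μ _ φ C hC
    have hb : ∀ x, ENNReal.ofReal (φ x ^ 2) ≤ ENNReal.ofReal (C ^ 2) := by
      intro x
      refine ENNReal.ofReal_le_ofReal ?_
      calc φ x ^ 2 = |φ x| ^ 2 := (sq_abs _).symm
        _ ≤ C ^ 2 := by
            have := hC x
            nlinarith [abs_nonneg (φ x)]
    refine ne_of_lt (lt_of_le_of_lt (lintegral_mono hb) ?_)
    rw [lintegral_const]
    exact ENNReal.mul_lt_top ENNReal.ofReal_lt_top (measure_lt_top μ _)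
  have hHfinP : ∫⁻ x, H x ∂ℙ ≠ ⊤ := hfin ℙ (g S₀) (Cg S₀) (hCg S₀)
  have hFfinP : ∫⁻ x, F x ∂ℙ ≠ ⊤ := hfin ℙ f _ hfb
  have hHfinν : ∫⁻ x, H x ∂ν ≠ ⊤ := hfin ν (g S₀) (Cg S₀) (hCg S₀)
  have hFfinν : ∫⁻ x, F x ∂ν ≠ ⊤ := hfin ν f _ hfb
  -- Bochner integrals as lintegrals
  have hBoch : ∀ (μ : Measure (Fin p → ℝ)) (φ : (Fin p → ℝ) → ℝ), Measurable φ →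
      ∫ x, φ x ^ 2 ∂μ = (∫⁻ x, ENNReal.ofReal (φ x ^ 2) ∂μ).toReal := by
    intro μ φ hφ
    rw [integral_eq_lintegral_of_nonneg_ae (Filter.Eventually.of_forall fun x => sq_nonneg _)
      ((hφ.pow_const 2).aestronglyMeasurable)]
  -- transfer orthogonality to lintegrals
  have horthl : ∫⁻ x, H x ∂ν ≤ ∫⁻ x, F x ∂ν := by
    have e1 : ∫⁻ x, H x ∂ν = ENNReal.ofReal (∫ x, (g S₀ x) ^ 2 ∂ν) := by
      rw [hBoch ν (g S₀) (hgm S₀), ENNReal.ofReal_toReal hHfinν]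
    have e2 : ∫⁻ x, F x ∂ν = ENNReal.ofReal (∫ x, f x ^ 2 ∂ν) := by
      rw [hBoch ν f hfm, ENNReal.ofReal_toReal hFfinν]
    rw [e1, e2]
    exact ENNReal.ofReal_le_ofReal horth
  -- final chain
  set r : ℝ := (∫⁻ x, F x ∂ν).toReal with hrdef
  have hr0 : 0 ≤ r := ENNReal.toReal_nonneg
  have hA : ∫ x, (g S₀ x) ^ 2 ∂ℙ ≤ CU * r := by
    rw [hBoch ℙ (g S₀) (hgm S₀)]
    have h1 : ∫⁻ x, H x ∂ℙ ≤ ENNReal.ofReal CU * ∫⁻ x, F x ∂ν :=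
      le_trans (hKey1 H hHm) (mul_le_mul_right horthl _)
    have h2 := ENNReal.toReal_mono (by
      exact ENNReal.mul_ne_top ENNReal.ofReal_ne_top hFfinν) h1
    rwa [ENNReal.toReal_mul, ENNReal.toReal_ofReal hCU0.le] at h2
  have hB : CL * r ≤ ∫ x, f x ^ 2 ∂ℙ := by
    rw [hBoch ℙ f hfm]
    have h1 : ENNReal.ofReal CL * ∫⁻ x, F x ∂ν ≤ ∫⁻ x, F x ∂ℙ := hKey2 F hFm2
    have h2 := ENNReal.toReal_mono hFfinP h1
    rwa [ENNReal.toReal_mul, ENNReal.toReal_ofReal hCL.le] at h2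
  calc (CL / CU) * ∫ x, (g S₀ x) ^ 2 ∂ℙ
      ≤ (CL / CU) * (CU * r) := by
        refine mul_le_mul_of_nonneg_left hA (div_nonneg hCL.le hCU0.le)
    _ = CL * r := by
        field_simp
    _ ≤ ∫ x, f x ^ 2 ∂ℙ := hB
end
end
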